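/- arXiv:1804.00748 — 4 statements merged into one kernel-verified Lean document; each statement's English description precedes it below -/
import Mathlib

section
/- Let d ∈ {2,3} and let G be a subgroup of the isometry group of Euclidean space ℝᵈ such that every element of G fixes at least one point of ℝᵈ. Then G has a global fixed point: there exists x ∈ ℝᵈ with g·x = x for all g ∈ G. -/
open Pointwise Filter

/-- The joint displacement of a set of isometries at a point:
`L(S,x) = max_{s ∈ S} d(x, s x)`. -/
noncomputable def jointDispAt {X : Type*} [MetricSpace X] (S : Set (X ≃ᵢ X)) (x : X) : ℝ :=
  sSup ((fun s : X ≃ᵢ X => dist x (s x)) '' S)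

/-- The joint minimal displacement `L(S) = inf_x L(S,x)`. -/
noncomputable def jointMinDisp {X : Type*} [MetricSpace X] (S : Set (X ≃ᵢ X)) : ℝ :=
  sInf (Set.range (jointDispAt S))

/-- The asymptotic joint displacement `ℓ(S) = lim_n L(S^n)/n`; the limit exists by
subadditivity, hence agrees with the `limsup` used here. -/
noncomputable def asympDisp {X : Type*} [MetricSpace X] (S : Set (X ≃ᵢ X)) : ℝ :=
  Filter.limsup (fun n : ℕ => jointMinDisp (S ^ n) / n) Filter.atTop

/-- `λ(S) = max_{s ∈ S} ℓ(s)`. -/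
noncomputable def lamD {X : Type*} [MetricSpace X] (S : Set (X ≃ᵢ X)) : ℝ :=
  sSup ((fun s : X ≃ᵢ X => asympDisp {s}) '' S)

/-- `λ_k(S) = max_{1 ≤ j ≤ k} λ(S^j)/j`. -/
noncomputable def lamK {X : Type*} [MetricSpace X] (k : ℕ) (S : Set (X ≃ᵢ X)) : ℝ :=
  sSup ((fun j : ℕ => lamD (S ^ j) / j) '' Set.Icc 1 k)

/-- `λ_∞(S) = sup_{j ≥ 1} λ(S^j)/j`. -/
noncomputable def lamInf {X : Type*} [MetricSpace X] (S : Set (X ≃ᵢ X)) : ℝ :=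
  sSup ((fun j : ℕ => lamD (S ^ j) / j) '' Set.Ici 1)

/-- A geodesic segment from `a` to `b`: an isometric image of the interval `[0, d(a,b)]`. -/
def IsGeodesicSegment {X : Type*} [MetricSpace X] (s : Set X) (a b : X) : Prop :=
  ∃ f : ℝ → X, f 0 = a ∧ f (dist a b) = b ∧
    (∀ u ∈ Set.Icc (0 : ℝ) (dist a b), ∀ v ∈ Set.Icc (0 : ℝ) (dist a b),
      dist (f u) (f v) = |u - v|) ∧
    s = f '' Set.Icc (0 : ℝ) (dist a b)

/-- A geodesic metric space: every two points are joined by a geodesic segment. -/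
def GeodesicSpace (X : Type*) [MetricSpace X] : Prop :=
  ∀ a b : X, ∃ s : Set X, IsGeodesicSegment s a b

/-- `δ`-hyperbolicity: every geodesic triangle is `δ`-thin, i.e. each side is contained in
the closed `δ`-neighborhood of the union of the other two sides. -/
def GromovHyperbolic (X : Type*) [MetricSpace X] (δ : ℝ) : Prop :=
  ∀ a b c : X, ∀ sab sbc sca : Set X,
    IsGeodesicSegment sab a b → IsGeodesicSegment sbc b c → IsGeodesicSegment sca c a →
      (∀ x ∈ sab, ∃ y ∈ sbc ∪ sca, dist x y ≤ δ) ∧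
      (∀ x ∈ sbc, ∃ y ∈ sab ∪ sca, dist x y ≤ δ) ∧
      (∀ x ∈ sca, ∃ y ∈ sab ∪ sbc, dist x y ≤ δ)

/-- The CAT(0) comparison inequality: for all `a b c` and every midpoint `m` of a geodesic
from `b` to `c`, `2 d(a,m)² ≤ d(a,b)² + d(a,c)² - d(b,c)²/2`. -/
def CAT0 (X : Type*) [MetricSpace X] : Prop :=
  ∀ a b c m : X, dist b m = dist b c / 2 → dist m c = dist b c / 2 →
    2 * dist a m ^ 2 ≤ dist a b ^ 2 + dist a c ^ 2 - dist b c ^ 2 / 2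

/-- A subset is (geodesically) convex if every geodesic segment between two of its points is
contained in it. -/
def GeodConvex {X : Type*} [MetricSpace X] (C : Set X) : Prop :=
  ∀ a ∈ C, ∀ b ∈ C, ∀ s : Set X, IsGeodesicSegment s a b → s ⊆ C

/-- Translation length `L(g) = inf_x d(x, g x)`. -/
noncomputable def transLen {X : Type*} [MetricSpace X] (g : X ≃ᵢ X) : ℝ :=
  sInf (Set.range fun x : X => dist x (g x))

/-- Asymptotic translation length `ℓ(g) = lim_n L(g^n)/n`. -/
noncomputable def asympTransLen {X : Type*} [MetricSpace X] (g : X ≃ᵢ X) : ℝ :=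
  Filter.limsup (fun n : ℕ => transLen (g ^ n) / n) Filter.atTop

namespace GFP
open scoped RealInnerProductSpace
open scoped Matrix
open Module Submodule

abbrev Euc (n : ℕ) := EuclideanSpace ℝ (Fin n)


variable {E : Type*} [NormedAddCommGroup E] [InnerProductSpace ℝ E]

/-- linear part of an isometry -/
noncomputable def lp (g : E ≃ᵢ E) : E ≃ₗᵢ[ℝ] E := g.toRealLinearIsometryEquiv

lemma lp_apply (g : E ≃ᵢ E) (x : E) : lp g x = g x - g 0 :=
  g.toRealLinearIsometryEquiv_apply x

lemma apply_eq (g : E ≃ᵢ E) (x : E) : g x = lp g x + g 0 := by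
  rw [lp_apply]; abel

lemma lp_one (x : E) : lp (1 : E ≃ᵢ E) x = x := by
  simp [lp_apply]

lemma lp_mul (g h : E ≃ᵢ E) (x : E) : lp (g * h) x = lp g (lp h x) := by
  have h2 : lp g (lp h x) = lp g (h x) - lp g (h 0) := by
    rw [← map_sub]; congr 1; rw [lp_apply]
  rw [h2, lp_apply, lp_apply, lp_apply]
  simp [IsometryEquiv.mul_apply]

lemma lp_inv_lp (g : E ≃ᵢ E) (x : E) : lp g⁻¹ (lp g x) = x := by
  rw [← lp_mul, inv_mul_cancel, lp_one]

lemma lp_lp_inv (g : E ≃ᵢ E) (x : E) : lp g (lp g⁻¹ x) = x := by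
  rw [← lp_mul, mul_inv_cancel, lp_one]

lemma inner_lp_lp (g : E ≃ᵢ E) (x y : E) : ⟪lp g x, lp g y⟫ = ⟪x, y⟫ :=
  (lp g).inner_map_map x y

lemma norm_lp (g : E ≃ᵢ E) (x : E) : ‖lp g x‖ = ‖x‖ := (lp g).norm_map x

/-- a translation with a fixed point is the identity -/
lemma id_of_lp_id {g : E ≃ᵢ E} (hfix : ∃ x, g x = x) (h : ∀ x, lp g x = x) :
    ∀ x, g x = x := by
  obtain ⟨x₀, hx₀⟩ := hfix
  have h0 : g 0 = 0 := by
    have h1 := apply_eq g x₀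
    rw [h x₀, hx₀] at h1
    exact (left_eq_add.mp h1)
  intro x; rw [apply_eq, h x, h0, add_zero]

lemma fix_sub {g : E ≃ᵢ E} {x y : E} (hx : g x = x) (hy : g y = y) :
    lp g (x - y) = x - y := by
  rw [map_sub, lp_apply, lp_apply, hx, hy]; abel

lemma fix_add {g : E ≃ᵢ E} {x v : E} (hx : g x = x) (hv : lp g v = v) :
    g (x + v) = x + v := by
  have hgx : lp g x + g 0 = x := by rw [← apply_eq, hx]
  rw [apply_eq, map_add, hv, add_right_comm, hgx]

lemma disp_perp {g : E ≃ᵢ E} (hfix : ∃ x, g x = x) {v : E} (hv : lp g v = v) (x : E) :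
    ⟪g x - x, v⟫ = 0 := by
  obtain ⟨x₀, hx₀⟩ := hfix
  have h1 : ⟪lp g x, v⟫ = ⟪x, v⟫ := by
    conv_lhs => rw [← hv]
    exact inner_lp_lp g x v
  have h2 : ⟪lp g x₀, v⟫ = ⟪x₀, v⟫ := by
    conv_lhs => rw [← hv]
    exact inner_lp_lp g x₀ v
  have hb : g 0 = x₀ - lp g x₀ := by rw [lp_apply, hx₀]; abel
  have h3 : g x - x = lp g x + (x₀ - lp g x₀) - x := by rw [apply_eq, hb]
  rw [h3]
  simp only [inner_sub_left, inner_add_left, h1, h2]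
  ring

/-- uniqueness of fixed point when the linear part has no nonzero fixed vector -/
lemma fix_unique {g : E ≃ᵢ E} (hlp : ∀ v, lp g v = v → v = 0) {x y : E}
    (hx : g x = x) (hy : g y = y) : x = y := by
  have h := hlp _ (fix_sub hx hy)
  exact sub_eq_zero.mp h




lemma sumsq_eq_zero {p q : ℝ} (h : p ^ 2 + q ^ 2 = 0) : p = 0 ∧ q = 0 :=
  ⟨by nlinarith, by nlinarith⟩

/-- dichotomy for orthogonal 2×2 coefficient data -/
lemma R1 {a b c d : ℝ} (h1 : a ^ 2 + b ^ 2 = 1) (h2 : c ^ 2 + d ^ 2 = 1)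
    (h3 : a * c + b * d = 0) : (c = -b ∧ d = a) ∨ (c = b ∧ d = -a) := by
  have key : ((c + b) ^ 2 + (d - a) ^ 2) * ((c - b) ^ 2 + (d + a) ^ 2) = 0 := by
    have : ((c + b) ^ 2 + (d - a) ^ 2) * ((c - b) ^ 2 + (d + a) ^ 2)
        = (c ^ 2 + d ^ 2 - a ^ 2 - b ^ 2) ^ 2 + 4 * (a * c + b * d) ^ 2 := by ring
    rw [this, h3]
    nlinarith [h1, h2]
  rcases mul_eq_zero.mp key with h | h
  · obtain ⟨e1, e2⟩ := sumsq_eq_zero h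
    exact Or.inl ⟨by linarith, by linarith⟩
  · obtain ⟨e1, e2⟩ := sumsq_eq_zero h
    exact Or.inr ⟨by linarith, by linarith⟩

variable {E : Type*} [NormedAddCommGroup E] [InnerProductSpace ℝ E]

lemma li_pair {x y : E} (hx : x ≠ 0) (h : ¬∃ t : ℝ, y = t • x) :
    LinearIndependent ℝ ![x, y] := by
  rw [LinearIndependent.pair_iff' hx]
  intro a ha
  exact h ⟨a, ha.symm⟩

lemma range_pair (x y : E) : Set.range ![x, y] = {x, y} := by
  simp [Matrix.range_cons, Matrix.range_empty]
  exact Set.pair_comm y x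

lemma range_triple (x y z : E) : Set.range ![x, y, z] = {x, y, z} := by
  ext w
  simp [Matrix.range_cons, Matrix.range_empty]
  tauto

lemma exists_unit_para {v : E} (hv : v ≠ 0) :
    ∃ u : E, ‖u‖ = 1 ∧ ∃ c : ℝ, c ≠ 0 ∧ u = c • v := by
  refine ⟨‖v‖⁻¹ • v, ?_, ‖v‖⁻¹, ?_, rfl⟩
  · rw [norm_smul, norm_inv, norm_norm, inv_mul_cancel₀ (norm_ne_zero_iff.mpr hv)]
  · exact inv_ne_zero (norm_ne_zero_iff.mpr hv)

/-- representation of any vector in terms of a linearly independent triple in `ℝ³` -/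
lemma euc3_rep {u v t : Euc 3} (h : LinearIndependent ℝ ![u, v, t]) (x : Euc 3) :
    ∃ α β γ : ℝ, α • u + β • v + γ • t = x := by
  have hfr : finrank ℝ (span ℝ (Set.range ![u, v, t])) = 3 := by
    rw [finrank_span_eq_card h]; simp
  have htop : span ℝ (Set.range ![u, v, t]) = ⊤ := by
    apply Submodule.eq_top_of_finrank_eq
    rw [hfr, finrank_euclideanSpace_fin]
  have hx : x ∈ span ℝ (Set.range ![u, v, t]) := htop ▸ Submodule.mem_top
  rw [mem_span_range_iff_exists_fun] at hx
  obtain ⟨c, hc⟩ := hx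
  refine ⟨c 0, c 1, c 2, ?_⟩
  rw [← hc, Fin.sum_univ_three]
  simp [Matrix.cons_val_zero, Matrix.cons_val_one]

/-- if a 2-dimensional-or-less submodule contains an independent pair, every element
is a combination of the pair -/
lemma span2_rep {a b : Euc 3} (h : LinearIndependent ℝ ![a, b]) {K : Submodule ℝ (Euc 3)}
    (hK : finrank ℝ K ≤ 2) (ha : a ∈ K) (hb : b ∈ K) {z : Euc 3} (hz : z ∈ K) :
    ∃ s t : ℝ, s • a + t • b = z := by
  have hle : span ℝ {a, b} ≤ K := by
    rw [span_le]; intro w hw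
    rcases hw with rfl | hw
    · exact ha
    · rw [Set.mem_singleton_iff] at hw; subst hw; exact hb
  have hfr : finrank ℝ (span ℝ ({a, b} : Set (Euc 3))) = 2 := by
    rw [← range_pair a b, finrank_span_eq_card h]; simp
  have heq : span ℝ ({a, b} : Set (Euc 3)) = K :=
    Submodule.eq_of_le_of_finrank_le hle (by rw [hfr]; exact hK)
  rw [← heq] at hz
  exact Submodule.mem_span_pair.mp hz

lemma finrank_orth_singleton {nv : Euc 3} (h : nv ≠ 0) : finrank ℝ ((ℝ ∙ nv)ᗮ) = 2 := by
  have := Submodule.finrank_add_finrank_orthogonal (K := (ℝ ∙ nv)) (𝕜 := ℝ)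
  rw [finrank_span_singleton h, finrank_euclideanSpace_fin] at this
  omega

lemma euc3_exists_ortho2 (a b : Euc 3) : ∃ t : Euc 3, t ≠ 0 ∧ ⟪a, t⟫ = 0 ∧ ⟪b, t⟫ = 0 := by
  have hne : (span ℝ ({a, b} : Set (Euc 3)))ᗮ ≠ ⊥ := by
    intro hbot
    have htop : span ℝ ({a, b} : Set (Euc 3)) = ⊤ := Submodule.orthogonal_eq_bot_iff.mp hbot
    have h1 : finrank ℝ (span ℝ ({a, b} : Set (Euc 3))) ≤ 2 := by
      classical
      refine le_trans (finrank_span_le_card _) ?_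
      simp [Set.toFinset_insert]
      exact Finset.card_insert_le _ _
    rw [htop] at h1
    have : finrank ℝ (⊤ : Submodule ℝ (Euc 3)) = 3 := by
      rw [finrank_top, finrank_euclideanSpace_fin]
    omega
  obtain ⟨t, ht, ht0⟩ := Submodule.ne_bot_iff _ |>.mp hne
  refine ⟨t, ht0, ?_, ?_⟩
  · exact ht a (Submodule.subset_span (by simp))
  · exact ht b (Submodule.subset_span (by simp))




noncomputable def bas3 : Basis (Fin 3) ℝ (Euc 3) := (EuclideanSpace.basisFun (Fin 3) ℝ).toBasis

noncomputable def mat3 (A : Euc 3 ≃ₗᵢ[ℝ] Euc 3) : Matrix (Fin 3) (Fin 3) ℝ :=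
  LinearMap.toMatrix bas3 bas3 (A.toLinearEquiv : Euc 3 →ₗ[ℝ] Euc 3)

noncomputable def detL (A : Euc 3 ≃ₗᵢ[ℝ] Euc 3) : ℝ :=
  LinearMap.det (A.toLinearEquiv : Euc 3 →ₗ[ℝ] Euc 3)

lemma bas3_repr (x : Euc 3) (i : Fin 3) : bas3.repr x i = x i := by
  simp [bas3, EuclideanSpace.basisFun_toBasis]

lemma det_mat3 (A : Euc 3 ≃ₗᵢ[ℝ] Euc 3) : (mat3 A).det = detL A :=
  LinearMap.det_toMatrix bas3 _

lemma mat3_mulVec (A : Euc 3 ≃ₗᵢ[ℝ] Euc 3) (x : Euc 3) (i : Fin 3) :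
    ((mat3 A) *ᵥ (fun j => x j)) i = (A x) i := by
  have h := LinearMap.toMatrix_mulVec_repr bas3 bas3 (A.toLinearEquiv : Euc 3 →ₗ[ℝ] Euc 3) x
  have h1 : ∀ y : Euc 3, ⇑(bas3.repr y) = fun j => y j := by
    intro y; funext j; exact bas3_repr y j
  simp only [h1] at h
  exact congrFun h i

lemma mat3_orth (A : Euc 3 ≃ₗᵢ[ℝ] Euc 3) : (mat3 A)ᵀ * (mat3 A) = 1 := by
  have hcol : ∀ i j, mat3 A i j = (A (EuclideanSpace.single j 1)) i := by
    intro i j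
    rw [mat3, LinearMap.toMatrix_apply, bas3_repr]
    simp [bas3, EuclideanSpace.basisFun_apply]
  ext i j
  rw [Matrix.mul_apply, Matrix.one_apply]
  have : ∀ k, (mat3 A)ᵀ i k * (mat3 A) k j
      = (A (EuclideanSpace.single i 1)) k * (A (EuclideanSpace.single j 1)) k := by
    intro k; rw [Matrix.transpose_apply, hcol, hcol]
  rw [Finset.sum_congr rfl (fun k _ => this k)]
  have hinner : ⟪A (EuclideanSpace.single i 1), A (EuclideanSpace.single j 1)⟫
      = ⟪(EuclideanSpace.single i 1 : Euc 3), EuclideanSpace.single j 1⟫ :=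
    A.inner_map_map _ _
  rw [PiLp.inner_apply, PiLp.inner_apply] at hinner
  simp only [RCLike.inner_apply, conj_trivial] at hinner
  rw [Finset.sum_congr rfl (fun k _ => mul_comm _ _), hinner]
  simp [EuclideanSpace.single_apply]

lemma detL_pm (A : Euc 3 ≃ₗᵢ[ℝ] Euc 3) : detL A = 1 ∨ detL A = -1 := by
  have h := congrArg Matrix.det (mat3_orth A)
  rw [Matrix.det_mul, Matrix.det_transpose, Matrix.det_one, det_mat3] at h
  exact mul_self_eq_one_iff.mp h

/-- Every rotation of `ℝ³` has a nonzero fixed vector. -/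
lemma evec3 (A : Euc 3 ≃ₗᵢ[ℝ] Euc 3) (hdet : detL A = 1) : ∃ v : Euc 3, v ≠ 0 ∧ A v = v := by
  have horth := mat3_orth A
  have hdet' : (mat3 A).det = 1 := by rw [det_mat3, hdet]
  set M := mat3 A with hM
  have key : (M - 1).det = 0 := by
    have h1 : Mᵀ * (1 - M) = Mᵀ - 1 := by
      rw [Matrix.mul_sub, horth, Matrix.mul_one]
    have h2 : (Mᵀ - 1).det = (M - 1).det := by
      rw [← Matrix.det_transpose (M - 1), Matrix.transpose_sub, Matrix.transpose_one]
    have h3 : (1 - M : Matrix (Fin 3) (Fin 3) ℝ) = -(M - 1) := (neg_sub M 1).symm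
    have h4 : (Mᵀ - 1).det = (M - 1).det * (-1) := by
      rw [← h1, Matrix.det_mul, Matrix.det_transpose, hdet', one_mul, h3, Matrix.det_neg]
      simp [Fintype.card_fin]
      ring
    nlinarith [h2, h4]
  obtain ⟨v, hv0, hv⟩ := Matrix.exists_mulVec_eq_zero_iff.mpr key
  refine ⟨(WithLp.toLp 2 (fun i => v i) : Euc 3), ?_, ?_⟩
  · intro h
    apply hv0
    funext i
    exact congrFun (congrArg (fun (z : Euc 3) => (fun j => z j)) h) i
  · have h5 : ∀ i, (M *ᵥ v) i - v i = 0 := by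
      intro i
      have := congrFun hv i
      rw [Matrix.sub_mulVec, Matrix.one_mulVec] at this
      simpa using this
    ext i
    have h6 := mat3_mulVec A (WithLp.toLp 2 (fun i => v i)) i
    have h7 := h5 i
    have : (M *ᵥ v) i = v i := by linarith
    rw [← h6]
    simpa using this




variable {E : Type*} [NormedAddCommGroup E] [InnerProductSpace ℝ E]

lemma inner_comb2 {w n : E} (hww : ⟪w,w⟫ = 1) (hnn : ⟪n,n⟫ = 1) (hwn : ⟪w,n⟫ = 0)
    (α β γ δ : ℝ) : ⟪α•w+β•n, γ•w+δ•n⟫ = α*γ+β*δ := by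
  have hnw : ⟪n,w⟫ = 0 := by rw [real_inner_comm]; exact hwn
  simp only [inner_add_left, inner_add_right, real_inner_smul_left, real_inner_smul_right,
    hww, hnn, hwn, hnw]
  ring

/-- rotation/reflection dichotomy for an isometry preserving the span of an orthonormal
pair (expressed through coefficients) -/
lemma rotrefl {A : E ≃ₗᵢ[ℝ] E} {w n : E} (hww : ⟪w,w⟫ = 1) (hnn : ⟪n,n⟫ = 1)
    (hwn : ⟪w,n⟫ = 0)
    (hAw : A w = ⟪w, A w⟫ • w + ⟪n, A w⟫ • n)
    (hAn : A n = ⟪w, A n⟫ • w + ⟪n, A n⟫ • n) :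
    (A n = -⟪n, A w⟫ • w + ⟪w, A w⟫ • n) ∨ (A n = ⟪n, A w⟫ • w + -⟪w, A w⟫ • n) := by
  set a := ⟪w, A w⟫; set b := ⟪n, A w⟫; set c := ⟪w, A n⟫; set d := ⟪n, A n⟫
  have h1 : a ^ 2 + b ^ 2 = 1 := by
    have := A.inner_map_map w w
    rw [hww] at this
    rw [← this]
    conv_lhs => rw [sq, sq]
    rw [← inner_comb2 hww hnn hwn a b a b, ← hAw]
  have h2 : c ^ 2 + d ^ 2 = 1 := by
    have := A.inner_map_map n n
    rw [hnn] at this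
    rw [← this]
    conv_lhs => rw [sq, sq]
    rw [← inner_comb2 hww hnn hwn c d c d, ← hAn]
  have h3 : a * c + b * d = 0 := by
    have := A.inner_map_map w n
    rw [hwn] at this
    rw [← this]
    conv_rhs => rw [hAw, hAn, inner_comb2 hww hnn hwn]
  rcases R1 h1 h2 h3 with ⟨hc, hd⟩ | ⟨hc, hd⟩
  · left; rw [hAn, hc, hd]
  · right; rw [hAn, hc, hd]

/-- in the reflection case there is a nonzero fixed vector in the plane -/
lemma refl_fixed {A : E ≃ₗᵢ[ℝ] E} {w n : E} (hww : ⟪w,w⟫ = 1) (hnn : ⟪n,n⟫ = 1)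
    (hwn : ⟪w,n⟫ = 0)
    (hAw : A w = ⟪w, A w⟫ • w + ⟪n, A w⟫ • n)
    (hAn : A n = ⟪n, A w⟫ • w + -⟪w, A w⟫ • n) :
    ∃ α β : ℝ, ¬(α = 0 ∧ β = 0) ∧ A (α • w + β • n) = α • w + β • n := by
  set a := ⟪w, A w⟫ with ha; set b := ⟪n, A w⟫ with hb
  have h1 : a ^ 2 + b ^ 2 = 1 := by
    have := A.inner_map_map w w
    rw [hww] at this
    rw [← this]
    conv_lhs => rw [sq, sq]
    rw [← inner_comb2 hww hnn hwn a b a b, ← hAw]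
  by_cases hz : b = 0 ∧ 1 - a = 0
  · -- then A w = w
    refine ⟨1, 0, by simp, ?_⟩
    have haa : a = 1 := by linarith [hz.2]
    rw [one_smul, zero_smul, add_zero, hAw, hz.1, haa]
    simp
  · refine ⟨b, 1 - a, hz, ?_⟩
    rw [map_add, map_smul, map_smul, hAw, hAn]
    match_scalars
    · ring
    · linear_combination h1

lemma inner_self_one {u : E} (h : ‖u‖ = 1) : ⟪u,u⟫ = 1 := by
  rw [real_inner_self_eq_norm_mul_norm, h, mul_one]

lemma ne_zero_of_inner_one {u : E} (h : ⟪u,u⟫ = 1) : u ≠ 0 := by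
  intro h0; rw [h0, inner_zero_left] at h; norm_num at h

/-- linear independence of an orthonormal triple -/
lemma li_triple_on {v w n : Euc 3} (hvv : ⟪v,v⟫ = 1) (hww : ⟪w,w⟫ = 1) (hnn : ⟪n,n⟫ = 1)
    (hvw : ⟪v,w⟫ = 0) (hvn : ⟪v,n⟫ = 0) (hwn : ⟪w,n⟫ = 0) :
    LinearIndependent ℝ ![v, w, n] := by
  have hw0 : w ≠ 0 := ne_zero_of_inner_one hww
  have pair : LinearIndependent ℝ ![w, n] := by
    apply li_pair hw0
    rintro ⟨t, ht⟩
    have h1 : ⟪w, n⟫ = t := by rw [ht, real_inner_smul_right, hww, mul_one]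
    have h2 : t = 0 := by rw [← h1, hwn]
    rw [h2, zero_smul] at ht
    rw [ht, inner_zero_left] at hnn; norm_num at hnn
  have hnotmem : v ∉ span ℝ (Set.range ![w, n]) := by
    rw [range_pair]
    intro hmem
    obtain ⟨s, t, hst⟩ := Submodule.mem_span_pair.mp hmem
    have h := congrArg (fun y => ⟪v, y⟫) hst
    simp only [inner_add_right, real_inner_smul_right, hvw, hvn] at h
    rw [hvv] at h
    norm_num at h
  rw [show (![v, w, n]) = Fin.cons v ![w, n] from rfl]
  exact linearIndependent_fin_cons.mpr ⟨pair, hnotmem⟩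

/-- expansion in an orthonormal triple of `ℝ³` -/
lemma expand3 {v w n : Euc 3} (hvv : ⟪v,v⟫ = 1) (hww : ⟪w,w⟫ = 1) (hnn : ⟪n,n⟫ = 1)
    (hvw : ⟪v,w⟫ = 0) (hvn : ⟪v,n⟫ = 0) (hwn : ⟪w,n⟫ = 0) (x : Euc 3) :
    x = ⟪v,x⟫ • v + ⟪w,x⟫ • w + ⟪n,x⟫ • n := by
  have hwv : ⟪w,v⟫ = 0 := by rw [real_inner_comm]; exact hvw
  have hnv : ⟪n,v⟫ = 0 := by rw [real_inner_comm]; exact hvn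
  have hnw : ⟪n,w⟫ = 0 := by rw [real_inner_comm]; exact hwn
  obtain ⟨α, β, γ, h⟩ := euc3_rep (li_triple_on hvv hww hnn hvw hvn hwn) x
  have hα : ⟪v,x⟫ = α := by
    rw [← h]
    simp only [inner_add_right, real_inner_smul_right, hvv, hvw, hvn]; ring
  have hβ : ⟪w,x⟫ = β := by
    rw [← h]
    simp only [inner_add_right, real_inner_smul_right, hwv, hww, hwn]; ring
  have hγ : ⟪n,x⟫ = γ := by
    rw [← h]
    simp only [inner_add_right, real_inner_smul_right, hnv, hnw, hnn]; ring
  rw [hα, hβ, hγ]; exact h.symm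

/-- two rotations of `ℝ³` about a common axis commute -/
lemma comm3 {A B : Euc 3 ≃ₗᵢ[ℝ] Euc 3} {v : Euc 3} (hv : v ≠ 0)
    (hAv : A v = v) (hBv : B v = v)
    (hA : ∀ z, A z = z → ∃ t : ℝ, z = t • v)
    (hB : ∀ z, B z = z → ∃ t : ℝ, z = t • v) :
    ∀ x, A (B x) = B (A x) := by
  obtain ⟨u, hu1, c, hc0, hcu⟩ := exists_unit_para hv
  have huu : ⟪u,u⟫ = 1 := inner_self_one hu1
  have hAu : A u = u := by rw [hcu, map_smul, hAv]
  have hBu : B u = u := by rw [hcu, map_smul, hBv]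
  have hvu : v = c⁻¹ • u := by rw [hcu, smul_smul, inv_mul_cancel₀ hc0, one_smul]
  have hA' : ∀ z, A z = z → ∃ t : ℝ, z = t • u := by
    intro z hz; obtain ⟨t, ht⟩ := hA z hz
    exact ⟨t * c⁻¹, by rw [ht, hvu, smul_smul]⟩
  have hB' : ∀ z, B z = z → ∃ t : ℝ, z = t • u := by
    intro z hz; obtain ⟨t, ht⟩ := hB z hz
    exact ⟨t * c⁻¹, by rw [ht, hvu, smul_smul]⟩
  obtain ⟨w0, hw00, hw01, _⟩ := euc3_exists_ortho2 u u
  obtain ⟨w, hw1, cw, hcw0, hcw⟩ := exists_unit_para hw00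
  have hww : ⟪w,w⟫ = 1 := inner_self_one hw1
  have huw : ⟪u,w⟫ = 0 := by rw [hcw, real_inner_smul_right, hw01, mul_zero]
  obtain ⟨n0, hn00, hn01, hn02⟩ := euc3_exists_ortho2 u w
  obtain ⟨n, hn1, cn, hcn0, hcn⟩ := exists_unit_para hn00
  have hnn : ⟪n,n⟫ = 1 := inner_self_one hn1
  have hun : ⟪u,n⟫ = 0 := by rw [hcn, real_inner_smul_right, hn01, mul_zero]
  have hwn : ⟪w,n⟫ = 0 := by rw [hcn, real_inner_smul_right, hn02, mul_zero]
  -- coefficients of A and B on the plane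
  have hzeroA : ∀ z : Euc 3, ⟪u, A z⟫ = ⟪u, z⟫ := by
    intro z; conv_lhs => rw [← hAu]
    exact A.inner_map_map u z
  have hzeroB : ∀ z : Euc 3, ⟪u, B z⟫ = ⟪u, z⟫ := by
    intro z; conv_lhs => rw [← hBu]
    exact B.inner_map_map u z
  have hAw : A w = ⟪w, A w⟫ • w + ⟪n, A w⟫ • n := by
    have := expand3 huu hww hnn huw hun hwn (A w)
    rwa [hzeroA w, huw, zero_smul, zero_add] at this
  have hAn : A n = ⟪w, A n⟫ • w + ⟪n, A n⟫ • n := by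
    have := expand3 huu hww hnn huw hun hwn (A n)
    rwa [hzeroA n, hun, zero_smul, zero_add] at this
  have hBw : B w = ⟪w, B w⟫ • w + ⟪n, B w⟫ • n := by
    have := expand3 huu hww hnn huw hun hwn (B w)
    rwa [hzeroB w, huw, zero_smul, zero_add] at this
  have hBn : B n = ⟪w, B n⟫ • w + ⟪n, B n⟫ • n := by
    have := expand3 huu hww hnn huw hun hwn (B n)
    rwa [hzeroB n, hun, zero_smul, zero_add] at this
  -- rule out reflections
  have noRefl : ∀ (C : Euc 3 ≃ₗᵢ[ℝ] Euc 3), (∀ z, C z = z → ∃ t : ℝ, z = t • u) →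
      C w = ⟪w, C w⟫ • w + ⟪n, C w⟫ • n →
      ¬ (C n = ⟪n, C w⟫ • w + -⟪w, C w⟫ • n) := by
    intro C hC hCw hCn
    obtain ⟨α, β, hαβ, hfix⟩ := refl_fixed hww hnn hwn hCw hCn
    obtain ⟨t, ht⟩ := hC _ hfix
    have h1 : ⟪u, α • w + β • n⟫ = 0 := by
      rw [inner_add_right, real_inner_smul_right, real_inner_smul_right, huw, hun]; ring
    have h2 : ⟪u, α • w + β • n⟫ = t := by
      rw [ht, real_inner_smul_right, huu, mul_one]
    have ht0 : t = 0 := by rw [← h2, h1]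
    rw [ht0, zero_smul] at ht
    apply hαβ
    have hnw : ⟪n,w⟫ = 0 := by rw [real_inner_comm]; exact hwn
    constructor
    · have h := congrArg (fun y => ⟪w, y⟫) ht
      simp only [inner_add_right, real_inner_smul_right, hww, hwn, inner_zero_right] at h
      linarith [h]
    · have h := congrArg (fun y => ⟪n, y⟫) ht
      simp only [inner_add_right, real_inner_smul_right, hnn, hnw, inner_zero_right] at h
      linarith [h]
  have hAn' : A n = -⟪n, A w⟫ • w + ⟪w, A w⟫ • n := by
    rcases rotrefl hww hnn hwn hAw hAn with h | h
    · exact h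
    · exact absurd h (noRefl A hA' hAw)
  have hBn' : B n = -⟪n, B w⟫ • w + ⟪w, B w⟫ • n := by
    rcases rotrefl hww hnn hwn hBw hBn with h | h
    · exact h
    · exact absurd h (noRefl B hB' hBw)
  intro x
  have hx := expand3 huu hww hnn huw hun hwn x
  rw [hx]
  set a := ⟪w, A w⟫; set b := ⟪n, A w⟫; set p := ⟪w, B w⟫; set q := ⟪n, B w⟫
  simp only [map_add, map_smul, hAu, hBu, hAw, hBw, hAn', hBn']
  simp only [map_add, map_smul, hAw, hBw, hAn', hBn', smul_add, smul_smul]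
  match_scalars <;> ring

/-- all fixed vectors of a nontrivial rotation of `ℝ³` are parallel -/
lemma fixpar3 {A : Euc 3 ≃ₗᵢ[ℝ] Euc 3} (hdet : detL A = 1) {u : Euc 3} (hu : u ≠ 0)
    (hAu : A u = u) (hnid : ¬∀ z, A z = z) : ∀ z, A z = z → ∃ t : ℝ, z = t • u := by
  intro z hz
  by_contra hnp
  have hli : LinearIndependent ℝ ![u, z] := li_pair hu (by push_neg at hnp ⊢; exact hnp)
  obtain ⟨n, hn0, hun, hzn⟩ := euc3_exists_ortho2 u z
  -- A n is orthogonal to u and z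
  have h1 : ⟪u, A n⟫ = 0 := by
    conv_lhs => rw [← hAu]
    rw [A.inner_map_map]; exact hun
  have h2 : ⟪z, A n⟫ = 0 := by
    conv_lhs => rw [← hz]
    rw [A.inner_map_map]; exact hzn
  -- the orthogonal complement of span {u, z} is spanned by n
  have hKfr : finrank ℝ ((span ℝ ({u, z} : Set (Euc 3)))ᗮ) = 1 := by
    have hsp : finrank ℝ (span ℝ ({u, z} : Set (Euc 3))) = 2 := by
      rw [← range_pair u z, finrank_span_eq_card hli]; simp
    have := Submodule.finrank_add_finrank_orthogonal
      (K := span ℝ ({u, z} : Set (Euc 3))) (𝕜 := ℝ)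
    rw [hsp, finrank_euclideanSpace_fin] at this
    omega
  have hmemn : n ∈ (span ℝ ({u, z} : Set (Euc 3)))ᗮ := by
    intro y hy
    obtain ⟨s, t, hst⟩ := Submodule.mem_span_pair.mp hy
    rw [← hst, inner_add_left, real_inner_smul_left, real_inner_smul_left, hun, hzn]
    ring
  have h1' : ⟪A n, u⟫ = 0 := by rw [real_inner_comm]; exact h1
  have h2' : ⟪A n, z⟫ = 0 := by rw [real_inner_comm]; exact h2
  have hmemAn : A n ∈ (span ℝ ({u, z} : Set (Euc 3)))ᗮ := by
    intro y hy
    obtain ⟨s, t, hst⟩ := Submodule.mem_span_pair.mp hy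
    rw [← hst, inner_add_left, real_inner_smul_left, real_inner_smul_left, h1, h2]
    ring
  have hKspan : (span ℝ ({u, z} : Set (Euc 3)))ᗮ = ℝ ∙ n := by
    symm
    apply Submodule.eq_of_le_of_finrank_le
    · rw [Submodule.span_le, Set.singleton_subset_iff]; exact hmemn
    · rw [hKfr, finrank_span_singleton hn0]
  have hAn : ∃ t : ℝ, A n = t • n := by
    have hmem := hKspan ▸ hmemAn
    obtain ⟨a, ha⟩ := Submodule.mem_span_singleton.mp hmem
    exact ⟨a, ha.symm⟩
  obtain ⟨t, ht⟩ := hAn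
  have htpm : t = 1 ∨ t = -1 := by
    have hnorm : ‖A n‖ = ‖n‖ := A.norm_map n
    rw [ht, norm_smul, Real.norm_eq_abs] at hnorm
    have hn' : ‖n‖ ≠ 0 := norm_ne_zero_iff.mpr hn0
    have habs : |t| = 1 := by
      apply mul_right_cancel₀ hn'
      rw [hnorm, one_mul]
    rcases abs_eq (by norm_num : (0:ℝ) ≤ 1) |>.mp habs with h | h
    · exact Or.inl h
    · exact Or.inr h
  -- triple independence
  have hli3 : LinearIndependent ℝ ![n, u, z] := by
    rw [show (![n, u, z]) = Fin.cons n ![u, z] from rfl]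
    refine linearIndependent_fin_cons.mpr ⟨hli, ?_⟩
    rw [range_pair]
    intro hmem
    obtain ⟨s, t', hst⟩ := Submodule.mem_span_pair.mp hmem
    have hun' : ⟪n, u⟫ = 0 := by rw [real_inner_comm]; exact hun
    have hzn' : ⟪n, z⟫ = 0 := by rw [real_inner_comm]; exact hzn
    have h := congrArg (fun y => ⟪n, y⟫) hst
    simp only [inner_add_right, real_inner_smul_right, hun', hzn', inner_zero_right] at h
    have : ⟪n, n⟫ = 0 := by linarith [h]
    exact hn0 (inner_self_eq_zero.mp this)
  rcases htpm with ht1 | ht1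
  · -- A is the identity, contradiction
    apply hnid
    intro x
    obtain ⟨α, β, γ, hx⟩ := euc3_rep hli3 x
    rw [← hx, map_add, map_add, map_smul, map_smul, map_smul, hAu, hz, ht, ht1, one_smul]
  · -- det A = -1, contradiction
    rw [ht1] at ht
    have hcard : Fintype.card (Fin 3) = finrank ℝ (Euc 3) := by
      rw [finrank_euclideanSpace_fin]; simp
    set Bs := basisOfLinearIndependentOfCardEqFinrank hli3 hcard with hBs
    have hB : ∀ i, Bs i = ![n, u, z] i := by
      intro i
      rw [hBs, coe_basisOfLinearIndependentOfCardEqFinrank]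
    have hdet2 : (LinearMap.toMatrix Bs Bs (A.toLinearEquiv : Euc 3 →ₗ[ℝ] Euc 3)).det
        = detL A := LinearMap.det_toMatrix Bs _
    have hMeq : LinearMap.toMatrix Bs Bs (A.toLinearEquiv : Euc 3 →ₗ[ℝ] Euc 3)
        = Matrix.diagonal ![-1, 1, 1] := by
      ext i j
      rw [LinearMap.toMatrix_apply]
      have hABj : (A.toLinearEquiv : Euc 3 →ₗ[ℝ] Euc 3) (Bs j) = (![-1,1,1] j : ℝ) • Bs j := by
        have : (A.toLinearEquiv : Euc 3 →ₗ[ℝ] Euc 3) (Bs j) = A (Bs j) := rfl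
        rw [this, hB j]
        fin_cases j
        · simpa using ht
        · simpa using hAu
        · simpa using hz
      rw [hABj, map_smul, Basis.repr_self]
      rw [Matrix.diagonal_apply]
      by_cases hij : i = j
      · subst hij
        simp
      · simp [Finsupp.single_apply, hij]
    have hcontra : detL A = -1 := by
      rw [← hdet2, hMeq, Matrix.det_diagonal]
      simp [Fin.prod_univ_three]
    rw [hdet] at hcontra
    norm_num at hcontra

/-- If `g * h` has a fixed point, then the fixed-point sets of `g` and of `h` either meet,
or are both contained in a common affine hyperplane (a bisector). -/
lemma lemC {g h : E ≃ᵢ E} {x : E} (hx : (g * h) x = x) :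
    (∃ z, g z = z ∧ h z = z) ∨
    ∃ nv : E, nv ≠ 0 ∧ ∃ cc : ℝ,
      (∀ z, g z = z → ⟪nv, z⟫ = cc) ∧ (∀ z, h z = z → ⟪nv, z⟫ = cc) := by
  have hgy : g (h x) = x := hx
  by_cases hy : h x = x
  · left
    refine ⟨x, ?_, hy⟩
    conv_lhs => rw [← hy]
    exact hgy
  · right
    set y := h x with hydef
    refine ⟨y - x, fun h0 => hy (by rwa [sub_eq_zero] at h0), (‖y‖ ^ 2 - ‖x‖ ^ 2) / 2, ?_, ?_⟩
    · intro z hz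
      have hdist : dist z x = dist z y := by
        calc dist z x = dist (g z) (g y) := by rw [hz, hgy]
        _ = dist z y := g.dist_eq z y
      have h2 : ‖z - x‖ ^ 2 = ‖z - y‖ ^ 2 := by
        rw [← dist_eq_norm, ← dist_eq_norm, hdist]
      rw [norm_sub_sq_real, norm_sub_sq_real] at h2
      rw [inner_sub_left]
      have hyz : ⟪y, z⟫ = ⟪z, y⟫ := real_inner_comm _ _
      have hxz : ⟪x, z⟫ = ⟪z, x⟫ := real_inner_comm _ _
      rw [hyz, hxz]
      linarith [h2]
    · intro z hz
      have hdist : dist z x = dist z y := by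
        calc dist z x = dist (h z) (h x) := (h.dist_eq z x).symm
        _ = dist z y := by rw [hz, ← hydef]
      have h2 : ‖z - x‖ ^ 2 = ‖z - y‖ ^ 2 := by
        rw [← dist_eq_norm, ← dist_eq_norm, hdist]
      rw [norm_sub_sq_real, norm_sub_sq_real] at h2
      rw [inner_sub_left]
      have hyz : ⟪y, z⟫ = ⟪z, y⟫ := real_inner_comm _ _
      have hxz : ⟪x, z⟫ = ⟪z, x⟫ := real_inner_comm _ _
      rw [hyz, hxz]
      linarith [h2]

lemma lp_ne_id {g : E ≃ᵢ E} (hg : ∃ x, g x = x) (hne : ¬∀ x, g x = x) :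
    ¬∀ z, lp g z = z := fun h => hne (id_of_lp_id hg h)

lemma fix_segment {g : E ≃ᵢ E} {x y : E} (hx : g x = x) (hy : g y = y) {a b : ℝ}
    (hab : a + b = 1) : g (a • x + b • y) = a • x + b • y := by
  rw [apply_eq, map_add, map_smul, map_smul, lp_apply, lp_apply, hx, hy]
  match_scalars <;> linarith [hab]

lemma span_pair_finrank_le (a b : Euc 3) :
    finrank ℝ (span ℝ ({a, b} : Set (Euc 3))) ≤ 2 := by
  classical
  refine le_trans (finrank_span_le_card _) ?_
  simp [Set.toFinset_insert]
  exact Finset.card_insert_le _ _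

lemma detL_lp_mul (g h : Euc 3 ≃ᵢ Euc 3) :
    detL (lp (g * h)) = detL (lp g) * detL (lp h) := by
  have hcomp : ((lp (g * h)).toLinearEquiv : Euc 3 →ₗ[ℝ] Euc 3)
      = ((lp g).toLinearEquiv : Euc 3 →ₗ[ℝ] Euc 3)
        ∘ₗ ((lp h).toLinearEquiv : Euc 3 →ₗ[ℝ] Euc 3) := by
    apply LinearMap.ext; intro x
    exact lp_mul g h x
  rw [detL, hcomp, LinearMap.det_comp]
  rfl

lemma detL_lp_one : detL (lp (1 : Euc 3 ≃ᵢ Euc 3)) = 1 := by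
  have hcomp : ((lp (1 : Euc 3 ≃ᵢ Euc 3)).toLinearEquiv : Euc 3 →ₗ[ℝ] Euc 3)
      = LinearMap.id := by
    apply LinearMap.ext; intro x
    exact lp_one x
  rw [detL, hcomp, LinearMap.det_id]

lemma detL_lp_inv (g : Euc 3 ≃ᵢ Euc 3) : detL (lp g⁻¹) * detL (lp g) = 1 := by
  rw [← detL_lp_mul, inv_mul_cancel, detL_lp_one]

/-- Part 1 for dimension 3: the rotation part of the group has a common fixed point. -/
lemma part1_d3 (G : Subgroup (Euc 3 ≃ᵢ Euc 3)) (hfix : ∀ g ∈ G, ∃ x : Euc 3, g x = x) :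
    ∃ w : Euc 3, ∀ g ∈ G, detL (lp g) = 1 → g w = w := by
  by_cases htriv : ∀ g ∈ G, detL (lp g) = 1 → ∀ x, g x = x
  · exact ⟨0, fun g hg hd => htriv g hg hd 0⟩
  push_neg at htriv
  obtain ⟨g₁, hg₁G, hg₁d, x₁', hx₁'⟩ := htriv
  have hg₁ne : ¬∀ x, g₁ x = x := fun h => hx₁' (h x₁')
  obtain ⟨u₁, hu₁0, hu₁⟩ := evec3 (lp g₁) hg₁d
  have hg₁lpne : ¬∀ z, lp g₁ z = z := lp_ne_id (hfix g₁ hg₁G) hg₁ne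
  have hpar₁ := fixpar3 hg₁d hu₁0 hu₁ hg₁lpne
  by_cases hC : ∃ g' ∈ G, detL (lp g') = 1 ∧ (¬∀ x, g' x = x) ∧
      ∃ u' : Euc 3, u' ≠ 0 ∧ lp g' u' = u' ∧ ¬∃ t : ℝ, u' = t • u₁
  · -- case (c): two non-parallel axes
    obtain ⟨g', hg'G, hg'd, hg'ne, u', hu'0, hu', hnpar⟩ := hC
    have hg'lpne : ¬∀ z, lp g' z = z := lp_ne_id (hfix g' hg'G) hg'ne
    have hparh := fixpar3 hg'd hu'0 hu' hg'lpne
    have hliu : LinearIndependent ℝ ![u₁, u'] := li_pair hu₁0 hnpar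
    -- Step A : common fixed point of g₁ and g'
    obtain ⟨xgh, hxgh⟩ := hfix (g₁ * g') (mul_mem hg₁G hg'G)
    have hw : ∃ w : Euc 3, g₁ w = w ∧ g' w = w := by
      rcases lemC hxgh with ⟨z, hz1, hz2⟩ | ⟨nv, hnv0, cc, hb1, hb2⟩
      · exact ⟨z, hz1, hz2⟩
      · obtain ⟨p, hp⟩ := hfix g₁ hg₁G
        obtain ⟨q, hq⟩ := hfix g' hg'G
        have hpu : ⟪nv, u₁⟫ = 0 := by
          have h1 := hb1 p hp
          have h2 := hb1 (p + u₁) (fix_add hp hu₁)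
          rw [inner_add_right] at h2; linarith
        have hqu' : ⟪nv, u'⟫ = 0 := by
          have h1 := hb2 q hq
          have h2 := hb2 (q + u') (fix_add hq hu')
          rw [inner_add_right] at h2; linarith
        have hpq : ⟪nv, p - q⟫ = 0 := by
          rw [inner_sub_right, hb1 p hp, hb2 q hq, sub_self]
        obtain ⟨s, t, hst⟩ := span2_rep hliu (le_of_eq (finrank_orth_singleton hnv0))
          (Submodule.mem_orthogonal_singleton_iff_inner_right.mpr hpu)
          (Submodule.mem_orthogonal_singleton_iff_inner_right.mpr hqu')
          (Submodule.mem_orthogonal_singleton_iff_inner_right.mpr hpq)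
        refine ⟨p + (-s) • u₁, fix_add hp (by rw [map_smul, hu₁]), ?_⟩
        have heq : p + (-s) • u₁ = q + t • u' := by
          have h3 : p + (-s) • u₁ - (q + t • u') = (p - q) - (s • u₁ + t • u') := by
            match_scalars <;> ring
          have h4 : p + (-s) • u₁ - (q + t • u') = 0 := by
            rw [h3, ← hst]; abel
          rw [sub_eq_zero] at h4; exact h4
        rw [heq]
        exact fix_add hq (by rw [map_smul, hu'])
    obtain ⟨w, hwg, hwh⟩ := hw
    -- Step B : w is fixed by every rotation in G
    refine ⟨w, ?_⟩
    intro k hkG hkd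
    by_contra hkw
    have hkne : ¬∀ x, k x = x := fun h => hkw (h w)
    have hklpne := lp_ne_id (hfix k hkG) hkne
    obtain ⟨z₀, hz₀⟩ := hfix k hkG
    obtain ⟨uk, huk0, huk⟩ := evec3 (lp k) hkd
    have hpark := fixpar3 hkd huk0 huk hklpne
    have hwz₀ : ¬∃ t : ℝ, w - z₀ = t • uk := by
      rintro ⟨t, ht⟩
      apply hkw
      have hw' : w = z₀ + t • uk := by rw [← ht]; abel
      rw [hw']
      exact fix_add hz₀ (by rw [map_smul, huk])
    have hliP : LinearIndependent ℝ ![uk, w - z₀] := li_pair huk0 hwz₀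
    have claim : ∀ m ∈ G, detL (lp m) = 1 → m w = w → (¬∀ x, m x = x) →
        ∀ xv : Euc 3, lp m xv = xv → ∃ s t : ℝ, s • uk + t • (w - z₀) = xv := by
      intro m hmG hmd hmw hmne xv hxv
      have hmlpne := lp_ne_id (hfix m hmG) hmne
      obtain ⟨xmk, hxmk⟩ := hfix (m * k) (mul_mem hmG hkG)
      rcases lemC hxmk with ⟨z, hzm, hzk⟩ | ⟨nv, hnv0, cc, hbm, hbk⟩
      · have hzw : z - w ≠ 0 := by
          intro h0; rw [sub_eq_zero] at h0
          exact hkw (h0 ▸ hzk)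
        have hfixzw : lp m (z - w) = z - w := fix_sub hzm hmw
        have hparm := fixpar3 hmd hzw hfixzw hmlpne
        obtain ⟨t, ht⟩ := hparm xv hxv
        obtain ⟨s, hs⟩ := hpark (z - z₀) (fix_sub hzk hz₀)
        refine ⟨t * s, -t, ?_⟩
        rw [ht]
        have hzz : z - w = (z - z₀) - (w - z₀) := by abel
        rw [hzz, hs]
        match_scalars <;> ring
      · have hu_k : ⟪nv, uk⟫ = 0 := by
          have h1 := hbk z₀ hz₀
          have h2 := hbk (z₀ + uk) (fix_add hz₀ huk)
          rw [inner_add_right] at h2; linarith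
        have hwzperp : ⟪nv, w - z₀⟫ = 0 := by
          rw [inner_sub_right, hbm w hmw, hbk z₀ hz₀, sub_self]
        have hxvperp : ⟪nv, xv⟫ = 0 := by
          have h1 := hbm w hmw
          have h2 := hbm (w + xv) (fix_add hmw hxv)
          rw [inner_add_right] at h2; linarith
        exact span2_rep hliP (le_of_eq (finrank_orth_singleton hnv0))
          (Submodule.mem_orthogonal_singleton_iff_inner_right.mpr hu_k)
          (Submodule.mem_orthogonal_singleton_iff_inner_right.mpr hwzperp)
          (Submodule.mem_orthogonal_singleton_iff_inner_right.mpr hxvperp)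
    -- apply the claim to g₁, g' and g₁ * g'
    have hghd : detL (lp (g₁ * g')) = 1 := by rw [detL_lp_mul, hg₁d, hg'd, one_mul]
    have hghne : ¬∀ x, (g₁ * g') x = x := by
      intro hid
      have hlpgh : ∀ z, lp (g₁ * g') z = z := by
        intro z
        rw [lp_apply, hid z, hid 0, sub_zero]
      have h2 : lp g₁ u' = u' := by
        have h3 := hlpgh u'
        rw [lp_mul, hu'] at h3; exact h3
      obtain ⟨t, ht⟩ := hpar₁ u' h2
      exact hnpar ⟨t, ht⟩
    have hghw : (g₁ * g') w = w := by
      rw [IsometryEquiv.mul_apply, hwh, hwg]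
    obtain ⟨x₀, hx₀0, hx₀⟩ := evec3 (lp (g₁ * g')) hghd
    have hu₁P := claim g₁ hg₁G hg₁d hwg hg₁ne u₁ hu₁
    have hu'P := claim g' hg'G hg'd hwh hg'ne u' hu'
    have hx₀P := claim (g₁ * g') (mul_mem hg₁G hg'G) hghd hghw hghne x₀ hx₀
    -- x₀ is a combination of u₁ and u'
    have hKP := span_pair_finrank_le uk (w - z₀)
    have hmemP : ∀ xv : Euc 3, (∃ s t : ℝ, s • uk + t • (w - z₀) = xv) →
        xv ∈ span ℝ ({uk, w - z₀} : Set (Euc 3)) := by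
      intro xv ⟨s, t, hst⟩; exact Submodule.mem_span_pair.mpr ⟨s, t, hst⟩
    obtain ⟨σ, τ, hστ⟩ := span2_rep hliu hKP (hmemP u₁ hu₁P) (hmemP u' hu'P) (hmemP x₀ hx₀P)
    -- the key inner-product computation
    set y := lp g' x₀ with hy
    have hgy : lp g₁ y = x₀ := by rw [hy, ← lp_mul]; exact hx₀
    have i1 : ⟪x₀ - y, u'⟫ = 0 := by
      have h5 : ⟪y, u'⟫ = ⟪x₀, u'⟫ := by
        calc ⟪y, u'⟫ = ⟪lp g' x₀, lp g' u'⟫ := by rw [hy, hu']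
        _ = ⟪x₀, u'⟫ := (lp g').inner_map_map _ _
      rw [inner_sub_left, h5, sub_self]
    have i2 : ⟪x₀ - y, u₁⟫ = 0 := by
      have h5 : ⟪y, u₁⟫ = ⟪x₀, u₁⟫ := by
        calc ⟪y, u₁⟫ = ⟪lp g₁ y, lp g₁ u₁⟫ := ((lp g₁).inner_map_map _ _).symm
        _ = ⟪x₀, u₁⟫ := by rw [hgy, hu₁]
      rw [inner_sub_left, h5, sub_self]
    have i3 : ⟪x₀ - y, x₀⟫ = 0 := by
      have h5 : ⟪x₀ - y, σ • u₁ + τ • u'⟫ = 0 := by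
        rw [inner_add_right, real_inner_smul_right, real_inner_smul_right, i1, i2]
        ring
      rw [hστ] at h5; exact h5
    have hnorm : ‖y‖ = ‖x₀‖ := by rw [hy]; exact (lp g').norm_map x₀
    have hyx : y = x₀ := by
      have hyy : ⟪y, y⟫ = ⟪x₀, x₀⟫ := by
        rw [real_inner_self_eq_norm_mul_norm, real_inner_self_eq_norm_mul_norm, hnorm]
      have h5 : ⟪x₀, x₀⟫ - ⟪y, x₀⟫ = 0 := by
        rw [← inner_sub_left]; exact i3
      have h6 : ⟪x₀, y⟫ = ⟪y, x₀⟫ := real_inner_comm _ _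
      have h4 : ⟪x₀ - y, x₀ - y⟫ = 0 := by
        rw [inner_sub_left, inner_sub_right, inner_sub_right, h6]
        linarith [h5, hyy]
      have h7 := inner_self_eq_zero.mp h4
      rw [sub_eq_zero] at h7; exact h7.symm
    have hfy : lp g' x₀ = x₀ := by rw [← hy, hyx]
    have hfg : lp g₁ x₀ = x₀ := by rw [← hyx] at hgy ⊢; exact hgy
    obtain ⟨t1, ht1⟩ := hparh x₀ hfy
    obtain ⟨t2, ht2⟩ := hpar₁ x₀ hfg
    have ht10 : t1 ≠ 0 := fun h0 => hx₀0 (by rw [ht1, h0, zero_smul])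
    apply hnpar
    refine ⟨t2 / t1, ?_⟩
    have h8 : t1 • u' = t2 • u₁ := by rw [← ht1, ← ht2]
    calc u' = t1⁻¹ • (t1 • u') := by rw [smul_smul, inv_mul_cancel₀ ht10, one_smul]
    _ = t1⁻¹ • (t2 • u₁) := by rw [h8]
    _ = (t2 / t1) • u₁ := by rw [smul_smul, division_def, mul_comm]
  · -- case (b): all axes parallel to u₁
    obtain ⟨xf, hxf⟩ := hfix g₁ hg₁G
    refine ⟨xf, ?_⟩
    intro m hmG hmd
    by_cases hmne : ∀ x, m x = x
    · exact hmne xf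
    have hmlpne : ¬∀ z, lp m z = z := lp_ne_id (hfix m hmG) hmne
    obtain ⟨um, hum0, hum⟩ := evec3 (lp m) hmd
    have hex : ∃ t : ℝ, um = t • u₁ := by
      by_contra hno
      exact hC ⟨m, hmG, hmd, hmne, um, hum0, hum, hno⟩
    obtain ⟨t, ht⟩ := hex
    have ht0 : t ≠ 0 := fun h0 => hum0 (by rw [ht, h0, zero_smul])
    have hmu₁ : lp m u₁ = u₁ := by
      have h1 : lp m (t • u₁) = t • u₁ := by rw [← ht]; exact hum
      rw [map_smul] at h1
      exact smul_right_injective (Euc 3) ht0 h1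
    have hparm := fixpar3 hmd hu₁0 hmu₁ hmlpne
    have hcomm := comm3 hu₁0 hmu₁ hu₁ hparm hpar₁
    set c := m * g₁ * m⁻¹ * g₁⁻¹ with hc
    have hcG : c ∈ G := mul_mem (mul_mem (mul_mem hmG hg₁G) (inv_mem hmG)) (inv_mem hg₁G)
    have hclp : ∀ z, lp c z = z := by
      intro z
      have h1 : lp c z = lp m (lp g₁ (lp m⁻¹ (lp g₁⁻¹ z))) := by
        rw [hc, lp_mul, lp_mul, lp_mul]
      rw [h1, hcomm (lp m⁻¹ (lp g₁⁻¹ z)), lp_lp_inv, lp_lp_inv]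
    have hcid : ∀ x, c x = x := id_of_lp_id (hfix c hcG) hclp
    have hcommpt : ∀ x, m (g₁ x) = g₁ (m x) := by
      intro x
      have h1 := hcid (g₁ (m x))
      rw [hc] at h1
      simp only [IsometryEquiv.mul_apply, IsometryEquiv.inv_apply_self] at h1
      exact h1
    have hfixg₁ : g₁ (m xf) = m xf := by rw [← hcommpt xf, hxf]
    have hz := fix_sub hfixg₁ hxf
    obtain ⟨s, hs⟩ := hpar₁ _ hz
    have hmz : lp m (m xf - xf) = m xf - xf := by
      rw [hs, map_smul, hmu₁]
    have hperp := disp_perp (hfix m hmG) hmz xf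
    have h9 := inner_self_eq_zero.mp hperp
    rw [sub_eq_zero] at h9; exact h9

/-- The three-dimensional case. -/
theorem main_d3 (G : Subgroup (Euc 3 ≃ᵢ Euc 3)) (hfix : ∀ g ∈ G, ∃ x : Euc 3, g x = x) :
    ∃ x : Euc 3, ∀ g ∈ G, g x = x := by
  obtain ⟨w, hw⟩ := part1_d3 G hfix
  by_cases hall : ∀ g ∈ G, detL (lp g) = 1
  · exact ⟨w, fun g hg => hw g hg (hall g hg)⟩
  push_neg at hall
  obtain ⟨g₀, hg₀G, hg₀d⟩ := hall
  have hg₀d' : detL (lp g₀) = -1 := (detL_pm (lp g₀)).resolve_left hg₀d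
  -- the fixed set of the rotation subgroup
  set Φ : Set (Euc 3) := {x | ∀ g ∈ G, detL (lp g) = 1 → g x = x} with hΦ
  have hwΦ : w ∈ Φ := hw
  have hconv : Convex ℝ Φ := by
    intro x hx y hy a b ha hb hab
    intro g hg hd
    exact fix_segment (hx g hg hd) (hy g hg hd) hab
  have hclosed : IsClosed Φ := by
    have hΦeq : Φ = ⋂ (g : Euc 3 ≃ᵢ Euc 3) (_ : g ∈ G) (_ : detL (lp g) = 1),
        {x : Euc 3 | g x = x} := by
      ext x
      simp only [hΦ, Set.mem_setOf_eq, Set.mem_iInter]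
    rw [hΦeq]
    refine isClosed_iInter fun g => isClosed_iInter fun hg => isClosed_iInter fun hd => ?_
    exact isClosed_eq g.continuous continuous_id
  -- g₀ preserves Φ
  have hg₀Φ : ∀ y ∈ Φ, g₀ y ∈ Φ := by
    intro y hy g hg hd
    have hkG : g₀⁻¹ * g * g₀ ∈ G := mul_mem (mul_mem (inv_mem hg₀G) hg) hg₀G
    have hkd : detL (lp (g₀⁻¹ * g * g₀)) = 1 := by
      rw [detL_lp_mul, detL_lp_mul, hd]
      have := detL_lp_inv g₀
      rw [hg₀d'] at this ⊢
      nlinarith [this]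
    have hky : (g₀⁻¹ * g * g₀) y = y := hy _ hkG hkd
    have : g (g₀ y) = g₀ ((g₀⁻¹ * g * g₀) y) := by
      simp only [IsometryEquiv.mul_apply, IsometryEquiv.apply_inv_self]
    rw [this, hky]
  -- project a fixed point of g₀ onto Φ
  obtain ⟨p₀, hp₀⟩ := hfix g₀ hg₀G
  obtain ⟨q, hqΦ, hqmin⟩ :=
    exists_norm_eq_iInf_of_complete_convex ⟨w, hwΦ⟩ hclosed.isComplete hconv p₀
  have hqchar := (norm_eq_iInf_iff_real_inner_le_zero (u := p₀) hconv hqΦ).mp hqmin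
  have hq' : g₀ q ∈ Φ := hg₀Φ q hqΦ
  have hq'min : ‖p₀ - g₀ q‖ = ⨅ z : Φ, ‖p₀ - z‖ := by
    rw [← hqmin]
    calc ‖p₀ - g₀ q‖ = dist p₀ (g₀ q) := (dist_eq_norm _ _).symm
    _ = dist (g₀ p₀) (g₀ q) := by rw [hp₀]
    _ = dist p₀ q := g₀.dist_eq p₀ q
    _ = ‖p₀ - q‖ := dist_eq_norm _ _
  have hq'char := (norm_eq_iInf_iff_real_inner_le_zero hconv hq').mp hq'min
  have hgq : g₀ q = q := by
    have h1 := hqchar (g₀ q) hq'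
    have h2 := hq'char q hqΦ
    have h3 : ⟪g₀ q - q, g₀ q - q⟫ ≤ 0 := by
      have e1 : ⟪p₀ - q, g₀ q - q⟫ + ⟪p₀ - g₀ q, q - g₀ q⟫ = ⟪g₀ q - q, g₀ q - q⟫ := by
        have e2 : (q : Euc 3) - g₀ q = -(g₀ q - q) := by abel
        rw [e2, inner_neg_right, ← sub_eq_add_neg, ← inner_sub_left]
        congr 1
        abel
      have e4 := add_nonpos h1 h2
      rw [e1] at e4
      exact e4
    have h4 : ⟪g₀ q - q, g₀ q - q⟫ = 0 :=
      le_antisymm h3 real_inner_self_nonneg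
    have h5 := inner_self_eq_zero.mp h4
    rw [sub_eq_zero] at h5; exact h5
  refine ⟨q, ?_⟩
  intro g hg
  by_cases hd : detL (lp g) = 1
  · exact hqΦ g hg hd
  · have hd' : detL (lp g) = -1 := (detL_pm (lp g)).resolve_left hd
    have hmG : g₀⁻¹ * g ∈ G := mul_mem (inv_mem hg₀G) hg
    have hmd : detL (lp (g₀⁻¹ * g)) = 1 := by
      rw [detL_lp_mul, hd']
      have := detL_lp_inv g₀
      rw [hg₀d'] at this
      nlinarith [this]
    have hmq : (g₀⁻¹ * g) q = q := hqΦ _ hmG hmd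
    have : g q = g₀ ((g₀⁻¹ * g) q) := by
      simp only [IsometryEquiv.mul_apply, IsometryEquiv.apply_inv_self]
    rw [this, hmq, hgq]

section Plane2

variable {w n : E} (hww : ⟪w,w⟫ = 1) (hnn : ⟪n,n⟫ = 1) (hwn : ⟪w,n⟫ = 0)

include hww hnn hwn in
lemma coeffw {α β : ℝ} {z : E} (hz : z = α • w + β • n) : ⟪w,z⟫ = α := by
  rw [hz, inner_add_right, real_inner_smul_right, real_inner_smul_right, hww, hwn]; ring

include hww hnn hwn in
lemma coeffn {α β : ℝ} {z : E} (hz : z = α • w + β • n) : ⟪n,z⟫ = β := by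
  have hnw : ⟪n,w⟫ = 0 := by rw [real_inner_comm]; exact hwn
  rw [hz, inner_add_right, real_inner_smul_right, real_inner_smul_right, hnn, hnw]; ring

include hww hnn hwn in
lemma coeff_sq {A : E ≃ₗᵢ[ℝ] E} (hAw : A w = ⟪w, A w⟫ • w + ⟪n, A w⟫ • n) :
    ⟪w, A w⟫ ^ 2 + ⟪n, A w⟫ ^ 2 = 1 := by
  have h0 := A.inner_map_map w w
  rw [hww] at h0
  rw [← h0]
  conv_lhs => rw [sq, sq]
  rw [← inner_comb2 hww hnn hwn _ _ _ _, ← hAw]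

variable (hexp : ∀ z : E, z = ⟪w,z⟫ • w + ⟪n,z⟫ • n)

include hww hnn hwn hexp in
/-- a plane rotation-form with a nonzero fixed vector is the identity -/
lemma rot_fix_id {A : E ≃ₗᵢ[ℝ] E} {a b : ℝ} (hAw : A w = a • w + b • n)
    (hAn : A n = -b • w + a • n) {z : E} (hz0 : z ≠ 0) (hz : A z = z) :
    ∀ x, A x = x := by
  set α := ⟪w,z⟫ with hα
  set β := ⟪n,z⟫ with hβ
  have hzex : z = α • w + β • n := hexp z
  have hAz : A z = (a * α - b * β) • w + (b * α + a * β) • n := by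
    rw [hzex, map_add, map_smul, map_smul, hAw, hAn]
    match_scalars <;> ring
  have hc1 : a * α - b * β = α := by
    have := coeffw hww hnn hwn hAz
    rw [hz] at this; exact this.symm
  have hc2 : b * α + a * β = β := by
    have := coeffn hww hnn hwn hAz
    rw [hz] at this; exact this.symm
  have hαβ : ¬(α = 0 ∧ β = 0) := by
    rintro ⟨h1, h2⟩
    apply hz0
    rw [hzex, h1, h2, zero_smul, zero_smul, add_zero]
  have hkey : ((a-1)^2 + b^2) * (α^2 + β^2) = 0 := by nlinarith [hc1, hc2]
  have hab2 : (a-1)^2 + b^2 = 0 := by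
    rcases mul_eq_zero.mp hkey with h | h
    · exact h
    · obtain ⟨h1, h2⟩ := sumsq_eq_zero h
      exact absurd ⟨h1, h2⟩ hαβ
  obtain ⟨h1, h2⟩ := sumsq_eq_zero hab2
  have ha1 : a = 1 := by linarith [h1]
  have hb0 : b = 0 := h2
  intro x
  rw [hexp x, map_add, map_smul, map_smul, hAw, hAn, ha1, hb0]
  match_scalars <;> ring

include hww hnn hwn hexp in
/-- two plane rotation-forms commute -/
lemma comm2 {A B : E ≃ₗᵢ[ℝ] E} {a b p q : ℝ} (hAw : A w = a • w + b • n)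
    (hAn : A n = -b • w + a • n) (hBw : B w = p • w + q • n)
    (hBn : B n = -q • w + p • n) : ∀ x, A (B x) = B (A x) := by
  intro x
  rw [hexp x]
  simp only [map_add, map_smul, hAw, hAn, hBw, hBn, smul_add, smul_smul, neg_smul,
    map_neg, map_smul]
  match_scalars <;> ring

include hww hnn hwn hexp in
/-- a plane reflection-form is an involution -/
lemma refl_invol {C : E ≃ₗᵢ[ℝ] E} {X Y : ℝ} (hCw : C w = X • w + Y • n)
    (hCn : C n = Y • w + -X • n) (hXY : X ^ 2 + Y ^ 2 = 1) :
    ∀ x, C (C x) = x := by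
  intro x
  conv_rhs => rw [hexp x]
  conv_lhs => rw [hexp x]
  simp only [map_add, map_smul, hCw, hCn, smul_add, smul_smul, neg_smul, map_neg, map_smul]
  match_scalars
  · linear_combination ⟪w,x⟫ * hXY
  · linear_combination ⟪n,x⟫ * hXY

end Plane2

/-- The two-dimensional case. -/
theorem main_d2 (G : Subgroup (Euc 2 ≃ᵢ Euc 2)) (hfix : ∀ g ∈ G, ∃ x : Euc 2, g x = x) :
    ∃ x : Euc 2, ∀ g ∈ G, g x = x := by
  set w : Euc 2 := EuclideanSpace.single 0 1 with hwdef
  set n : Euc 2 := EuclideanSpace.single 1 1 with hndef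
  have hww : ⟪w,w⟫ = 1 := by
    simp [hwdef, EuclideanSpace.inner_single_left, EuclideanSpace.single_apply]
  have hnn : ⟪n,n⟫ = 1 := by
    simp [hndef, EuclideanSpace.inner_single_left, EuclideanSpace.single_apply]
  have hwn : ⟪w,n⟫ = 0 := by
    simp [hwdef, hndef, EuclideanSpace.inner_single_left, EuclideanSpace.single_apply]
  have hexp : ∀ z : Euc 2, z = ⟪w,z⟫ • w + ⟪n,z⟫ • n := by
    intro z
    have h0 : ⟪w,z⟫ = z 0 := by simp [hwdef, EuclideanSpace.inner_single_left]
    have h1 : ⟪n,z⟫ = z 1 := by simp [hndef, EuclideanSpace.inner_single_left]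
    rw [h0, h1]
    ext i
    fin_cases i <;>
      simp [hwdef, hndef, EuclideanSpace.single_apply, PiLp.add_apply, PiLp.smul_apply]
  have hnonzero : ∀ (α β : ℝ), ¬(α = 0 ∧ β = 0) → α • w + β • n ≠ 0 := by
    intro α β hαβ h0
    apply hαβ
    constructor
    · have h2 := coeffw hww hnn hwn (z := α • w + β • n) rfl
      rw [h0, inner_zero_right] at h2; exact h2.symm
    · have h2 := coeffn hww hnn hwn (z := α • w + β • n) rfl
      rw [h0, inner_zero_right] at h2; exact h2.symm
  by_cases hex : ∃ g ∈ G, (¬∀ x : Euc 2, g x = x) ∧ ∀ v : Euc 2, lp g v = v → v = 0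
  · -- a rotation with no fixed vector : its unique fixed point is global
    obtain ⟨g, hgG, hgne, hgno⟩ := hex
    have hgw : lp g w = ⟪w, lp g w⟫ • w + ⟪n, lp g w⟫ • n := hexp _
    have hgrot : lp g n = -⟪n, lp g w⟫ • w + ⟪w, lp g w⟫ • n := by
      rcases rotrefl hww hnn hwn (hexp _) (hexp _) with h | h
      · exact h
      · obtain ⟨α, β, hαβ, hfixv⟩ := refl_fixed hww hnn hwn (hexp _) h
        exact absurd (hgno _ hfixv) (hnonzero α β hαβ)
    obtain ⟨p, hp⟩ := hfix g hgG
    refine ⟨p, ?_⟩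
    intro h hhG
    have hhw : lp h w = ⟪w, lp h w⟫ • w + ⟪n, lp h w⟫ • n := hexp _
    rcases rotrefl hww hnn hwn (hexp _) (hexp _) with hrot | hrefl
    · -- h has rotation form : commutator argument
      have hcomm := comm2 hww hnn hwn hexp hgw hgrot hhw hrot
      set c := h * g * h⁻¹ * g⁻¹ with hc
      have hcG : c ∈ G := mul_mem (mul_mem (mul_mem hhG hgG) (inv_mem hhG)) (inv_mem hgG)
      have hclp : ∀ z, lp c z = z := by
        intro z
        have h1 : lp c z = lp h (lp g (lp h⁻¹ (lp g⁻¹ z))) := by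
          rw [hc, lp_mul, lp_mul, lp_mul]
        rw [h1, ← hcomm, lp_lp_inv, lp_lp_inv]
      have hcid : ∀ x, c x = x := id_of_lp_id (hfix c hcG) hclp
      have hcommpt : ∀ x, h (g x) = g (h x) := by
        intro x
        have h1 := hcid (g (h x))
        rw [hc] at h1
        simp only [IsometryEquiv.mul_apply, IsometryEquiv.inv_apply_self] at h1
        exact h1
      have hfixhp : g (h p) = h p := by rw [← hcommpt p, hp]
      exact fix_unique hgno hfixhp hp
    · -- h has reflection form
      have hq := coeff_sq hww hnn hwn (A := lp h) (hexp _)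
      have hBinvol := refl_invol hww hnn hwn hexp hhw hrefl hq
      have hBinv : ∀ y, lp h⁻¹ y = lp h y := by
        intro y
        calc lp h⁻¹ y = lp h⁻¹ (lp h (lp h y)) := by rw [hBinvol]
        _ = lp h y := lp_inv_lp h _
      set ag := ⟪w, lp g w⟫ with hagdef
      set bg := ⟪n, lp g w⟫ with hbgdef
      set ah := ⟪w, lp h w⟫ with hahdef
      set bh := ⟪n, lp h w⟫ with hbhdef
      have hCw : ((lp g).trans (lp h)) w
          = (ag * ah + bg * bh) • w + (ag * bh - bg * ah) • n := by
        rw [LinearIsometryEquiv.trans_apply]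
        conv_lhs => rw [hgw]
        rw [map_add, map_smul, map_smul, hhw, hrefl]
        match_scalars <;> ring
      have hCn : ((lp g).trans (lp h)) n
          = (ag * bh - bg * ah) • w + -(ag * ah + bg * bh) • n := by
        rw [LinearIsometryEquiv.trans_apply]
        conv_lhs => rw [hgrot]
        rw [map_add, map_smul, map_smul, hhw, hrefl]
        match_scalars <;> ring
      have hXY : (ag * ah + bg * bh) ^ 2 + (ag * bh - bg * ah) ^ 2 = 1 := by
        have hag2 := coeff_sq hww hnn hwn (A := lp g) (hexp _)
        rw [← hagdef, ← hbgdef] at hag2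
        linear_combination (ah ^ 2 + bh ^ 2) * hag2 + hq
      have hCC := refl_invol hww hnn hwn hexp hCw hCn hXY
      set c' := h * g * h⁻¹ * g with hc'
      have hc'G : c' ∈ G := mul_mem (mul_mem (mul_mem hhG hgG) (inv_mem hhG)) hgG
      have hc'lp : ∀ z, lp c' z = z := by
        intro z
        have h1 : lp c' z = lp h (lp g (lp h⁻¹ (lp g z))) := by
          rw [hc', lp_mul, lp_mul, lp_mul]
        rw [h1, hBinv]
        have h2 := hCC z
        simpa [LinearIsometryEquiv.trans_apply] using h2
      have hc'id : ∀ x, c' x = x := id_of_lp_id (hfix c' hc'G) hc'lp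
      have h1 := hc'id (g⁻¹ (h p))
      rw [hc'] at h1
      simp only [IsometryEquiv.mul_apply, IsometryEquiv.apply_inv_self,
        IsometryEquiv.inv_apply_self, hp] at h1
      -- h1 : h p = g⁻¹ (h p)
      have h2 : g (h p) = h p := by
        conv_lhs => rw [h1]
        exact IsometryEquiv.apply_inv_self g (h p)
      exact fix_unique hgno h2 hp
  · -- every nontrivial element has a reflection form
    by_cases htrivG : ∀ g ∈ G, ∀ x : Euc 2, g x = x
    · exact ⟨0, fun g hg => htrivG g hg 0⟩
    push_neg at htrivG
    obtain ⟨g₁, hg₁G, x', hx'⟩ := htrivG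
    have hg₁ne : ¬∀ x, g₁ x = x := fun hh => hx' (hh x')
    have hrefl_form : ∀ g ∈ G, (¬∀ x : Euc 2, g x = x) →
        lp g n = ⟪n, lp g w⟫ • w + -⟪w, lp g w⟫ • n := by
      intro g hgG hgne
      rcases rotrefl hww hnn hwn (hexp (lp g w)) (hexp (lp g n)) with h | h
      · have hvex : ∃ v : Euc 2, lp g v = v ∧ v ≠ 0 := by
          by_contra hno
          push_neg at hno
          exact hex ⟨g, hgG, hgne, fun v hv => hno v hv⟩
        obtain ⟨v, hv, hv0⟩ := hvex
        have hid := rot_fix_id hww hnn hwn hexp (hexp (lp g w)) h hv0 hv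
        exact absurd (id_of_lp_id (hfix g hgG) hid) hgne
      · exact h
    obtain ⟨p, hp⟩ := hfix g₁ hg₁G
    refine ⟨p, ?_⟩
    intro h hhG
    by_cases hhne : ∀ x, h x = x
    · exact hhne p
    have hg₁r := hrefl_form g₁ hg₁G hg₁ne
    have hhr := hrefl_form h hhG hhne
    have hAw : lp g₁ w = ⟪w, lp g₁ w⟫ • w + ⟪n, lp g₁ w⟫ • n := hexp _
    have hBw : lp h w = ⟪w, lp h w⟫ • w + ⟪n, lp h w⟫ • n := hexp _
    set ag := ⟪w, lp g₁ w⟫ with hagdef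
    set bg := ⟪n, lp g₁ w⟫ with hbgdef
    set ah := ⟪w, lp h w⟫ with hahdef
    set bh := ⟪n, lp h w⟫ with hbhdef
    have hCw : ((lp h).trans (lp g₁)) w
        = (ah * ag + bh * bg) • w + (ah * bg - bh * ag) • n := by
      rw [LinearIsometryEquiv.trans_apply]
      conv_lhs => rw [hBw]
      rw [map_add, map_smul, map_smul, hAw, hg₁r]
      match_scalars <;> ring
    have hCn : ((lp h).trans (lp g₁)) n
        = -(ah * bg - bh * ag) • w + (ah * ag + bh * bg) • n := by
      rw [LinearIsometryEquiv.trans_apply]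
      conv_lhs => rw [hhr]
      rw [map_add, map_smul, map_smul, hAw, hg₁r]
      match_scalars <;> ring
    have hm : ∀ x, (g₁ * h) x = x := by
      by_contra hmne
      have hvex : ∃ v : Euc 2, lp (g₁ * h) v = v ∧ v ≠ 0 := by
        by_contra hno
        push_neg at hno
        exact hex ⟨g₁ * h, mul_mem hg₁G hhG, hmne, fun v hv => hno v hv⟩
      obtain ⟨v, hv, hv0⟩ := hvex
      have hvC : ((lp h).trans (lp g₁)) v = v := by
        rw [LinearIsometryEquiv.trans_apply, ← lp_mul]
        exact hv
      have hCid := rot_fix_id hww hnn hwn hexp hCw hCn hv0 hvC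
      apply hmne
      apply id_of_lp_id (hfix _ (mul_mem hg₁G hhG))
      intro z
      rw [lp_mul]
      have h2 := hCid z
      rwa [LinearIsometryEquiv.trans_apply] at h2
    have hinv : h p = g₁⁻¹ p := by
      have h2 := hm p
      rw [IsometryEquiv.mul_apply] at h2
      calc h p = g₁⁻¹ (g₁ (h p)) := (IsometryEquiv.inv_apply_self g₁ (h p)).symm
      _ = g₁⁻¹ p := by rw [h2]
    rw [hinv]
    calc g₁⁻¹ p = g₁⁻¹ (g₁ p) := by rw [hp]
    _ = p := IsometryEquiv.inv_apply_self g₁ p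

end GFP


/-- For `d ∈ {2,3}`, a subgroup of `Isom(ℝᵈ)` all of whose elements have a
fixed point has a global fixed point. -/
theorem global_fixed_point_euclidean_dim_two_three (d : ℕ) (hd : d = 2 ∨ d = 3)
    (G : Subgroup (EuclideanSpace ℝ (Fin d) ≃ᵢ EuclideanSpace ℝ (Fin d)))
    (hfix : ∀ g ∈ G, ∃ x : EuclideanSpace ℝ (Fin d), g x = x) :
    ∃ x : EuclideanSpace ℝ (Fin d), ∀ g ∈ G, g x = x := by
  rcases hd with rfl | rfl
  · exact GFP.main_d2 G hfix
  · exact GFP.main_d3 G hfix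
end

section
/- Let d ≥ 1 and let S be a finite set of isometries of Euclidean space ℝᵈ. Then the following are equivalent: (1) L(S) = 0; (2) ℓ(S) = 0; (3) S has a common fixed point, i.e. there exists x ∈ ℝᵈ with s·x = x for all s ∈ S. -/
open Pointwise Filter

/-! ### Auxiliary development for Statement 17.

`ℓ(S) = 0` implies that the orbit of `0` under the semigroup generated by `S`
grows sublinearly; a "return and harvest" argument using compactness of the closure of
the set of linear parts shows that a sublinear orbit is in fact bounded; a bounded
orbit yields a common fixed point via the Chebyshev center. -/

open RealInnerProductSpace

namespace JDAux

set_option linter.unusedSectionVars false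
set_option maxHeartbeats 1000000

variable {E : Type*} [NormedAddCommGroup E] [InnerProductSpace ℝ E] [FiniteDimensional ℝ E]

/-- linear part of an isometry of a real normed space (Mazur–Ulam) -/
noncomputable def lam (g : E ≃ᵢ E) : E →L[ℝ] E :=
  (g.toRealLinearIsometryEquiv.toLinearIsometry).toContinuousLinearMap

lemma lam_apply (g : E ≃ᵢ E) (x : E) : lam g x = g x - g 0 := by
  simp [lam]

lemma norm_lam_apply (g : E ≃ᵢ E) (x : E) : ‖lam g x‖ = ‖x‖ := by
  rw [lam_apply, ← dist_eq_norm, g.dist_eq, dist_eq_norm, sub_zero]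

lemma apply_eq_lam (g : E ≃ᵢ E) (x : E) : g x = lam g x + g 0 := by
  rw [lam_apply]; abel

lemma lam_one : lam (1 : E ≃ᵢ E) = ContinuousLinearMap.id ℝ E := by
  ext x; simp [lam_apply]

lemma lam_mul (g h : E ≃ᵢ E) : lam (g * h) = (lam g).comp (lam h) := by
  ext x
  have h1 : (g * h) x = g (h x) := rfl
  have h2 : (g * h) 0 = g (h 0) := rfl
  simp only [ContinuousLinearMap.comp_apply, lam_apply, h1, h2, map_sub (lam g)]
  abel

lemma lam_mul' (g h : E ≃ᵢ E) : lam (g * h) = lam g * lam h := by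
  rw [lam_mul, ContinuousLinearMap.mul_def]

lemma norm_lam_comp (g : E ≃ᵢ E) (C : E →L[ℝ] E) : ‖(lam g).comp C‖ = ‖C‖ := by
  apply le_antisymm
  · apply ContinuousLinearMap.opNorm_le_bound _ (norm_nonneg C)
    intro x
    rw [ContinuousLinearMap.comp_apply, norm_lam_apply]
    exact C.le_opNorm x
  · apply ContinuousLinearMap.opNorm_le_bound _ (norm_nonneg _)
    intro x
    calc ‖C x‖ = ‖(lam g).comp C x‖ := by rw [ContinuousLinearMap.comp_apply, norm_lam_apply]
    _ ≤ ‖(lam g).comp C‖ * ‖x‖ := ((lam g).comp C).le_opNorm x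

lemma norm_lam_le (g : E ≃ᵢ E) : ‖lam g‖ ≤ 1 := by
  apply ContinuousLinearMap.opNorm_le_bound _ zero_le_one
  intro x; rw [norm_lam_apply, one_mul]

lemma lam_pow (g : E ≃ᵢ E) (k : ℕ) : lam (g ^ k) = (lam g) ^ k := by
  induction k with
  | zero => rw [pow_zero, pow_zero, lam_one]; rfl
  | succ k ih => rw [pow_succ, pow_succ, lam_mul', ih]

lemma norm_lam_mul_sub (g : E ≃ᵢ E) (C D : E →L[ℝ] E) :
    ‖lam g * C - lam g * D‖ = ‖C - D‖ := by
  rw [show lam g * C - lam g * D = (lam g).comp (C - D) by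
    rw [ContinuousLinearMap.comp_sub]; rfl]
  exact norm_lam_comp g _

/-- words over `S` -/
def IsWord (S : Set (E ≃ᵢ E)) (l : List (E ≃ᵢ E)) : Prop := ∀ g ∈ l, g ∈ S

variable {S : Set (E ≃ᵢ E)}

lemma isWord_nil : IsWord S [] := by intro g hg; simp at hg

lemma isWord_append {l₁ l₂ : List (E ≃ᵢ E)} (h₁ : IsWord S l₁) (h₂ : IsWord S l₂) :
    IsWord S (l₁ ++ l₂) := by
  intro g hg
  rcases List.mem_append.1 hg with h | h
  exacts [h₁ g h, h₂ g h]

lemma isWord_flatten {L : List (List (E ≃ᵢ E))} (h : ∀ l ∈ L, IsWord S l) :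
    IsWord S L.flatten := by
  intro g hg
  rcases List.mem_flatten.1 hg with ⟨l, hl, hgl⟩
  exact h l hl g hgl

lemma list_prod_mem_pow {l : List (E ≃ᵢ E)} (h : IsWord S l) :
    l.prod ∈ S ^ l.length := by
  induction l with
  | nil => simp [Set.mem_one]
  | cons g l ih =>
      rw [List.prod_cons, List.length_cons, pow_succ']
      exact Set.mul_mem_mul (h g List.mem_cons_self)
        (ih fun x hx => h x (List.mem_cons_of_mem _ hx))

/-- orbit point of a word -/
noncomputable def T (l : List (E ≃ᵢ E)) : E := l.prod 0

/-- linear part of a word -/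
noncomputable def Lm (l : List (E ≃ᵢ E)) : E →L[ℝ] E := lam l.prod

lemma T_nil : T ([] : List (E ≃ᵢ E)) = 0 := rfl

lemma T_append (l₁ l₂ : List (E ≃ᵢ E)) : T (l₁ ++ l₂) = Lm l₁ (T l₂) + T l₁ := by
  unfold T Lm
  rw [List.prod_append]
  have : (l₁.prod * l₂.prod) 0 = l₁.prod (l₂.prod 0) := rfl
  rw [this, apply_eq_lam l₁.prod (l₂.prod 0)]

/-- closure of the set of linear parts of words -/
def KK (S : Set (E ≃ᵢ E)) : Set (E →L[ℝ] E) := closure {A | ∃ l, IsWord S l ∧ Lm l = A}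

lemma isCompact_KK : IsCompact (KK S) := by
  have hsub : KK S ⊆ Metric.closedBall (0 : E →L[ℝ] E) 1 := by
    apply closure_minimal _ Metric.isClosed_closedBall
    rintro A ⟨l, -, rfl⟩
    simpa [Lm, Metric.mem_closedBall, dist_eq_norm] using norm_lam_le (l.prod)
  exact (isCompact_closedBall _ _).of_isClosed_subset isClosed_closure hsub

lemma inv_mem_KK {l : List (E ≃ᵢ E)} (hl : IsWord S l) :
    lam (l.prod)⁻¹ ∈ KK S := by
  set A := lam l.prod with hA
  have hpow : ∀ k : ℕ, ∃ lk : List (E ≃ᵢ E), IsWord S lk ∧ Lm lk = A ^ k := by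
    intro k
    refine ⟨(List.replicate k l).flatten, isWord_flatten ?_, ?_⟩
    · intro l' hl'
      rw [List.eq_of_mem_replicate hl']
      exact hl
    · unfold Lm
      rw [List.prod_flatten, List.map_replicate, List.prod_replicate, lam_pow]
  have hmem : ∀ k : ℕ, A ^ (k + 1) ∈ KK S := by
    intro k
    obtain ⟨lk, hw, hLm⟩ := hpow (k + 1)
    exact subset_closure ⟨lk, hw, hLm⟩
  obtain ⟨b, -, φ, hφ, htend⟩ := isCompact_KK.tendsto_subseq (x := fun k => A ^ (k + 1)) hmem
  show lam (l.prod)⁻¹ ∈ closure {A | ∃ l, IsWord S l ∧ Lm l = A}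
  rw [Metric.mem_closure_iff]
  intro ε hε
  have hc : Tendsto (fun k => dist (A ^ (φ k + 1)) (A ^ (φ (k + 1) + 1))) atTop (nhds 0) := by
    have h1 : Tendsto (fun k => A ^ (φ k + 1)) atTop (nhds b) := htend
    have h2 : Tendsto (fun k => A ^ (φ (k + 1) + 1)) atTop (nhds b) :=
      h1.comp (tendsto_add_atTop_nat 1)
    simpa [dist_self] using (h1.dist h2)
  obtain ⟨k, hk⟩ := (hc.eventually_lt_const hε).exists
  set q : ℕ := φ (k + 1) - φ k with hqdef
  have hq1 : 1 ≤ q := by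
    have h := hφ (show k < k + 1 by omega)
    omega
  have hsplit : φ (k + 1) + 1 = (φ k + 1) + q := by omega
  have key : dist (A ^ (φ k + 1)) (A ^ (φ (k + 1) + 1)) = ‖(1 : E →L[ℝ] E) - A ^ q‖ := by
    rw [dist_eq_norm,
      show A ^ (φ (k + 1) + 1) = A ^ (φ k + 1) * A ^ q by rw [hsplit, pow_add]]
    have h1 : A ^ (φ k + 1) = lam ((l.prod) ^ (φ k + 1)) := (lam_pow _ _).symm
    calc ‖A ^ (φ k + 1) - A ^ (φ k + 1) * A ^ q‖
        = ‖lam ((l.prod) ^ (φ k + 1)) * 1 - lam ((l.prod) ^ (φ k + 1)) * A ^ q‖ := by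
          rw [mul_one, ← h1]
      _ = ‖(1 : E →L[ℝ] E) - A ^ q‖ := norm_lam_mul_sub _ _ _
  have key2 : ‖lam (l.prod)⁻¹ - A ^ (q - 1)‖ = ‖(1 : E →L[ℝ] E) - A ^ q‖ := by
    calc ‖lam (l.prod)⁻¹ - A ^ (q - 1)‖
        = ‖lam l.prod * lam (l.prod)⁻¹ - lam l.prod * A ^ (q - 1)‖ :=
          (norm_lam_mul_sub _ _ _).symm
      _ = ‖(1 : E →L[ℝ] E) - A ^ q‖ := by
          rw [← lam_mul', mul_inv_cancel, lam_one]
          have : lam l.prod * A ^ (q - 1) = A ^ q := by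
            rw [hA, ← pow_succ']
            congr 1
            omega
          rw [this]
          rfl
  obtain ⟨lk, hwk, hLmk⟩ := hpow (q - 1)
  refine ⟨Lm lk, ⟨lk, hwk, rfl⟩, ?_⟩
  rw [dist_eq_norm, hLmk, key2, ← key]
  exact hk

lemma net_exists (S : Set (E ≃ᵢ E)) :
    ∃ Vl : List (List (E ≃ᵢ E)), (∀ v ∈ Vl, IsWord S v) ∧
      ∀ B ∈ KK S, ∃ v ∈ Vl, ‖B - Lm v‖ < 1/4 := by
  classical
  obtain ⟨t, hts, htfin, hcover⟩ :=
    (isCompact_KK (S := S)).finite_cover_balls (e := 1/8) (by norm_num)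
  set pick : (E →L[ℝ] E) → List (E ≃ᵢ E) := fun x =>
    if h : ∃ l, IsWord S l ∧ dist x (Lm l) < 1/8 then h.choose else [] with hpick
  refine ⟨htfin.toFinset.toList.map pick, ?_, ?_⟩
  · intro v hv
    rcases List.mem_map.1 hv with ⟨x, -, rfl⟩
    by_cases h : ∃ l, IsWord S l ∧ dist x (Lm l) < 1/8
    · simp only [pick, dif_pos h]; exact h.choose_spec.1
    · simp only [pick, dif_neg h]; exact isWord_nil
  · intro B hB
    obtain ⟨x, hxt, hball⟩ := Set.mem_iUnion₂.1 (hcover hB)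
    have hxK : x ∈ KK S := hts hxt
    have hx : ∃ l, IsWord S l ∧ dist x (Lm l) < 1/8 := by
      have := Metric.mem_closure_iff.1 hxK (1/8) (by norm_num)
      obtain ⟨y, ⟨l, hw, rfl⟩, hy⟩ := this
      exact ⟨l, hw, hy⟩
    refine ⟨pick x, List.mem_map.2 ⟨x, by simp [Set.Finite.mem_toFinset, hxt], rfl⟩, ?_⟩
    have h1 : dist x (Lm (pick x)) < 1/8 := by
      simp only [pick, dif_pos hx]
      exact hx.choose_spec.2
    have h2 : dist B x < 1/8 := Metric.mem_ball.1 hball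
    calc ‖B - Lm (pick x)‖ = dist B (Lm (pick x)) := (dist_eq_norm _ _).symm
      _ ≤ dist B x + dist x (Lm (pick x)) := dist_triangle _ _ _
      _ < 1/4 := by linarith

lemma escape_direction
    (hunb : ∀ R : ℝ, ∃ l, IsWord S l ∧ R < ‖T l‖) :
    ∃ e : E, ‖e‖ = 1 ∧ ∀ M : ℝ, ∃ l, IsWord S l ∧ M ≤ ⟪e, T l⟫ ∧
      (3/4) * ‖T l‖ ≤ ⟪e, T l⟫ := by
  classical
  have hch : ∀ j : ℕ, ∃ l, IsWord S l ∧ (j : ℝ) + 1 < ‖T l‖ := fun j => hunb _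
  choose ls hws hns using hch
  have hpos : ∀ j, (0:ℝ) < ‖T (ls j)‖ := fun j => lt_of_le_of_lt (by positivity) (hns j)
  set u : ℕ → E := fun j => ‖T (ls j)‖⁻¹ • T (ls j) with hu
  have husph : ∀ j, u j ∈ Metric.sphere (0 : E) 1 := by
    intro j
    simp only [u, Metric.mem_sphere, dist_zero_right, norm_smul, norm_inv, norm_norm]
    field_simp
    exact div_self (ne_of_gt (hpos j))
  obtain ⟨e, hesph, φ, hφ, htend⟩ := (isCompact_sphere (0:E) 1).tendsto_subseq husph
  have hen : ‖e‖ = 1 := by simpa [Metric.mem_sphere, dist_zero_right] using hesph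
  refine ⟨e, hen, ?_⟩
  intro M
  obtain ⟨N, hN⟩ := exists_nat_ge ((4/3) * M)
  have hev : ∀ᶠ k in atTop, dist (u (φ k)) e < 1/2 :=
    htend.eventually (Metric.ball_mem_nhds e (by norm_num))
  obtain ⟨k, hk1, hk2⟩ := (hev.and (eventually_ge_atTop N)).exists
  set j := φ k with hj
  have hjk : N ≤ j := le_trans hk2 (hφ.le_apply)
  refine ⟨ls j, hws j, ?_, ?_⟩
  · have hinner : (7/8 : ℝ) ≤ ⟪e, u j⟫ := by
      have huj : ‖u j‖ = 1 := by
        have := husph j; simpa [Metric.mem_sphere, dist_zero_right] using this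
      have hsq : ‖e - u j‖^2 = ‖e‖^2 - 2 * ⟪e, u j⟫ + ‖u j‖^2 := norm_sub_sq_real e (u j)
      have hlt : ‖e - u j‖ < 1/2 := by
        rw [← dist_eq_norm, dist_comm]; exact hk1
      nlinarith [norm_nonneg (e - u j)]
    have hTu : ⟪e, T (ls j)⟫ = ‖T (ls j)‖ * ⟪e, u j⟫ := by
      rw [hu]
      simp only [real_inner_smul_right]
      rw [← mul_assoc, mul_inv_cancel₀ (ne_of_gt (hpos j)), one_mul]
    rw [hTu]
    calc M ≤ (3/4) * ((j:ℝ) + 1) := by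
          have : (4/3 : ℝ) * M ≤ (j:ℝ) := le_trans hN (by exact_mod_cast hjk)
          linarith
      _ ≤ (3/4) * ‖T (ls j)‖ := by nlinarith [hns j]
      _ ≤ ‖T (ls j)‖ * ⟪e, u j⟫ := by nlinarith [hpos j]
  · have hinner : (7/8 : ℝ) ≤ ⟪e, u j⟫ := by
      have huj : ‖u j‖ = 1 := by
        have := husph j; simpa [Metric.mem_sphere, dist_zero_right] using this
      have hsq : ‖e - u j‖^2 = ‖e‖^2 - 2 * ⟪e, u j⟫ + ‖u j‖^2 := norm_sub_sq_real e (u j)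
      have hlt : ‖e - u j‖ < 1/2 := by
        rw [← dist_eq_norm, dist_comm]; exact hk1
      nlinarith [norm_nonneg (e - u j)]
    have hTu : ⟪e, T (ls j)⟫ = ‖T (ls j)‖ * ⟪e, u j⟫ := by
      rw [hu]
      simp only [real_inner_smul_right]
      rw [← mul_assoc, mul_inv_cancel₀ (ne_of_gt (hpos j)), one_mul]
    rw [hTu]
    nlinarith [hpos j]

theorem bounded_orbit_of_sublinear {S : Set (E ≃ᵢ E)}
    (H : ∀ ε : ℝ, 0 < ε → ∃ C : ℝ, ∀ l, IsWord S l → ‖T l‖ ≤ ε * l.length + C) :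
    ∃ R : ℝ, ∀ l, IsWord S l → ‖T l‖ ≤ R := by
  by_contra hcon
  push_neg at hcon
  have hunb : ∀ R : ℝ, ∃ l, IsWord S l ∧ R < ‖T l‖ := by
    intro R
    obtain ⟨l, hw, hl⟩ := hcon R
    exact ⟨l, hw, hl⟩
  obtain ⟨e, hen, hesc⟩ := escape_direction hunb
  obtain ⟨Vl, hVw, hVnet⟩ := net_exists S
  set CV : ℝ := (Vl.map fun v => ‖T v‖).sum with hCVdef
  have hCVnn : 0 ≤ CV := List.sum_nonneg (by
    intro x hx
    rcases List.mem_map.1 hx with ⟨v, -, rfl⟩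
    exact norm_nonneg _)
  have hCV : ∀ v ∈ Vl, ‖T v‖ ≤ CV := by
    intro v hv
    exact List.single_le_sum (by
      intro x hx
      rcases List.mem_map.1 hx with ⟨v', -, rfl⟩
      exact norm_nonneg _) _ (List.mem_map.2 ⟨v, hv, rfl⟩)
  set LV : ℕ := (Vl.map List.length).sum with hLVdef
  have hLV : ∀ v ∈ Vl, v.length ≤ LV :=
    fun v hv => List.single_le_sum (fun _ _ => Nat.zero_le _) _ (List.mem_map.2 ⟨v, hv, rfl⟩)
  obtain ⟨us, husw, hus1, hus2⟩ := hesc (3 * (1 + CV))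
  set ms : ℝ := ⟪e, T us⟫ with hmsdef
  have hmspos : 0 < ms := lt_of_lt_of_le (by linarith) hus1
  set Q : ℕ := LV + us.length + 1 with hQdef
  have hQpos : 0 < (Q:ℝ) := by positivity
  -- main induction: words with linear gain
  have main : ∀ m : ℕ, ∃ l, IsWord S l ∧ l.length ≤ m * Q ∧ (m : ℝ) ≤ ⟪e, T l⟫ := by
    intro m
    induction m with
    | zero => exact ⟨[], isWord_nil, by simp, by simp [T_nil]⟩
    | succ m ih =>
        obtain ⟨l, hw, hlen, hin⟩ := ih
        obtain ⟨v, hvVl, hvnorm⟩ := hVnet (lam (l.prod)⁻¹) (inv_mem_KK hw)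
        have hvw : IsWord S v := hVw v hvVl
        -- near identity
        have hnear : ‖Lm (l ++ v) - ContinuousLinearMap.id ℝ E‖ < 1/4 := by
          have h1 : Lm (l ++ v) = lam l.prod * Lm v := by
            unfold Lm
            rw [List.prod_append, lam_mul']
          have h2 : (ContinuousLinearMap.id ℝ E : E →L[ℝ] E) =
              lam l.prod * lam (l.prod)⁻¹ := by
            rw [← lam_mul', mul_inv_cancel, lam_one]
          rw [h1, h2, norm_lam_mul_sub, ← norm_sub_rev]
          exact hvnorm
        refine ⟨(l ++ v) ++ us, isWord_append (isWord_append hw hvw) husw, ?_, ?_⟩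
        · -- length
          simp only [List.length_append]
          have h1 := hLV v hvVl
          calc l.length + v.length + us.length ≤ m * Q + LV + us.length := by omega
            _ ≤ (m + 1) * Q := by
                rw [hQdef]; ring_nf; omega
        · -- gain
          have hT1 : T ((l ++ v) ++ us) = Lm (l ++ v) (T us) + (Lm l (T v) + T l) := by
            rw [T_append, T_append]
          have hbound1 : ms - (1/4) * ‖T us‖ ≤ ⟪e, Lm (l ++ v) (T us)⟫ := by
            have hdecomp : Lm (l ++ v) (T us) =
                T us + (Lm (l ++ v) - ContinuousLinearMap.id ℝ E) (T us) := by
              simp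
            rw [hdecomp, inner_add_right]
            have habs : |⟪e, (Lm (l ++ v) - ContinuousLinearMap.id ℝ E) (T us)⟫| ≤
                (1/4) * ‖T us‖ := by
              calc |⟪e, (Lm (l ++ v) - ContinuousLinearMap.id ℝ E) (T us)⟫|
                  ≤ ‖e‖ * ‖(Lm (l ++ v) - ContinuousLinearMap.id ℝ E) (T us)‖ :=
                    abs_real_inner_le_norm _ _
                _ = ‖(Lm (l ++ v) - ContinuousLinearMap.id ℝ E) (T us)‖ := by
                    rw [hen, one_mul]
                _ ≤ ‖Lm (l ++ v) - ContinuousLinearMap.id ℝ E‖ * ‖T us‖ :=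
                    ContinuousLinearMap.le_opNorm _ _
                _ ≤ (1/4) * ‖T us‖ :=
                    mul_le_mul_of_nonneg_right (le_of_lt hnear) (norm_nonneg _)
            have := abs_le.1 habs
            linarith
          have hbound2 : -CV ≤ ⟪e, Lm l (T v)⟫ := by
            have habs : |⟪e, Lm l (T v)⟫| ≤ CV := by
              calc |⟪e, Lm l (T v)⟫| ≤ ‖e‖ * ‖Lm l (T v)‖ := abs_real_inner_le_norm _ _
                _ = ‖T v‖ := by rw [hen, one_mul]; exact norm_lam_apply _ _
                _ ≤ CV := hCV v hvVl
            linarith [abs_le.1 habs]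
          have hquarter : (1/4) * ‖T us‖ ≤ (1/3) * ms := by
            rw [hmsdef]; nlinarith [hus2]
          rw [hT1, inner_add_right, inner_add_right]
          push_cast
          have : 2 * (1 + CV) ≤ (2/3) * ms := by linarith [hus1]
          linarith
  -- contradiction with sublinearity
  obtain ⟨C, hC⟩ := H (1 / (2 * Q)) (by positivity)
  obtain ⟨m, hm⟩ := exists_nat_gt (2 * (C + 1))
  obtain ⟨l, hw, hlen, hin⟩ := main m
  have h1 : ‖T l‖ ≤ (1 / (2 * Q)) * l.length + C := hC l hw
  have h2 : (m : ℝ) ≤ ‖T l‖ := by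
    calc (m:ℝ) ≤ ⟪e, T l⟫ := hin
      _ ≤ ‖e‖ * ‖T l‖ := real_inner_le_norm _ _
      _ = ‖T l‖ := by rw [hen, one_mul]
  have h3 : (l.length : ℝ) ≤ (m : ℝ) * Q := by exact_mod_cast hlen
  have h4 : (1 / (2 * Q)) * (l.length : ℝ) ≤ (m : ℝ) / 2 := by
    have hq2 : (0:ℝ) < 2 * Q := by positivity
    rw [div_mul_eq_mul_div, one_mul, div_le_div_iff₀ hq2 (by norm_num : (0:ℝ) < 2)]
    calc (l.length : ℝ) * 2 ≤ ((m:ℝ) * Q) * 2 := by linarith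
      _ = (m:ℝ) * (2 * Q) := by ring
  linarith

lemma midpoint_dist_sq (c c' a : E) :
    dist (midpoint ℝ c c') a ^ 2
      = dist c a ^ 2 / 2 + dist c' a ^ 2 / 2 - dist c c' ^ 2 / 4 := by
  have hpar := parallelogram_law_with_norm ℝ (c - a) (c' - a)
  have h2 : (2:ℝ) • (midpoint ℝ c c' - a) = (c - a) + (c' - a) := by
    have hm := midpoint_add_self ℝ c c'
    rw [smul_sub, two_smul, two_smul, hm]
    abel
  have hn : (2:ℝ) * ‖midpoint ℝ c c' - a‖ = ‖(c - a) + (c' - a)‖ := by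
    rw [← h2, norm_smul]
    norm_num
  have hd : (c - a) - (c' - a) = c - c' := by abel
  rw [hd] at hpar
  simp only [dist_eq_norm]
  nlinarith [norm_nonneg (midpoint ℝ c c' - a)]

theorem fixed_point_of_bounded_orbit {S : Set (E ≃ᵢ E)}
    (hbdd : ∃ R : ℝ, ∀ l, IsWord S l → ‖T l‖ ≤ R) :
    ∃ x : E, ∀ s ∈ S, s x = x := by
  classical
  obtain ⟨R, hR⟩ := hbdd
  set Orb : Set E := {y | ∃ l, IsWord S l ∧ T l = y} with hOrbdef
  set A : Set E := closure Orb with hAdef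
  have hOrb0 : (0:E) ∈ Orb := ⟨[], isWord_nil, rfl⟩
  have hA0 : (0:E) ∈ A := subset_closure hOrb0
  have hAne : A.Nonempty := ⟨0, hA0⟩
  have hAsub : A ⊆ Metric.closedBall (0:E) R := by
    apply closure_minimal _ Metric.isClosed_closedBall
    rintro y ⟨l, hw, rfl⟩
    simpa [Metric.mem_closedBall, dist_zero_right] using hR l hw
  -- forward invariance
  have hstepOrb : ∀ s ∈ S, ∀ y ∈ Orb, s y ∈ Orb := by
    rintro s hs y ⟨l, hw, rfl⟩
    refine ⟨s :: l, ?_, ?_⟩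
    · intro g hg
      rcases List.mem_cons.1 hg with rfl | hg
      exacts [hs, hw g hg]
    · show (s :: l).prod 0 = s (T l)
      rw [List.prod_cons]
      rfl
  have hstepA : ∀ s ∈ S, s '' A ⊆ A := by
    intro s hs
    calc s '' A = s '' closure Orb := rfl
      _ ⊆ closure (s '' Orb) := image_closure_subset_closure_image s.continuous
      _ ⊆ closure Orb := closure_mono (by
          rintro y ⟨z, hz, rfl⟩
          exact hstepOrb s hs z hz)
  -- powers stay in the orbit
  have hpowOrb : ∀ s ∈ S, ∀ y ∈ Orb, ∀ k : ℕ, (s ^ k) y ∈ Orb := by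
    rintro s hs y ⟨l, hw, rfl⟩ k
    refine ⟨List.replicate k s ++ l, ?_, ?_⟩
    · intro g hg
      rcases List.mem_append.1 hg with hg | hg
      · rw [List.eq_of_mem_replicate hg]; exact hs
      · exact hw g hg
    · show (List.replicate k s ++ l).prod 0 = (s ^ k) (T l)
      rw [List.prod_append, List.prod_replicate]
      rfl
  -- backward invariance
  have hsymmOrb : ∀ s ∈ S, ∀ y ∈ Orb, s.symm y ∈ A := by
    intro s hs y hy
    have hmem : ∀ k : ℕ, (s ^ (k+1)) y ∈ A := fun k => subset_closure (hpowOrb s hs y hy _)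
    have hcomp : IsCompact A :=
      (isCompact_closedBall _ _).of_isClosed_subset isClosed_closure hAsub
    obtain ⟨b, -, φ, hφ, htend⟩ := hcomp.tendsto_subseq (x := fun k => (s ^ (k+1)) y) hmem
    rw [hAdef, Metric.mem_closure_iff]
    intro ε hε
    have hc : Tendsto (fun k => dist ((s ^ (φ k + 1)) y) ((s ^ (φ (k+1) + 1)) y)) atTop (nhds 0) := by
      have h1 : Tendsto (fun k => (s ^ (φ k + 1)) y) atTop (nhds b) := htend
      have h2 : Tendsto (fun k => (s ^ (φ (k+1) + 1)) y) atTop (nhds b) :=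
        h1.comp (tendsto_add_atTop_nat 1)
      simpa [dist_self] using (h1.dist h2)
    obtain ⟨k, hk⟩ := (hc.eventually_lt_const hε).exists
    set q : ℕ := φ (k+1) - φ k with hqdef
    have hq1 : 1 ≤ q := by
      have h := hφ (show k < k + 1 by omega)
      omega
    have hsplit : φ (k+1) + 1 = (φ k + 1) + q := by omega
    have hkey : dist ((s ^ (φ k + 1)) y) ((s ^ (φ (k+1) + 1)) y) = dist y ((s ^ q) y) := by
      rw [show (s ^ (φ (k+1) + 1)) = s ^ (φ k + 1) * s ^ q by rw [hsplit, pow_add]]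
      simp only [IsometryEquiv.mul_apply]
      rw [IsometryEquiv.dist_eq]
    have hkey2 : dist (s.symm y) ((s ^ (q - 1)) y) = dist y ((s ^ q) y) := by
      have : dist (s.symm y) ((s ^ (q-1)) y) = dist (s (s.symm y)) (s ((s ^ (q-1)) y)) := by
        rw [IsometryEquiv.dist_eq]
      rw [this, IsometryEquiv.apply_symm_apply]
      congr 1
      rw [show s ((s ^ (q-1)) y) = (s * s ^ (q-1)) y from rfl, ← pow_succ']
      congr 2
      omega
    refine ⟨(s ^ (q-1)) y, hpowOrb s hs y hy _, ?_⟩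
    rw [hkey2, ← hkey]
    exact hk
  have hsymmA : ∀ s ∈ S, s.symm '' A ⊆ A := by
    intro s hs
    calc s.symm '' A = s.symm '' closure Orb := rfl
      _ ⊆ closure (s.symm '' Orb) := image_closure_subset_closure_image s.symm.continuous
      _ ⊆ closure A := closure_mono (by
          rintro y ⟨z, hz, rfl⟩
          exact hsymmOrb s hs z hz)
      _ = A := (isClosed_closure).closure_eq
  have hAeq : ∀ s ∈ S, s '' A = A := by
    intro s hs
    refine subset_antisymm (hstepA s hs) ?_
    intro y hy
    exact ⟨s.symm y, hsymmA s hs ⟨y, hy, rfl⟩, s.apply_symm_apply y⟩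
  -- Chebyshev radius
  set rad : E → ℝ := fun x => sSup ((fun a => dist x a) '' A) with hraddef
  have hbddabove : ∀ x : E, BddAbove ((fun a => dist x a) '' A) := by
    intro x
    refine ⟨‖x‖ + R, ?_⟩
    rintro r ⟨a, ha, rfl⟩
    have := hAsub ha
    simp only [Metric.mem_closedBall, dist_zero_right] at this
    calc dist x a ≤ ‖x‖ + ‖a‖ := by
          rw [dist_eq_norm]; exact norm_sub_le _ _
      _ ≤ ‖x‖ + R := by linarith
  have hrad_ge : ∀ x : E, ∀ a ∈ A, dist x a ≤ rad x := by
    intro x a ha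
    exact le_csSup (hbddabove x) ⟨a, ha, rfl⟩
  have hrad_le : ∀ (x : E) (c : ℝ), (∀ a ∈ A, dist x a ≤ c) → rad x ≤ c := by
    intro x c hc
    apply csSup_le (hAne.image _)
    rintro r ⟨a, ha, rfl⟩
    exact hc a ha
  have hlip : ∀ x y : E, rad x ≤ rad y + dist x y := by
    intro x y
    apply hrad_le
    intro a ha
    calc dist x a ≤ dist x y + dist y a := dist_triangle _ _ _
      _ ≤ dist x y + rad y := by linarith [hrad_ge y a ha]
      _ = rad y + dist x y := by ring
  have hcont : Continuous rad := by
    apply (LipschitzWith.of_dist_le_mul (K := 1) ?_).continuous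
    intro x y
    simp only [NNReal.coe_one, one_mul, Real.dist_eq, abs_le]
    constructor
    · linarith [hlip y x, dist_comm x y]
    · linarith [hlip x y]
  -- minimize rad over a large compact ball
  have hKcomp : IsCompact (Metric.closedBall (0:E) (rad 0 + 1)) := isCompact_closedBall _ _
  have hKne : (Metric.closedBall (0:E) (rad 0 + 1)).Nonempty := by
    refine ⟨0, ?_⟩
    simp only [Metric.mem_closedBall, dist_self]
    have := hrad_ge 0 0 hA0
    simp only [dist_self] at this
    linarith
  obtain ⟨c, hcK, hcmin⟩ := hKcomp.exists_isMinOn hKne hcont.continuousOn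
  have hglobal : ∀ x : E, rad c ≤ rad x := by
    intro x
    by_cases hx : x ∈ Metric.closedBall (0:E) (rad 0 + 1)
    · exact hcmin hx
    · have hx' : rad 0 + 1 < ‖x‖ := by
        simp only [Metric.mem_closedBall, dist_zero_right, not_le] at hx
        exact hx
      have h1 : rad c ≤ rad 0 := by
        apply hcmin
        simp only [Metric.mem_closedBall, dist_self]
        have := hrad_ge 0 0 hA0
        simp only [dist_self] at this
        linarith
      have h2 : ‖x‖ ≤ rad x := by
        have := hrad_ge x 0 hA0
        simpa [dist_zero_right] using this
      linarith
  -- rad is invariant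
  have hradinv : ∀ s ∈ S, rad (s c) = rad c := by
    intro s hs
    have himg : (fun a => dist (s c) a) '' A = (fun a => dist c a) '' A := by
      conv_lhs => rw [← hAeq s hs]
      rw [← Set.image_comp]
      apply Set.image_congr
      intro a _
      show dist (s c) (s a) = dist c a
      exact IsometryEquiv.dist_eq s c a
    rw [hraddef]
    simp only
    rw [himg]
  -- conclude s c = c
  refine ⟨c, ?_⟩
  intro s hs
  by_contra hne
  have hD : 0 < dist c (s c) := dist_pos.2 (fun h => hne h.symm)
  set m := midpoint ℝ c (s c) with hmdef
  have hmlt : ∀ a ∈ A, dist m a ^ 2 ≤ rad c ^ 2 - dist c (s c) ^ 2 / 4 := by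
    intro a ha
    rw [midpoint_dist_sq]
    have h1 : dist c a ≤ rad c := hrad_ge c a ha
    have h2 : dist (s c) a ≤ rad c := by
      rw [← hradinv s hs]
      exact hrad_ge (s c) a ha
    have h0 : 0 ≤ dist c a := dist_nonneg
    have h0' : 0 ≤ dist (s c) a := dist_nonneg
    nlinarith
  have hradm : rad c ≤ rad m := hglobal m
  have hradc_nonneg : 0 ≤ rad c := by
    have := hrad_ge c 0 hA0
    linarith [dist_nonneg (x := c) (y := (0:E))]
  have hsq : rad m ^ 2 ≤ rad c ^ 2 - dist c (s c) ^ 2 / 4 := by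
    have hnn : 0 ≤ rad c ^ 2 - dist c (s c) ^ 2 / 4 := by
      have := hmlt 0 hA0
      nlinarith [dist_nonneg (x := m) (y := (0:E))]
    have : rad m ≤ Real.sqrt (rad c ^ 2 - dist c (s c) ^ 2 / 4) := by
      apply hrad_le
      intro a ha
      have := hmlt a ha
      have h' : dist m a ≤ Real.sqrt (rad c ^2 - dist c (s c) ^2/4) := by
        rw [show dist m a = Real.sqrt (dist m a ^ 2) by
          rw [Real.sqrt_sq dist_nonneg]]
        exact Real.sqrt_le_sqrt this
      exact h'
    have hrm_nonneg : 0 ≤ rad m := le_trans hradc_nonneg hradm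
    nlinarith [Real.sq_sqrt hnn, this]
  nlinarith

section Disp

variable {X : Type*} [MetricSpace X]

lemma jointDispAt_nonneg (S : Set (X ≃ᵢ X)) (x : X) : 0 ≤ jointDispAt S x :=
  Real.sSup_nonneg (by rintro r ⟨s, -, rfl⟩; exact dist_nonneg)

lemma dist_le_jointDispAt {S : Set (X ≃ᵢ X)} (hfin : S.Finite) {s : X ≃ᵢ X} (hs : s ∈ S)
    (x : X) : dist x (s x) ≤ jointDispAt S x :=
  le_csSup ((hfin.image _).bddAbove) ⟨s, hs, rfl⟩

lemma jointDispAt_le {S : Set (X ≃ᵢ X)} {x : X} {c : ℝ} (hc : 0 ≤ c)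
    (h : ∀ s ∈ S, dist x (s x) ≤ c) : jointDispAt S x ≤ c :=
  Real.sSup_le (by rintro r ⟨s, hs, rfl⟩; exact h s hs) hc

lemma jointMinDisp_nonneg (S : Set (X ≃ᵢ X)) [Nonempty X] : 0 ≤ jointMinDisp S :=
  Real.sInf_nonneg (by rintro r ⟨x, rfl⟩; exact jointDispAt_nonneg S x)

lemma jointMinDisp_le_jointDispAt (S : Set (X ≃ᵢ X)) (x : X) :
    jointMinDisp S ≤ jointDispAt S x :=
  csInf_le ⟨0, by rintro r ⟨y, rfl⟩; exact jointDispAt_nonneg S y⟩ ⟨x, rfl⟩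

lemma pow_finite {S : Set (X ≃ᵢ X)} (hfin : S.Finite) (n : ℕ) : (S ^ n).Finite := by
  induction n with
  | zero => rw [pow_zero]; exact Set.finite_one
  | succ n ih => rw [pow_succ]; exact ih.mul hfin

lemma dispAt_pow_le {S : Set (X ≃ᵢ X)} (hfin : S.Finite) (k : ℕ) (x : X) :
    ∀ w ∈ S ^ k, dist x (w x) ≤ k * jointDispAt S x := by
  induction k with
  | zero =>
      intro w hw
      rw [pow_zero, Set.mem_one] at hw
      subst hw
      simp
  | succ k ih =>
      intro w hw
      rw [pow_succ] at hw
      obtain ⟨u, hu, v, hv, rfl⟩ := Set.mem_mul.1 hw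
      have h1 : (u * v) x = u (v x) := rfl
      calc dist x ((u * v) x) = dist x (u (v x)) := by rw [h1]
        _ ≤ dist x (u x) + dist (u x) (u (v x)) := dist_triangle _ _ _
        _ = dist x (u x) + dist x (v x) := by rw [IsometryEquiv.dist_eq]
        _ ≤ k * jointDispAt S x + jointDispAt S x := by
            exact add_le_add (ih u hu) (dist_le_jointDispAt hfin hv x)
        _ = (k + 1 : ℕ) * jointDispAt S x := by push_cast; ring

lemma jointDispAt_pow_le {S : Set (X ≃ᵢ X)} (hfin : S.Finite) (k : ℕ) (x : X) :
    jointDispAt (S ^ k) x ≤ k * jointDispAt S x :=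
  jointDispAt_le (mul_nonneg (Nat.cast_nonneg k) (jointDispAt_nonneg S x))
    (fun w hw => dispAt_pow_le hfin k x w hw)

end Disp

section Main

variable {S : Set (E ≃ᵢ E)}

lemma div_term_nonneg (S : Set (E ≃ᵢ E)) (n : ℕ) : 0 ≤ jointMinDisp (S ^ n) / n := by
  apply div_nonneg (jointMinDisp_nonneg _) (Nat.cast_nonneg n)

lemma div_term_bound (hfin : S.Finite) (n : ℕ) :
    jointMinDisp (S ^ n) / n ≤ jointDispAt S 0 := by
  rcases Nat.eq_zero_or_pos n with rfl | hn
  · simp [jointDispAt_nonneg]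
  · rw [div_le_iff₀ (by exact_mod_cast hn)]
    calc jointMinDisp (S ^ n) ≤ jointDispAt (S ^ n) 0 := jointMinDisp_le_jointDispAt _ _
      _ ≤ n * jointDispAt S 0 := jointDispAt_pow_le hfin n 0
      _ = jointDispAt S 0 * n := by ring

/-- extraction of a good exponent from `asympDisp = 0` -/
lemma exists_good_exponent (hfin : S.Finite) (hA : asympDisp S = 0) {ε : ℝ} (hε : 0 < ε) :
    ∃ n : ℕ, 1 ≤ n ∧ jointMinDisp (S ^ n) < ε * n := by
  have hbd : IsBoundedUnder (· ≤ ·) atTop (fun n : ℕ => jointMinDisp (S ^ n) / n) :=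
    ⟨jointDispAt S 0, eventually_map.2 (Eventually.of_forall (div_term_bound hfin))⟩
  have hA' : limsup (fun n : ℕ => jointMinDisp (S ^ n) / (n:ℝ)) atTop = 0 := hA
  have hlt : limsup (fun n : ℕ => jointMinDisp (S ^ n) / (n:ℝ)) atTop < ε := by
    rw [hA']; exact hε
  have hev : ∀ᶠ n : ℕ in atTop, jointMinDisp (S ^ n) / (n:ℝ) < ε :=
    eventually_lt_of_limsup_lt hlt hbd
  obtain ⟨n, hn1, hn2⟩ := (hev.and (eventually_ge_atTop 1)).exists
  refine ⟨n, hn2, ?_⟩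
  have hnpos : (0:ℝ) < n := by exact_mod_cast hn2
  calc jointMinDisp (S ^ n) = (jointMinDisp (S ^ n) / n) * n := by field_simp
    _ < ε * n := by exact mul_lt_mul_of_pos_right hn1 hnpos

/-- sublinearity of the orbit of `0` -/
lemma sublinear_orbit (hfin : S.Finite) (hA : asympDisp S = 0) :
    ∀ ε : ℝ, 0 < ε → ∃ C : ℝ, ∀ l, IsWord S l → ‖T l‖ ≤ ε * l.length + C := by
  intro ε hε
  obtain ⟨n₀, hn₀, hJ⟩ := exists_good_exponent hfin hA (show (0:ℝ) < ε/2 by linarith)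
  -- a point with small displacement for S^n₀
  have hne : (Set.range (jointDispAt (S ^ n₀))).Nonempty := ⟨_, ⟨0, rfl⟩⟩
  obtain ⟨r, ⟨x₀, rfl⟩, hx₀⟩ := exists_lt_of_csInf_lt hne hJ
  set D : ℝ := n₀ * jointDispAt S x₀ + 2 * ‖x₀‖ with hDdef
  refine ⟨D, ?_⟩
  intro l hw
  set n := l.length with hn
  set w := l.prod with hwdef
  have hwmem : w ∈ S ^ n := list_prod_mem_pow hw
  -- decompose n
  set q := n / n₀ with hq
  set r := n % n₀ with hr
  have hdecomp : n₀ * q + r = n := Nat.div_add_mod n n₀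
  have hrlt : r < n₀ := Nat.mod_lt _ (by omega)
  have hsplit : S ^ n = (S ^ n₀) ^ q * S ^ r := by
    rw [← hdecomp, pow_add, pow_mul]
  rw [hsplit] at hwmem
  obtain ⟨u, hu, v, hv, huv⟩ := Set.mem_mul.1 hwmem
  have hdist : dist x₀ (w x₀) ≤ dist x₀ (u x₀) + dist x₀ (v x₀) := by
    have h1 : w x₀ = u (v x₀) := by rw [← huv]; rfl
    calc dist x₀ (w x₀) = dist x₀ (u (v x₀)) := by rw [h1]
      _ ≤ dist x₀ (u x₀) + dist (u x₀) (u (v x₀)) := dist_triangle _ _ _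
      _ = dist x₀ (u x₀) + dist x₀ (v x₀) := by rw [IsometryEquiv.dist_eq]
  have hbound1 : dist x₀ (u x₀) ≤ q * ((ε/2) * n₀) := by
    calc dist x₀ (u x₀) ≤ q * jointDispAt (S ^ n₀) x₀ :=
          dispAt_pow_le (pow_finite hfin n₀) q x₀ u hu
      _ ≤ q * ((ε/2) * n₀) := by
          exact mul_le_mul_of_nonneg_left (le_of_lt hx₀) (Nat.cast_nonneg q)
  have hbound2 : dist x₀ (v x₀) ≤ n₀ * jointDispAt S x₀ := by
    calc dist x₀ (v x₀) ≤ r * jointDispAt S x₀ := dispAt_pow_le hfin r x₀ v hv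
      _ ≤ n₀ * jointDispAt S x₀ := by
          apply mul_le_mul_of_nonneg_right _ (jointDispAt_nonneg _ _)
          exact_mod_cast le_of_lt hrlt
  have hqn : (q : ℝ) * n₀ ≤ n := by
    have : n₀ * q ≤ n := by omega
    push_cast
    calc (q:ℝ) * n₀ = (n₀ : ℝ) * q := by ring
      _ ≤ n := by exact_mod_cast this
  have hT : ‖T l‖ ≤ dist x₀ (w x₀) + 2 * ‖x₀‖ := by
    have h0 : ‖T l‖ = dist (w 0) 0 := by rw [dist_zero_right]; rfl
    calc ‖T l‖ = dist (w 0) 0 := h0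
      _ ≤ dist (w 0) (w x₀) + dist (w x₀) x₀ + dist x₀ 0 := dist_triangle4 _ _ _ _
      _ = dist 0 x₀ + dist (w x₀) x₀ + dist x₀ 0 := by rw [IsometryEquiv.dist_eq]
      _ = dist x₀ (w x₀) + 2 * ‖x₀‖ := by
          rw [dist_comm (w x₀) x₀, dist_comm (0:E) x₀, dist_zero_right]
          ring
  calc ‖T l‖ ≤ dist x₀ (w x₀) + 2 * ‖x₀‖ := hT
    _ ≤ q * ((ε/2) * n₀) + n₀ * jointDispAt S x₀ + 2 * ‖x₀‖ := by linarith
    _ ≤ (ε/2) * n + D := by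
        rw [hDdef]
        have : (q:ℝ) * ((ε/2) * n₀) = (ε/2) * ((q:ℝ) * n₀) := by ring
        rw [this]
        have h2 : (ε/2) * ((q:ℝ) * n₀) ≤ (ε/2) * n :=
          mul_le_mul_of_nonneg_left hqn (by linarith)
        linarith
    _ ≤ ε * n + D := by
        have : (0:ℝ) ≤ n := Nat.cast_nonneg _
        nlinarith
end Main


theorem fixed_point_of_asympDisp_zero {S : Set (E ≃ᵢ E)} (hfin : S.Finite)
    (hA : asympDisp S = 0) : ∃ x : E, ∀ s ∈ S, s x = x :=
  fixed_point_of_bounded_orbit (bounded_orbit_of_sublinear (sublinear_orbit hfin hA))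


section Easy
variable {X : Type*} [MetricSpace X] [Nonempty X]

lemma pow_fix {S : Set (X ≃ᵢ X)} {x : X} (hfix : ∀ s ∈ S, s x = x) (n : ℕ) :
    ∀ w ∈ S ^ n, w x = x := by
  induction n with
  | zero =>
      intro w hw
      rw [pow_zero, Set.mem_one] at hw
      subst hw; rfl
  | succ n ih =>
      intro w hw
      rw [pow_succ] at hw
      obtain ⟨u, hu, v, hv, rfl⟩ := Set.mem_mul.1 hw
      show u (v x) = x
      rw [hfix v hv, ih u hu]

lemma jointMinDisp_eq_zero_of_fix {S : Set (X ≃ᵢ X)} {x : X} (hfix : ∀ s ∈ S, s x = x) :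
    jointMinDisp S = 0 := by
  have h1 : jointDispAt S x = 0 := by
    apply le_antisymm _ (jointDispAt_nonneg _ _)
    apply jointDispAt_le le_rfl
    intro s hs
    rw [hfix s hs, dist_self]
  apply le_antisymm _ (jointMinDisp_nonneg S)
  calc jointMinDisp S ≤ jointDispAt S x := jointMinDisp_le_jointDispAt _ _
    _ = 0 := h1

lemma asympDisp_eq_zero_of_fix {S : Set (X ≃ᵢ X)} {x : X} (hfix : ∀ s ∈ S, s x = x) :
    asympDisp S = 0 := by
  have : (fun n : ℕ => jointMinDisp (S ^ n) / n) = fun _ => (0:ℝ) := by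
    funext n
    rw [jointMinDisp_eq_zero_of_fix (pow_fix hfix n), zero_div]
  unfold asympDisp
  rw [this]
  exact limsup_const 0

lemma asympDisp_eq_zero_of_jointMinDisp_zero {S : Set (X ≃ᵢ X)} (hfin : S.Finite)
    (hmin : jointMinDisp S = 0) : asympDisp S = 0 := by
  have hterm : ∀ n : ℕ, jointMinDisp (S ^ n) / n = 0 := by
    intro n
    rcases Nat.eq_zero_or_pos n with rfl | hn
    · simp
    · have hnpos : (0:ℝ) < n := by exact_mod_cast hn
      have h1 : jointMinDisp (S ^ n) ≤ 0 := by
        have hlb : ∀ x : X, jointMinDisp (S ^ n) ≤ n * jointDispAt S x := fun x =>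
          le_trans (jointMinDisp_le_jointDispAt _ x) (jointDispAt_pow_le hfin n x)
        have hmain : jointMinDisp (S ^ n) / n ≤ jointMinDisp S := by
          apply le_csInf (Set.range_nonempty _)
          rintro b ⟨x, rfl⟩
          rw [div_le_iff₀ hnpos]
          calc jointMinDisp (S ^ n) ≤ n * jointDispAt S x := hlb x
            _ = jointDispAt S x * n := by ring
        rw [hmin, div_le_iff₀ hnpos, zero_mul] at hmain
        exact hmain
      have h2 : 0 ≤ jointMinDisp (S ^ n) := jointMinDisp_nonneg _
      rw [le_antisymm h1 h2, zero_div]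
  have : (fun n : ℕ => jointMinDisp (S ^ n) / n) = fun _ => (0:ℝ) := funext hterm
  unfold asympDisp
  rw [this]
  exact limsup_const 0

end Easy


end JDAux

/-- For a finite set `S` of isometries of Euclidean space `ℝᵈ`, the following
are equivalent: `L(S) = 0`; `ℓ(S) = 0`; `S` has a common fixed point. -/
theorem euclidean_jointMinDisp_zero_iff (d : ℕ) (hd : 1 ≤ d)
    (S : Set (EuclideanSpace ℝ (Fin d) ≃ᵢ EuclideanSpace ℝ (Fin d))) (hfin : S.Finite) :
    (jointMinDisp S = 0 ↔ asympDisp S = 0) ∧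
    (asympDisp S = 0 ↔ ∃ x : EuclideanSpace ℝ (Fin d), ∀ s ∈ S, s x = x) := by
  have h23 : asympDisp S = 0 ↔ ∃ x : EuclideanSpace ℝ (Fin d), ∀ s ∈ S, s x = x := by
    constructor
    · exact fun hA => JDAux.fixed_point_of_asympDisp_zero hfin hA
    · rintro ⟨x, hx⟩
      exact JDAux.asympDisp_eq_zero_of_fix hx
  refine ⟨?_, h23⟩
  constructor
  · exact fun hmin => JDAux.asympDisp_eq_zero_of_jointMinDisp_zero hfin hmin
  · intro hA
    obtain ⟨x, hx⟩ := h23.1 hA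
    exact JDAux.jointMinDisp_eq_zero_of_fix hx
end

section
/- For every d ≥ 4 there exists a finite set S of isometries of Euclidean space ℝᵈ such that ℓ(S) > 0 but λ_∞(S) = 0; in particular every element of the semigroup generated by S fixes a point of ℝᵈ, yet S has no common fixed point, so the Berger–Wang identity λ_∞(S) = ℓ(S) fails for isometries of Euclidean spaces of dimension at least 4. -/
open Pointwise Filter

noncomputable section
namespace BWaux
open Real
variable (m : ℕ)
abbrev EE (m : ℕ) := EuclideanSpace ℝ (Fin (4 + m))
def i0 : Fin (4 + m) := ⟨0, by omega⟩
def i1 : Fin (4 + m) := ⟨1, by omega⟩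
def i2 : Fin (4 + m) := ⟨2, by omega⟩
def i3 : Fin (4 + m) := ⟨3, by omega⟩
lemma i01 : i0 m ≠ i1 m := by simp [i0, i1, Fin.ext_iff]
lemma i02 : i0 m ≠ i2 m := by simp [i0, i2, Fin.ext_iff]
lemma i03 : i0 m ≠ i3 m := by simp [i0, i3, Fin.ext_iff]
lemma i12 : i1 m ≠ i2 m := by simp [i1, i2, Fin.ext_iff]
lemma i13 : i1 m ≠ i3 m := by simp [i1, i3, Fin.ext_iff]
lemma i23 : i2 m ≠ i3 m := by simp [i2, i3, Fin.ext_iff]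
def rot (β : ℝ) (x : EE m) : EE m := WithLp.toLp 2 fun i =>
  if i = i0 m then Real.cos β * x (i0 m) - Real.sin β * x (i1 m)
  else if i = i1 m then Real.sin β * x (i0 m) + Real.cos β * x (i1 m)
  else if i = i2 m then Real.cos β * x (i2 m) - Real.sin β * x (i3 m)
  else if i = i3 m then Real.sin β * x (i2 m) + Real.cos β * x (i3 m)
  else x i
lemma rot_e0 (β : ℝ) (x : EE m) :
    rot m β x (i0 m) = Real.cos β * x (i0 m) - Real.sin β * x (i1 m) := by simp [rot]
lemma rot_e1 (β : ℝ) (x : EE m) :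
    rot m β x (i1 m) = Real.sin β * x (i0 m) + Real.cos β * x (i1 m) := by
  simp [rot, (i01 m).symm]
lemma rot_e2 (β : ℝ) (x : EE m) :
    rot m β x (i2 m) = Real.cos β * x (i2 m) - Real.sin β * x (i3 m) := by
  simp [rot, (i02 m).symm, (i12 m).symm]
lemma rot_e3 (β : ℝ) (x : EE m) :
    rot m β x (i3 m) = Real.sin β * x (i2 m) + Real.cos β * x (i3 m) := by
  simp [rot, (i03 m).symm, (i13 m).symm, (i23 m).symm]
lemma rot_other (β : ℝ) (x : EE m) (i : Fin (4 + m)) (h0 : i ≠ i0 m) (h1 : i ≠ i1 m)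
    (h2 : i ≠ i2 m) (h3 : i ≠ i3 m) : rot m β x i = x i := by
  simp [rot, h0, h1, h2, h3]

lemma rot_zero (x : EE m) : rot m 0 x = x := by
  ext i
  by_cases h0 : i = i0 m
  · subst h0; rw [rot_e0]; simp
  by_cases h1 : i = i1 m
  · subst h1; rw [rot_e1]; simp
  by_cases h2 : i = i2 m
  · subst h2; rw [rot_e2]; simp
  by_cases h3 : i = i3 m
  · subst h3; rw [rot_e3]; simp
  · exact rot_other m 0 x i h0 h1 h2 h3

lemma rot_rot (a b : ℝ) (x : EE m) : rot m a (rot m b x) = rot m (a + b) x := by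
  ext i
  by_cases h0 : i = i0 m
  · subst h0; rw [rot_e0, rot_e0, rot_e0, rot_e1, Real.cos_add, Real.sin_add]; ring
  by_cases h1 : i = i1 m
  · subst h1; rw [rot_e1, rot_e1, rot_e0, rot_e1, Real.cos_add, Real.sin_add]; ring
  by_cases h2 : i = i2 m
  · subst h2; rw [rot_e2, rot_e2, rot_e2, rot_e3, Real.cos_add, Real.sin_add]; ring
  by_cases h3 : i = i3 m
  · subst h3; rw [rot_e3, rot_e3, rot_e2, rot_e3, Real.cos_add, Real.sin_add]; ring
  · rw [rot_other m a _ i h0 h1 h2 h3, rot_other m b x i h0 h1 h2 h3,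
      rot_other m (a+b) x i h0 h1 h2 h3]

lemma rot_add (β : ℝ) (x y : EE m) : rot m β (x + y) = rot m β x + rot m β y := by
  ext i
  rw [PiLp.add_apply]
  by_cases h0 : i = i0 m
  · subst h0; rw [rot_e0, rot_e0, rot_e0, PiLp.add_apply, PiLp.add_apply]; ring
  by_cases h1 : i = i1 m
  · subst h1; rw [rot_e1, rot_e1, rot_e1, PiLp.add_apply, PiLp.add_apply]; ring
  by_cases h2 : i = i2 m
  · subst h2; rw [rot_e2, rot_e2, rot_e2, PiLp.add_apply, PiLp.add_apply]; ring
  by_cases h3 : i = i3 m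
  · subst h3; rw [rot_e3, rot_e3, rot_e3, PiLp.add_apply, PiLp.add_apply]; ring
  · rw [rot_other m β _ i h0 h1 h2 h3, rot_other m β x i h0 h1 h2 h3,
      rot_other m β y i h0 h1 h2 h3, PiLp.add_apply]

lemma rot_sub (β : ℝ) (x y : EE m) : rot m β (x - y) = rot m β x - rot m β y := by
  ext i
  rw [PiLp.sub_apply]
  by_cases h0 : i = i0 m
  · subst h0; rw [rot_e0, rot_e0, rot_e0, PiLp.sub_apply, PiLp.sub_apply]; ring
  by_cases h1 : i = i1 m
  · subst h1; rw [rot_e1, rot_e1, rot_e1, PiLp.sub_apply, PiLp.sub_apply]; ring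
  by_cases h2 : i = i2 m
  · subst h2; rw [rot_e2, rot_e2, rot_e2, PiLp.sub_apply, PiLp.sub_apply]; ring
  by_cases h3 : i = i3 m
  · subst h3; rw [rot_e3, rot_e3, rot_e3, PiLp.sub_apply, PiLp.sub_apply]; ring
  · rw [rot_other m β _ i h0 h1 h2 h3, rot_other m β x i h0 h1 h2 h3,
      rot_other m β y i h0 h1 h2 h3, PiLp.sub_apply]

lemma rot_zero_vec (β : ℝ) : rot m β 0 = 0 := by
  ext i
  by_cases h0 : i = i0 m
  · subst h0; rw [rot_e0]; simp
  by_cases h1 : i = i1 m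
  · subst h1; rw [rot_e1]; simp
  by_cases h2 : i = i2 m
  · subst h2; rw [rot_e2]; simp
  by_cases h3 : i = i3 m
  · subst h3; rw [rot_e3]; simp
  · rw [rot_other m β _ i h0 h1 h2 h3]

lemma sum_sq_rot (β : ℝ) (x : EE m) :
    ∑ i, (rot m β x i) ^ 2 = ∑ i, (x i) ^ 2 := by
  classical
  have hsub : ({i0 m, i1 m, i2 m, i3 m} : Finset (Fin (4+m))) ⊆ Finset.univ :=
    Finset.subset_univ _
  rw [← Finset.sum_sdiff hsub (f := fun i => (rot m β x i) ^ 2),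
      ← Finset.sum_sdiff hsub (f := fun i => (x i) ^ 2)]
  have hc : ∀ i ∈ Finset.univ \ ({i0 m, i1 m, i2 m, i3 m} : Finset (Fin (4+m))),
      (rot m β x i) ^ 2 = (x i) ^ 2 := by
    intro i hi
    simp only [Finset.mem_sdiff, Finset.mem_insert, Finset.mem_singleton, not_or] at hi
    rw [rot_other m β x i hi.2.1 hi.2.2.1 hi.2.2.2.1 hi.2.2.2.2]
  rw [Finset.sum_congr rfl hc]
  congr 1
  have h1 : (i0 m) ∉ ({i1 m, i2 m, i3 m} : Finset (Fin (4+m))) := by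
    simp [i01 m, i02 m, i03 m]
  have h2 : (i1 m) ∉ ({i2 m, i3 m} : Finset (Fin (4+m))) := by simp [i12 m, i13 m]
  have h3 : (i2 m) ∉ ({i3 m} : Finset (Fin (4+m))) := by simp [i23 m]
  rw [Finset.sum_insert h1, Finset.sum_insert h2, Finset.sum_insert h3,
      Finset.sum_singleton, Finset.sum_insert h1, Finset.sum_insert h2,
      Finset.sum_insert h3, Finset.sum_singleton, rot_e0, rot_e1, rot_e2, rot_e3]
  have pyth := Real.sin_sq_add_cos_sq β
  nlinarith [pyth, sq_nonneg (x (i0 m)), sq_nonneg (x (i1 m))]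

lemma rot_isometry (β : ℝ) : Isometry (rot m β) := by
  apply Isometry.of_dist_eq
  intro x y
  rw [EuclideanSpace.dist_eq, EuclideanSpace.dist_eq]
  congr 1
  have : ∀ i, dist (rot m β x i) (rot m β y i) ^ 2 = (rot m β (x - y) i) ^ 2 := by
    intro i
    rw [rot_sub, PiLp.sub_apply, Real.dist_eq, sq_abs]
  rw [Finset.sum_congr rfl fun i _ => this i, sum_sq_rot]
  apply Finset.sum_congr rfl
  intro i _
  simp [Real.dist_eq, sq_abs]

lemma rot_norm (β : ℝ) (x : EE m) : ‖rot m β x‖ = ‖x‖ := by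
  have h := (rot_isometry m β).dist_eq x 0
  rw [rot_zero_vec m β] at h
  simpa [dist_zero_right] using h

def rotIso (β : ℝ) : EE m ≃ᵢ EE m where
  toEquiv :=
    { toFun := rot m β
      invFun := rot m (-β)
      left_inv := fun x => by rw [rot_rot, neg_add_cancel, rot_zero]
      right_inv := fun x => by rw [rot_rot, add_neg_cancel, rot_zero] }
  isometry_toFun := rot_isometry m β

def tr (v : EE m) : EE m ≃ᵢ EE m where
  toEquiv :=
    { toFun := fun x => x + v
      invFun := fun x => x - v
      left_inv := fun x => by simp
      right_inv := fun x => by simp }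
  isometry_toFun := Isometry.of_dist_eq fun x y => by simp [dist_add_right]

def e0v : EE m := EuclideanSpace.single (i0 m) 1
def e2v : EE m := EuclideanSpace.single (i2 m) 1

def gg : EE m ≃ᵢ EE m := (rotIso m 2).trans (tr m (e0v m))
def hh : EE m ≃ᵢ EE m := (rotIso m 2).trans (tr m (e2v m))

lemma gg_apply (x : EE m) : gg m x = rot m 2 x + e0v m := rfl
lemma hh_apply (x : EE m) : hh m x = rot m 2 x + e2v m := rfl

def S : Set (EE m ≃ᵢ EE m) := {gg m, hh m}

lemma S_fin : (S m).Finite := (Set.finite_singleton _).insert _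

lemma Spow_fin (n : ℕ) : (S m ^ n).Finite := by
  induction n with
  | zero => rw [pow_zero]; exact Set.finite_one
  | succ n ih => rw [pow_succ]; exact ih.mul (S_fin m)

lemma Spow_ne (n : ℕ) : (S m ^ n).Nonempty :=
  Set.Nonempty.pow ⟨gg m, Set.mem_insert _ _⟩

lemma word_struct (n : ℕ) : ∀ w ∈ (S m) ^ n, ∃ t : EE m,
    (∀ i, i ≠ i0 m → i ≠ i1 m → i ≠ i2 m → i ≠ i3 m → t i = 0) ∧ ‖t‖ ≤ (n : ℝ) ∧
    ∀ x : EE m, w x = rot m (2 * n) x + t := by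
  induction n with
  | zero =>
    intro w hw
    rw [pow_zero, Set.mem_one] at hw
    subst hw
    refine ⟨0, fun i _ _ _ _ => rfl, by simp, fun x => ?_⟩
    have : (2 : ℝ) * ((0 : ℕ) : ℝ) = 0 := by norm_num
    rw [this, rot_zero, add_zero]
    rfl
  | succ n ih =>
    intro w hw
    rw [pow_succ] at hw
    rw [Set.mem_mul] at hw
    obtain ⟨u, hu, s, hs, rfl⟩ := hw
    obtain ⟨t, ht0, htn, htx⟩ := ih u hu
    have hsv : ∃ v : EE m, (∀ i, i ≠ i0 m → i ≠ i1 m → i ≠ i2 m → i ≠ i3 m → v i = 0) ∧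
        ‖v‖ = 1 ∧ ∀ x : EE m, s x = rot m 2 x + v := by
      rcases hs with rfl | hs
      · refine ⟨e0v m, ?_, by simp [e0v, EuclideanSpace.norm_single], fun x => rfl⟩
        intro i h0 _ _ _
        simp [e0v, EuclideanSpace.single_apply, h0]
      · rw [Set.mem_singleton_iff] at hs
        subst hs
        refine ⟨e2v m, ?_, by simp [e2v, EuclideanSpace.norm_single], fun x => rfl⟩
        intro i _ _ h2 _
        simp [e2v, EuclideanSpace.single_apply, h2]
    obtain ⟨v, hv0, hvn, hvx⟩ := hsv
    refine ⟨rot m (2 * n) v + t, ?_, ?_, ?_⟩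
    · intro i h0 h1 h2 h3
      rw [PiLp.add_apply, rot_other m _ v i h0 h1 h2 h3, hv0 i h0 h1 h2 h3,
        ht0 i h0 h1 h2 h3, add_zero]
    · calc ‖rot m (2 * n) v + t‖ ≤ ‖rot m (2 * n) v‖ + ‖t‖ := norm_add_le _ _
        _ = ‖v‖ + ‖t‖ := by rw [rot_norm]
        _ ≤ 1 + n := by rw [hvn]; linarith
        _ = ((n + 1 : ℕ) : ℝ) := by push_cast; ring
    · intro x
      have : (u * s) x = u (s x) := rfl
      rw [this, hvx, htx, rot_add, rot_rot]
      have h2 : (2 : ℝ) * ((n : ℝ) + 1) = 2 * n + 2 := by ring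
      push_cast
      rw [h2, add_assoc]

lemma cos2n_ne_one {n : ℕ} (hn : 1 ≤ n) : Real.cos (2 * n) ≠ 1 := by
  intro h
  rw [Real.cos_eq_one_iff] at h
  obtain ⟨k, hk⟩ := h
  have hn0 : (0 : ℝ) < (n : ℝ) := by exact_mod_cast hn
  have hk0 : k ≠ 0 := by
    rintro rfl
    rw [Int.cast_zero, zero_mul] at hk
    linarith
  have hkR : (k : ℝ) ≠ 0 := Int.cast_ne_zero.mpr hk0
  have hpi : π = (n : ℝ) / (k : ℝ) := by
    field_simp
    linarith [hk]
  exact irrational_pi ⟨(n : ℚ) / (k : ℚ), by push_cast; rw [hpi]⟩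

lemma exists_fixed {n : ℕ} (hn : 1 ≤ n) {w : EE m ≃ᵢ EE m} (hw : w ∈ S m ^ n) :
    ∃ x : EE m, w x = x := by
  obtain ⟨t, ht0, -, htx⟩ := word_struct m n w hw
  set cb := Real.cos (2 * n) with hcb
  set sb := Real.sin (2 * n) with hsb
  have hcb1 : cb ≠ 1 := cos2n_ne_one hn
  have hcblt : cb < 1 := lt_of_le_of_ne (Real.cos_le_one _) hcb1
  have hD : (0 : ℝ) < (1 - cb) ^ 2 + sb ^ 2 := by
    have : 0 < (1 - cb) ^ 2 := pow_pos (by linarith) 2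
    nlinarith [sq_nonneg sb]
  set D := (1 - cb) ^ 2 + sb ^ 2 with hDdef
  have hDne : D ≠ 0 := ne_of_gt hD
  refine ⟨(WithLp.toLp 2 fun i =>
    if i = i0 m then ((1 - cb) * t (i0 m) - sb * t (i1 m)) / D
    else if i = i1 m then (sb * t (i0 m) + (1 - cb) * t (i1 m)) / D
    else if i = i2 m then ((1 - cb) * t (i2 m) - sb * t (i3 m)) / D
    else if i = i3 m then (sb * t (i2 m) + (1 - cb) * t (i3 m)) / D
    else 0 : EE m), ?_⟩
  set x : EE m := (WithLp.toLp 2 fun i =>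
    if i = i0 m then ((1 - cb) * t (i0 m) - sb * t (i1 m)) / D
    else if i = i1 m then (sb * t (i0 m) + (1 - cb) * t (i1 m)) / D
    else if i = i2 m then ((1 - cb) * t (i2 m) - sb * t (i3 m)) / D
    else if i = i3 m then (sb * t (i2 m) + (1 - cb) * t (i3 m)) / D
    else 0 : EE m) with hxdef
  have hx0 : x (i0 m) = ((1 - cb) * t (i0 m) - sb * t (i1 m)) / D := by
    rw [hxdef]; simp
  have hx1 : x (i1 m) = (sb * t (i0 m) + (1 - cb) * t (i1 m)) / D := by
    rw [hxdef]; simp [(i01 m).symm]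
  have hx2 : x (i2 m) = ((1 - cb) * t (i2 m) - sb * t (i3 m)) / D := by
    rw [hxdef]; simp [(i02 m).symm, (i12 m).symm]
  have hx3 : x (i3 m) = (sb * t (i2 m) + (1 - cb) * t (i3 m)) / D := by
    rw [hxdef]; simp [(i03 m).symm, (i13 m).symm, (i23 m).symm]
  have hxo : ∀ i, i ≠ i0 m → i ≠ i1 m → i ≠ i2 m → i ≠ i3 m → x i = 0 := by
    intro i h0 h1 h2 h3
    rw [hxdef]; simp [h0, h1, h2, h3]
  rw [htx]
  ext i
  rw [PiLp.add_apply]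
  by_cases h0 : i = i0 m
  · subst h0
    rw [rot_e0, hx0, hx1, ← hcb, ← hsb]
    field_simp
    ring
  by_cases h1 : i = i1 m
  · subst h1
    rw [rot_e1, hx0, hx1, ← hcb, ← hsb]
    field_simp
    ring
  by_cases h2 : i = i2 m
  · subst h2
    rw [rot_e2, hx2, hx3, ← hcb, ← hsb]
    field_simp
    ring
  by_cases h3 : i = i3 m
  · subst h3
    rw [rot_e3, hx2, hx3, ← hcb, ← hsb]
    field_simp
    ring
  · rw [rot_other m _ x i h0 h1 h2 h3, hxo i h0 h1 h2 h3, ht0 i h0 h1 h2 h3, add_zero]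

lemma cos_two_nonpos : Real.cos 2 ≤ 0 := by
  apply Real.cos_nonpos_of_pi_div_two_le_of_le
  · linarith [Real.pi_lt_d2]
  · linarith [Real.pi_gt_three]

lemma cos_two_ge : -(1/2 : ℝ) ≤ Real.cos 2 := by
  have h23 : (2 : ℝ) ≤ 2 * π / 3 := by linarith [Real.pi_gt_three]
  have hmono := Real.cos_le_cos_of_nonneg_of_le_pi (by norm_num : (0:ℝ) ≤ 2)
    (by linarith [Real.pi_gt_three] : 2 * π / 3 ≤ π) h23
  have hval : Real.cos (2 * π / 3) = -(1/2) := by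
    have : 2 * π / 3 = π - π / 3 := by ring
    rw [this, Real.cos_pi_sub, Real.cos_pi_div_three]
  linarith [hmono, hval.ge, hval.le]

lemma sin_two_ge : (1/2 : ℝ) ≤ Real.sin 2 := by
  have h0 : 0 ≤ Real.sin 2 :=
    Real.sin_nonneg_of_nonneg_of_le_pi (by norm_num) (by linarith [Real.pi_gt_three])
  have pyth := Real.sin_sq_add_cos_sq 2
  nlinarith [cos_two_nonpos, cos_two_ge]

lemma pair_cos (a : ℝ) : (1/2 : ℝ) ≤ |Real.cos a| + |Real.cos (a + 2)| := by
  rw [Real.cos_add]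
  have pyth := Real.sin_sq_add_cos_sq a
  have hca : |Real.cos a| ≤ 1 := by
    rw [abs_le]; constructor
    · exact Real.neg_one_le_cos a
    · exact Real.cos_le_one a
  have hsa : 1 - |Real.cos a| ≤ |Real.sin a| := by
    nlinarith [abs_nonneg (Real.sin a), abs_nonneg (Real.cos a), sq_abs (Real.sin a),
      sq_abs (Real.cos a)]
  have key : Real.sin 2 * |Real.sin a| - (-Real.cos 2) * |Real.cos a| ≤
      |Real.cos a * Real.cos 2 - Real.sin a * Real.sin 2| := by
    rcases abs_cases (Real.sin a) with ⟨h1, h2⟩ | ⟨h1, h2⟩ <;>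
      rcases abs_cases (Real.cos a) with ⟨h3, h4⟩ | ⟨h3, h4⟩ <;>
      rcases abs_cases (Real.cos a * Real.cos 2 - Real.sin a * Real.sin 2) with
        ⟨h5, h6⟩ | ⟨h5, h6⟩ <;>
      nlinarith [sin_two_ge, cos_two_nonpos, cos_two_ge]
  nlinarith [sin_two_ge, cos_two_nonpos, cos_two_ge, abs_nonneg (Real.cos a)]

lemma sum_abs_cos (n : ℕ) :
    ((n : ℝ) - 1) / 4 ≤ ∑ k ∈ Finset.range n, |Real.cos (2 * (k : ℝ))| := by
  have key : ∀ n : ℕ, (((n : ℝ) - 1) / 4 ≤ ∑ k ∈ Finset.range n, |Real.cos (2 * (k : ℝ))|)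
      ∧ (((n + 1 : ℝ) - 1) / 4 ≤ ∑ k ∈ Finset.range (n + 1), |Real.cos (2 * (k : ℝ))|) := by
    intro n
    induction n with
    | zero =>
      constructor
      · norm_num
      · have : (0:ℝ) ≤ ∑ k ∈ Finset.range 1, |Real.cos (2 * (k : ℝ))| := by positivity
        linarith
    | succ n ih =>
      refine ⟨by push_cast; exact ih.2, ?_⟩
      rw [Finset.sum_range_succ, Finset.sum_range_succ]
      have hp := pair_cos (2 * (n : ℝ))
      have : |Real.cos (2 * ((n : ℝ) + 1))| = |Real.cos (2 * (n : ℝ) + 2)| := by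
        ring_nf
      push_cast
      rw [this]
      have := ih.1
      linarith
  exact (key n).1

def wA : ℕ → (EE m ≃ᵢ EE m)
  | 0 => 1
  | n + 1 => wA n * (if 0 ≤ Real.cos (2 * (n : ℝ)) then gg m else hh m)

def wB : ℕ → (EE m ≃ᵢ EE m)
  | 0 => 1
  | n + 1 => wB n * (if 0 ≤ Real.cos (2 * (n : ℝ)) then hh m else gg m)

def tA : ℕ → EE m
  | 0 => 0
  | n + 1 => tA n + rot m (2 * n) (if 0 ≤ Real.cos (2 * (n : ℝ)) then e0v m else e2v m)

def tB : ℕ → EE m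
  | 0 => 0
  | n + 1 => tB n + rot m (2 * n) (if 0 ≤ Real.cos (2 * (n : ℝ)) then e2v m else e0v m)

lemma wA_mem (n : ℕ) : wA m n ∈ S m ^ n := by
  induction n with
  | zero => rw [pow_zero]; exact Set.mem_one.mpr rfl
  | succ n ih =>
    rw [pow_succ]
    refine Set.mul_mem_mul ih ?_
    by_cases hc : 0 ≤ Real.cos (2 * (n : ℝ))
    · simp only [wA, if_pos hc]; exact Set.mem_insert _ _
    · simp only [wA, if_neg hc]; exact Set.mem_insert_of_mem _ rfl

lemma wB_mem (n : ℕ) : wB m n ∈ S m ^ n := by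
  induction n with
  | zero => rw [pow_zero]; exact Set.mem_one.mpr rfl
  | succ n ih =>
    rw [pow_succ]
    refine Set.mul_mem_mul ih ?_
    by_cases hc : 0 ≤ Real.cos (2 * (n : ℝ))
    · simp only [wB, if_pos hc]; exact Set.mem_insert_of_mem _ rfl
    · simp only [wB, if_neg hc]; exact Set.mem_insert _ _

lemma wA_apply (n : ℕ) (x : EE m) : wA m n x = rot m (2 * n) x + tA m n := by
  induction n generalizing x with
  | zero =>
    show x = rot m (2 * (0:ℕ)) x + 0
    rw [add_zero]
    have : (2 : ℝ) * ((0 : ℕ) : ℝ) = 0 := by norm_num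
    rw [this, rot_zero]
  | succ n ih =>
    have hmul : wA m (n+1) x = wA m n ((if 0 ≤ Real.cos (2 * (n : ℝ)) then gg m else hh m) x) := rfl
    have hs : (if 0 ≤ Real.cos (2 * (n : ℝ)) then gg m else hh m) x
        = rot m 2 x + (if 0 ≤ Real.cos (2 * (n : ℝ)) then e0v m else e2v m) := by
      by_cases hc : 0 ≤ Real.cos (2 * (n : ℝ)) <;> simp only [if_pos, if_neg, hc] <;> rfl
    have hcast : (2 : ℝ) * (((n+1) : ℕ) : ℝ) = 2 * (n:ℝ) + 2 := by push_cast; ring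
    rw [hmul, hs, ih, rot_add, rot_rot, hcast]
    simp only [tA]
    abel

lemma wB_apply (n : ℕ) (x : EE m) : wB m n x = rot m (2 * n) x + tB m n := by
  induction n generalizing x with
  | zero =>
    show x = rot m (2 * (0:ℕ)) x + 0
    rw [add_zero]
    have : (2 : ℝ) * ((0 : ℕ) : ℝ) = 0 := by norm_num
    rw [this, rot_zero]
  | succ n ih =>
    have hmul : wB m (n+1) x = wB m n ((if 0 ≤ Real.cos (2 * (n : ℝ)) then hh m else gg m) x) := rfl
    have hs : (if 0 ≤ Real.cos (2 * (n : ℝ)) then hh m else gg m) x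
        = rot m 2 x + (if 0 ≤ Real.cos (2 * (n : ℝ)) then e2v m else e0v m) := by
      by_cases hc : 0 ≤ Real.cos (2 * (n : ℝ)) <;> simp only [if_pos, if_neg, hc] <;> rfl
    have hcast : (2 : ℝ) * (((n+1) : ℕ) : ℝ) = 2 * (n:ℝ) + 2 := by push_cast; ring
    rw [hmul, hs, ih, rot_add, rot_rot, hcast]
    simp only [tB]
    abel

lemma e0v_0 : e0v m (i0 m) = 1 := by simp [e0v, EuclideanSpace.single_apply]
lemma e0v_1 : e0v m (i1 m) = 0 := by simp [e0v, EuclideanSpace.single_apply, (i01 m).symm]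
lemma e2v_0 : e2v m (i0 m) = 0 := by simp [e2v, EuclideanSpace.single_apply, i02 m]
lemma e2v_1 : e2v m (i1 m) = 0 := by simp [e2v, EuclideanSpace.single_apply, i12 m]

lemma tdiff (n : ℕ) :
    tA m n (i0 m) - tB m n (i0 m) = ∑ k ∈ Finset.range n, |Real.cos (2 * (k : ℝ))| := by
  induction n with
  | zero => simp [tA, tB]
  | succ n ih =>
    rw [Finset.sum_range_succ, ← ih]
    have hA : tA m (n+1) (i0 m) = tA m n (i0 m)
        + rot m (2 * n) (if 0 ≤ Real.cos (2 * (n : ℝ)) then e0v m else e2v m) (i0 m) := by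
      show (tA m n + _) (i0 m) = _
      rw [PiLp.add_apply]
    have hB : tB m (n+1) (i0 m) = tB m n (i0 m)
        + rot m (2 * n) (if 0 ≤ Real.cos (2 * (n : ℝ)) then e2v m else e0v m) (i0 m) := by
      show (tB m n + _) (i0 m) = _
      rw [PiLp.add_apply]
    rw [hA, hB]
    by_cases hc : 0 ≤ Real.cos (2 * (n : ℝ))
    · rw [if_pos hc, if_pos hc, rot_e0, rot_e0, e0v_0, e0v_1, e2v_0, e2v_1,
        abs_of_nonneg hc]
      ring
    · rw [if_neg hc, if_neg hc, rot_e0, rot_e0, e0v_0, e0v_1, e2v_0, e2v_1,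
        abs_of_neg (lt_of_not_ge hc)]
      ring

lemma coord_le_norm (v : EE m) (i : Fin (4+m)) : |v i| ≤ ‖v‖ := by
  rw [EuclideanSpace.norm_eq, ← Real.sqrt_sq_eq_abs]
  apply Real.sqrt_le_sqrt
  have : (v i) ^ 2 = ‖v i‖ ^ 2 := by rw [Real.norm_eq_abs, sq_abs]
  rw [this]
  exact Finset.single_le_sum (fun j _ => sq_nonneg ‖v j‖) (Finset.mem_univ i)

lemma disp_lower (n : ℕ) (x : EE m) :
    ((n : ℝ) - 1) / 4 ≤ dist x (wA m n x) + dist x (wB m n x) := by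
  have htri : dist (wA m n x) (wB m n x) ≤ dist x (wA m n x) + dist x (wB m n x) := by
    rw [dist_comm x (wA m n x)]
    exact dist_triangle _ _ _
  have hdd : dist (wA m n x) (wB m n x) = dist (tA m n) (tB m n) := by
    rw [wA_apply, wB_apply, dist_add_left]
  have hcoord : ((n : ℝ) - 1) / 4 ≤ dist (tA m n) (tB m n) := by
    rw [dist_eq_norm]
    calc ((n : ℝ) - 1) / 4 ≤ ∑ k ∈ Finset.range n, |Real.cos (2 * (k : ℝ))| :=
          sum_abs_cos n
      _ = tA m n (i0 m) - tB m n (i0 m) := (tdiff m n).symm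
      _ ≤ |tA m n (i0 m) - tB m n (i0 m)| := le_abs_self _
      _ = |(tA m n - tB m n) (i0 m)| := by rw [PiLp.sub_apply]
      _ ≤ ‖tA m n - tB m n‖ := coord_le_norm m _ _
  linarith


lemma jda_ge {T : Set (EE m ≃ᵢ EE m)} (hT : T.Finite) {w : EE m ≃ᵢ EE m} (hw : w ∈ T)
    (x : EE m) : dist x (w x) ≤ jointDispAt T x :=
  le_csSup ((hT.image _).bddAbove) (Set.mem_image_of_mem _ hw)

lemma jda_nonneg (T : Set (EE m ≃ᵢ EE m)) (x : EE m) : 0 ≤ jointDispAt T x :=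
  Real.sSup_nonneg (by rintro y ⟨s, hs, rfl⟩; exact dist_nonneg)

lemma jmd_le (T : Set (EE m ≃ᵢ EE m)) (x : EE m) : jointMinDisp T ≤ jointDispAt T x :=
  csInf_le ⟨0, by rintro y ⟨z, rfl⟩; exact jda_nonneg m T z⟩ ⟨x, rfl⟩

lemma jmd_nonneg (T : Set (EE m ≃ᵢ EE m)) : 0 ≤ jointMinDisp T :=
  le_csInf (Set.range_nonempty _) (by rintro y ⟨z, rfl⟩; exact jda_nonneg m T z)

lemma jmd_lower (n : ℕ) : ((n : ℝ) - 1) / 8 ≤ jointMinDisp (S m ^ n) := by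
  apply le_csInf (Set.range_nonempty _)
  rintro y ⟨x, rfl⟩
  have hA := jda_ge m (Spow_fin m n) (wA_mem m n) x
  have hB := jda_ge m (Spow_fin m n) (wB_mem m n) x
  have hd := disp_lower m n x
  linarith

lemma jda_zero_le (n : ℕ) : jointDispAt (S m ^ n) 0 ≤ (n : ℝ) := by
  apply Real.sSup_le
  · rintro y ⟨w, hw, rfl⟩
    obtain ⟨t, -, htn, htx⟩ := word_struct m n w hw
    show dist (0 : EE m) (w 0) ≤ (n : ℝ)
    rw [htx, rot_zero_vec, zero_add, dist_zero_left]
    exact htn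
  · exact Nat.cast_nonneg n

lemma asymp_pos : 0 < asympDisp (S m) := by
  have hub : ∀ n : ℕ, jointMinDisp (S m ^ n) / n ≤ 1 := by
    intro n
    rcases Nat.eq_zero_or_pos n with rfl | hn
    · norm_num
    · have h1 : jointMinDisp (S m ^ n) ≤ n := le_trans (jmd_le m _ 0) (jda_zero_le m n)
      have hn' : (0 : ℝ) < n := by exact_mod_cast hn
      rw [div_le_one hn']
      exact h1
  have hlb : ∀ n : ℕ, 2 ≤ n → (1/16 : ℝ) ≤ jointMinDisp (S m ^ n) / n := by
    intro n hn
    have hnR : (2 : ℝ) ≤ n := by exact_mod_cast hn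
    have hl := jmd_lower m n
    rw [le_div_iff₀ (by linarith : (0:ℝ) < (n:ℝ))]
    linarith
  have hfreq : ∃ᶠ n : ℕ in atTop, (1/16 : ℝ) ≤ jointMinDisp (S m ^ n) / n :=
    (Filter.eventually_atTop.mpr ⟨2, hlb⟩).frequently
  have hbd : IsBoundedUnder (· ≤ ·) atTop (fun n : ℕ => jointMinDisp (S m ^ n) / n) :=
    isBoundedUnder_of ⟨1, hub⟩
  have := le_limsup_of_frequently_le hfreq hbd
  have h16 : (0:ℝ) < 1/16 := by norm_num
  calc (0:ℝ) < 1/16 := h16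
    _ ≤ asympDisp (S m) := this

lemma jmd_single_zero {w : EE m ≃ᵢ EE m} (hfix : ∃ x : EE m, w x = x) :
    jointMinDisp {w} = 0 := by
  obtain ⟨x, hx⟩ := hfix
  have h1 : jointDispAt {w} x = 0 := by
    rw [jointDispAt, Set.image_singleton, csSup_singleton, hx, dist_self]
  have h2 := jmd_le m {w} x
  have h3 := jmd_nonneg m {w}
  linarith

lemma asymp_single_zero {j : ℕ} (hj : 1 ≤ j) {w : EE m ≃ᵢ EE m} (hw : w ∈ S m ^ j) :
    asympDisp {w} = 0 := by
  have hfun : (fun n : ℕ => jointMinDisp (({w} : Set (EE m ≃ᵢ EE m)) ^ n) / n)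
      = fun _ => (0:ℝ) := by
    funext n
    rw [Set.singleton_pow]
    rcases Nat.eq_zero_or_pos n with rfl | hn
    · rw [pow_zero, jmd_single_zero m ⟨0, rfl⟩]
      norm_num
    · have hmem : w ^ n ∈ S m ^ (j * n) := by
        rw [pow_mul]
        exact Set.pow_mem_pow hw
      have hjn : 1 ≤ j * n := Nat.one_le_iff_ne_zero.mpr (Nat.mul_ne_zero
        (Nat.one_le_iff_ne_zero.mp hj) (Nat.pos_iff_ne_zero.mp hn))
      have hfix := exists_fixed m hjn hmem
      rw [jmd_single_zero m hfix, zero_div]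
  rw [asympDisp, hfun, limsup_const]

lemma lamD_zero {j : ℕ} (hj : 1 ≤ j) : lamD (S m ^ j) = 0 := by
  have himg : (fun s : EE m ≃ᵢ EE m => asympDisp {s}) '' (S m ^ j) = {0} := by
    apply Set.eq_singleton_iff_nonempty_unique_mem.mpr
    constructor
    · exact (Spow_ne m j).image _
    · rintro y ⟨w, hw, rfl⟩
      exact asymp_single_zero m hj hw
  rw [lamD, himg, csSup_singleton]

lemma lamInf_zero : lamInf (S m) = 0 := by
  have himg : (fun j : ℕ => lamD (S m ^ j) / j) '' Set.Ici 1 = {0} := by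
    apply Set.eq_singleton_iff_nonempty_unique_mem.mpr
    constructor
    · exact Set.Nonempty.image _ ⟨1, Set.self_mem_Ici⟩
    · rintro y ⟨j, hj, rfl⟩
      show lamD (S m ^ j) / (j : ℝ) = 0
      rw [lamD_zero m hj, zero_div]
  rw [lamInf, himg, csSup_singleton]

end BWaux

/-- For every `d ≥ 4` there is a finite set `S` of isometries of `ℝᵈ` with
`ℓ(S) > 0` but `λ_∞(S) = 0`: every element of the semigroup generated by `S` has a fixed point,
yet `S` has no common fixed point. In particular the Berger–Wang identity fails in `Isom(ℝᵈ)`. -/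
theorem berger_wang_fails_euclidean (d : ℕ) (hd : 4 ≤ d) :
    ∃ S : Set (EuclideanSpace ℝ (Fin d) ≃ᵢ EuclideanSpace ℝ (Fin d)),
      S.Finite ∧ 0 < asympDisp S ∧ lamInf S = 0 ∧
      (∀ n : ℕ, 1 ≤ n → ∀ g ∈ S ^ n, ∃ x : EuclideanSpace ℝ (Fin d), g x = x) ∧
      ¬ ∃ x : EuclideanSpace ℝ (Fin d), ∀ s ∈ S, s x = x := by
  obtain ⟨m, rfl⟩ : ∃ m, d = 4 + m := ⟨d - 4, by omega⟩
  refine ⟨BWaux.S m, BWaux.S_fin m, BWaux.asymp_pos m, BWaux.lamInf_zero m, ?_, ?_⟩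
  · intro n hn g hg
    exact BWaux.exists_fixed m hn hg
  · rintro ⟨x, hx⟩
    have hg := hx (BWaux.gg m) (Set.mem_insert _ _)
    have hh := hx (BWaux.hh m) (Set.mem_insert_of_mem _ rfl)
    rw [BWaux.gg_apply] at hg
    rw [BWaux.hh_apply] at hh
    have h1 := congrArg (fun z : BWaux.EE m => z (BWaux.i0 m)) hg
    have h2 := congrArg (fun z : BWaux.EE m => z (BWaux.i0 m)) hh
    simp only [PiLp.add_apply] at h1 h2
    rw [BWaux.e0v_0] at h1
    rw [BWaux.e2v_0] at h2
    linarith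
end
end

section
/- Let a, b ∈ SL₂(ℂ) be such that each of a, b and ab has all its eigenvalues of modulus 1. Then at least one of the following holds: (1) there exists g ∈ GL₂(ℂ) such that g·a·g⁻¹ and g·b·g⁻¹ both belong to SU(2), the group of 2×2 unitary matrices of determinant 1; (2) there exists g ∈ GL₂(ℂ) such that g·a·g⁻¹ and g·b·g⁻¹ are both upper triangular matrices (necessarily with diagonal entries of modulus 1); (3) the commutator [a,b] := a·b·a⁻¹·b⁻¹ is loxodromic, i.e. has an eigenvalue of modulus different from 1. -/
open Matrix Complex

noncomputable section

private lemma spec_iff (M : Matrix (Fin 2) (Fin 2) ℂ) (h : M.det = 1) (μ : ℂ) :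
    μ ∈ spectrum ℂ M ↔ μ ^ 2 - M.trace * μ + 1 = 0 := by
  rw [spectrum.mem_iff]
  have : IsUnit (algebraMap ℂ (Matrix (Fin 2) (Fin 2) ℂ) μ - M) ↔
      (algebraMap ℂ (Matrix (Fin 2) (Fin 2) ℂ) μ - M).det ≠ 0 := by
    rw [Matrix.isUnit_iff_isUnit_det, isUnit_iff_ne_zero]
  rw [this, not_not]
  have hdet : (algebraMap ℂ (Matrix (Fin 2) (Fin 2) ℂ) μ - M).det
      = μ ^ 2 - M.trace * μ + 1 := by
    rw [Matrix.det_fin_two, Matrix.trace_fin_two]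
    have h' : M 0 0 * M 1 1 - M 0 1 * M 1 0 = 1 := by
      rw [← Matrix.det_fin_two]; exact h
    simp [Matrix.algebraMap_matrix_apply, Matrix.sub_apply]
    linear_combination h'
  rw [hdet]

private lemma exists_root_quad (t : ℂ) : ∃ μ : ℂ, μ ^ 2 - t * μ + 1 = 0 := by
  obtain ⟨s, hs⟩ := IsAlgClosed.exists_pow_nat_eq (t ^ 2 - 4) (n := 2) (by norm_num)
  exact ⟨(t + s) / 2, by field_simp; linear_combination hs⟩

private lemma exists_eigenvector (A : Matrix (Fin 2) (Fin 2) ℂ) (h : A.det = 1) (μ : ℂ)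
    (hq : μ ^ 2 - A.trace * μ + 1 = 0) :
    ∃ v : Fin 2 → ℂ, v ≠ 0 ∧ A.mulVec v = μ • v := by
  have hdet : A 0 0 * A 1 1 - A 0 1 * A 1 0 = 1 := by rw [← Matrix.det_fin_two]; exact h
  have htr : μ ^ 2 - (A 0 0 + A 1 1) * μ + 1 = 0 := by
    rw [← Matrix.trace_fin_two]; exact hq
  by_cases h01 : A 0 1 ≠ 0
  · refine ⟨![A 0 1, μ - A 0 0], ?_, ?_⟩
    · intro hz
      have := congrFun hz 0
      simp at this; exact h01 this
    · funext i
      fin_cases i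
      · simp [Matrix.mulVec, dotProduct, Fin.sum_univ_two]; ring
      · simp [Matrix.mulVec, dotProduct, Fin.sum_univ_two]
        linear_combination -htr - hdet
  · push_neg at h01
    by_cases h10 : A 1 0 ≠ 0
    · refine ⟨![μ - A 1 1, A 1 0], ?_, ?_⟩
      · intro hz
        have := congrFun hz 1
        simp at this; exact h10 this
      · funext i
        fin_cases i
        · simp [Matrix.mulVec, dotProduct, Fin.sum_univ_two]
          linear_combination -htr - hdet
        · simp [Matrix.mulVec, dotProduct, Fin.sum_univ_two]; ring
    · push_neg at h10
      have hfac : (μ - A 0 0) * (μ - A 1 1) = 0 := by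
        rw [h01, h10] at hdet; linear_combination htr + hdet
      rcases mul_eq_zero.mp hfac with h0 | h1
      · refine ⟨![1, 0], ?_, ?_⟩
        · intro hz; have := congrFun hz 0; simp at this
        · funext i
          fin_cases i <;> simp [Matrix.mulVec, dotProduct, Fin.sum_univ_two, h10]
          linear_combination -h0
      · refine ⟨![0, 1], ?_, ?_⟩
        · intro hz; have := congrFun hz 1; simp at this
        · funext i
          fin_cases i <;> simp [Matrix.mulVec, dotProduct, Fin.sum_univ_two, h01]
          linear_combination -h1

private lemma unit_mul_conj {μ : ℂ} (h : ‖μ‖ = 1) : μ * (starRingEnd ℂ) μ = 1 := by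
  rw [Complex.mul_conj]
  norm_cast
  rw [Complex.normSq_eq_norm_sq, h, one_pow]

private lemma trace_real (M : Matrix (Fin 2) (Fin 2) ℂ) (h : M.det = 1)
    (hs : ∀ μ ∈ spectrum ℂ M, ‖μ‖ = 1) : ∃ x : ℝ, M.trace = (x : ℂ) := by
  obtain ⟨μ, hμ⟩ := exists_root_quad M.trace
  have hmem : μ ∈ spectrum ℂ M := (spec_iff M h μ).mpr hμ
  have h1 : ‖μ‖ = 1 := hs μ hmem
  have hμ0 : μ ≠ 0 := by intro h0; rw [h0] at h1; simp at h1
  have hconj : μ * (starRingEnd ℂ) μ = 1 := unit_mul_conj h1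
  refine ⟨2 * μ.re, ?_⟩
  have htr : M.trace = μ + (starRingEnd ℂ) μ := by
    have : μ * M.trace = μ ^ 2 + 1 := by linear_combination -hμ
    have h2 : μ * (μ + (starRingEnd ℂ) μ) = μ ^ 2 + 1 := by
      linear_combination hconj
    exact mul_left_cancel₀ hμ0 (this.trans h2.symm)
  rw [htr, Complex.add_conj]

private lemma lox (M : Matrix (Fin 2) (Fin 2) ℂ) (h : M.det = 1) (t : ℝ)
    (htr : M.trace = (t : ℂ)) (ht : 2 < t) : ∃ μ ∈ spectrum ℂ M, ‖μ‖ ≠ 1 := by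
  set x : ℝ := (t + Real.sqrt (t ^ 2 - 4)) / 2 with hx
  have hnn : (0:ℝ) ≤ t ^ 2 - 4 := by nlinarith
  have hsq : Real.sqrt (t ^ 2 - 4) ^ 2 = t ^ 2 - 4 := Real.sq_sqrt hnn
  have hx1 : 1 < x := by
    have := Real.sqrt_nonneg (t ^ 2 - 4)
    rw [hx]; nlinarith
  refine ⟨(x : ℂ), ?_, ?_⟩
  · rw [spec_iff M h, htr]
    have : x ^ 2 - t * x + 1 = 0 := by
      rw [hx]; field_simp; nlinarith [hsq]
    exact_mod_cast congrArg (fun y : ℝ => (y : ℂ)) this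
  · rw [Complex.norm_real]
    have : |x| = x := abs_of_pos (by linarith)
    rw [Real.norm_eq_abs, this]
    exact ne_of_gt hx1

private lemma adj_eq (M : Matrix (Fin 2) (Fin 2) ℂ) :
    M.adjugate = M.trace • (1 : Matrix (Fin 2) (Fin 2) ℂ) - M := by
  rw [Matrix.adjugate_fin_two, Matrix.trace_fin_two]
  ext i j
  fin_cases i <;> fin_cases j <;>
    simp [Matrix.one_apply, Matrix.sub_apply, Matrix.smul_apply] <;> ring

private lemma trace_conj {X Y P Pinv : Matrix (Fin 2) (Fin 2) ℂ}
    (h : X * P = P * Y) (h1 : P * Pinv = 1) (h2 : Pinv * P = 1) :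
    X.trace = Y.trace := by
  have hX : X = P * Y * Pinv := by
    calc X = X * (P * Pinv) := by rw [h1, mul_one]
    _ = (X * P) * Pinv := by rw [mul_assoc]
    _ = P * Y * Pinv := by rw [h]
  rw [hX, Matrix.trace_mul_cycle, h2, one_mul]


private lemma comm_conj {A B A' B' P : Matrix (Fin 2) (Fin 2) ℂ}
    (hA : A * P = P * A') (hB : B * P = P * B')
    (htA : A.trace = A'.trace) (htB : B.trace = B'.trace) :
    (A * B * (A.trace • 1 - A) * (B.trace • 1 - B)) * P
      = P * (A' * B' * (A'.trace • 1 - A') * (B'.trace • 1 - B')) := by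
  have h3 : (A.trace • 1 - A) * P = P * (A'.trace • 1 - A') := by
    rw [sub_mul, mul_sub, htA, Matrix.smul_mul, Matrix.mul_smul, one_mul, mul_one, hA]
  have h4 : (B.trace • 1 - B) * P = P * (B'.trace • 1 - B') := by
    rw [sub_mul, mul_sub, htB, Matrix.smul_mul, Matrix.mul_smul, one_mul, mul_one, hB]
  calc (A * B * (A.trace • 1 - A) * (B.trace • 1 - B)) * P
      = A * B * (A.trace • 1 - A) * ((B.trace • 1 - B) * P) := by
        simp only [mul_assoc]
    _ = A * B * (A.trace • 1 - A) * (P * (B'.trace • 1 - B')) := by rw [h4]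
    _ = A * B * ((A.trace • 1 - A) * P) * (B'.trace • 1 - B') := by
        simp only [mul_assoc]
    _ = A * B * (P * (A'.trace • 1 - A')) * (B'.trace • 1 - B') := by rw [h3]
    _ = A * (B * P) * ((A'.trace • 1 - A') * (B'.trace • 1 - B')) := by
        simp only [mul_assoc]
    _ = A * (P * B') * ((A'.trace • 1 - A') * (B'.trace • 1 - B')) := by rw [hB]
    _ = (A * P) * (B' * ((A'.trace • 1 - A') * (B'.trace • 1 - B'))) := by
        simp only [mul_assoc]
    _ = (P * A') * (B' * ((A'.trace • 1 - A') * (B'.trace • 1 - B'))) := by rw [hA]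
    _ = P * (A' * B' * (A'.trace • 1 - A') * (B'.trace • 1 - B')) := by
        simp only [mul_assoc]

private lemma conj_via_unit (G : (Matrix (Fin 2) (Fin 2) ℂ)ˣ)
    (X Y : Matrix (Fin 2) (Fin 2) ℂ)
    (h : X * (G : Matrix (Fin 2) (Fin 2) ℂ) = (G : Matrix (Fin 2) (Fin 2) ℂ) * Y) :
    ((G⁻¹ : (Matrix (Fin 2) (Fin 2) ℂ)ˣ) : Matrix (Fin 2) (Fin 2) ℂ) * X *
      (G : Matrix (Fin 2) (Fin 2) ℂ) = Y := by
  rw [mul_assoc, h, ← mul_assoc, Units.inv_mul, one_mul]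

private lemma coe_comm (a b : Matrix.SpecialLinearGroup (Fin 2) ℂ) :
    ((a * b * a⁻¹ * b⁻¹ : Matrix.SpecialLinearGroup (Fin 2) ℂ) : Matrix (Fin 2) (Fin 2) ℂ)
      = (a : Matrix (Fin 2) (Fin 2) ℂ) * (b : Matrix (Fin 2) (Fin 2) ℂ) *
        ((a : Matrix (Fin 2) (Fin 2) ℂ).trace • 1 - (a : Matrix (Fin 2) (Fin 2) ℂ)) *
        ((b : Matrix (Fin 2) (Fin 2) ℂ).trace • 1 - (b : Matrix (Fin 2) (Fin 2) ℂ)) := by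
  simp only [Matrix.SpecialLinearGroup.coe_mul, Matrix.SpecialLinearGroup.coe_inv]
  rw [adj_eq, adj_eq]

private lemma indep {A : Matrix (Fin 2) (Fin 2) ℂ} {lam nu : ℂ} (hne : lam ≠ nu)
    {v w : Fin 2 → ℂ} (hv : v ≠ 0) (hw : w ≠ 0)
    (hAv : A.mulVec v = lam • v) (hAw : A.mulVec w = nu • w) :
    v 0 * w 1 - v 1 * w 0 ≠ 0 := by
  intro hd
  have key : ∀ k : ℂ, w = k • v → False := by
    intro k hk
    have h1 : A.mulVec w = (k * lam) • v := by
      rw [hk, Matrix.mulVec_smul, hAv, smul_smul]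
    have h2 : A.mulVec w = (nu * k) • v := by
      rw [hAw, hk, smul_smul]
    have h3 : ((k * lam - nu * k) : ℂ) • v = 0 := by
      rw [sub_smul, ← h1, ← h2, sub_self]
    rcases smul_eq_zero.mp h3 with h4 | h4
    · have hk0 : k = 0 := by
        have h6 : k * (lam - nu) = 0 := by linear_combination h4
        rcases mul_eq_zero.mp h6 with h5 | h5
        · exact h5
        · exact absurd (sub_eq_zero.mp h5) hne
      rw [hk0, zero_smul] at hk
      exact hw hk
    · exact hv h4
  rcases Function.ne_iff.mp hv with ⟨i, hi⟩
  fin_cases i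
  · have hv0 : v 0 ≠ 0 := by simpa using hi
    refine key (w 0 / v 0) ?_
    funext j
    fin_cases j
    · show w 0 = w 0 / v 0 * v 0
      field_simp
    · show w 1 = w 0 / v 0 * v 1
      field_simp
      linear_combination hd
  · have hv1 : v 1 ≠ 0 := by simpa using hi
    refine key (w 1 / v 1) ?_
    funext j
    fin_cases j
    · show w 0 = w 1 / v 1 * v 0
      field_simp
      linear_combination -hd
    · show w 1 = w 1 / v 1 * v 1
      field_simp

private lemma vec_ne_zero {v : Fin 2 → ℂ} (hv : v ≠ 0) : v 0 ≠ 0 ∨ v 1 ≠ 0 := by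
  by_contra h
  push_neg at h
  exact hv (funext fun i => by fin_cases i <;> simp [h.1, h.2])

private lemma complete_basis {v : Fin 2 → ℂ} (hv : v ≠ 0) :
    ∃ w : Fin 2 → ℂ, v 0 * w 1 - v 1 * w 0 = 1 := by
  rcases vec_ne_zero hv with h0 | h1
  · exact ⟨![0, (v 0)⁻¹], by simp; field_simp⟩
  · exact ⟨![-(v 1)⁻¹, 0], by simp; field_simp⟩

private def mkUnit (v w : Fin 2 → ℂ) (h : v 0 * w 1 - v 1 * w 0 = 1) :
    (Matrix (Fin 2) (Fin 2) ℂ)ˣ where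
  val := !![v 0, w 0; v 1, w 1]
  inv := !![w 1, -(w 0); -(v 1), v 0]
  val_inv := by
    ext i j
    fin_cases i <;> fin_cases j <;>
      simp [Matrix.mul_apply, Fin.sum_univ_two, Matrix.one_apply] <;>
      first
        | linear_combination h
        | linear_combination -h
        | ring
  inv_val := by
    ext i j
    fin_cases i <;> fin_cases j <;>
      simp [Matrix.mul_apply, Fin.sum_univ_two, Matrix.one_apply] <;>
      first
        | linear_combination h
        | linear_combination -h
        | ring

private lemma entry_col0 (X : Matrix (Fin 2) (Fin 2) ℂ) {v w : Fin 2 → ℂ}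
    (h : v 0 * w 1 - v 1 * w 0 = 1) {α : ℂ} (hXv : X.mulVec v = α • v) :
    (!![w 1, -(w 0); -(v 1), v 0] * (X * !![v 0, w 0; v 1, w 1])) 1 0 = 0 ∧
    (!![w 1, -(w 0); -(v 1), v 0] * (X * !![v 0, w 0; v 1, w 1])) 0 0 = α := by
  have h0 := congrFun hXv 0
  have h1 := congrFun hXv 1
  simp [Matrix.mulVec, dotProduct, Fin.sum_univ_two] at h0 h1
  constructor
  · simp [Matrix.mul_apply, Fin.sum_univ_two]
    linear_combination (-(v 1)) * h0 + (v 0) * h1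
  · simp [Matrix.mul_apply, Fin.sum_univ_two]
    linear_combination (w 1) * h0 - (w 0) * h1 + α * h

private lemma col0_eigen {X X₁ : Matrix (Fin 2) (Fin 2) ℂ} {v w : Fin 2 → ℂ}
    (hX : X * !![v 0, w 0; v 1, w 1] = !![v 0, w 0; v 1, w 1] * X₁)
    (hr : X₁ 1 0 = 0) : X.mulVec v = X₁ 0 0 • v := by
  have hj0 := congrArg (fun M : Matrix (Fin 2) (Fin 2) ℂ => M 0 0) hX
  have hj1 := congrArg (fun M : Matrix (Fin 2) (Fin 2) ℂ => M 1 0) hX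
  simp [Matrix.mul_apply, Fin.sum_univ_two, hr] at hj0 hj1
  have e0 : X.mulVec v 0 = X₁ 0 0 * v 0 := by
    simp [Matrix.mulVec, dotProduct, Fin.sum_univ_two]
    linear_combination hj0
  have e1 : X.mulVec v 1 = X₁ 0 0 * v 1 := by
    simp [Matrix.mulVec, dotProduct, Fin.sum_univ_two]
    linear_combination hj1
  funext j
  fin_cases j
  · simpa using e0
  · simpa using e1

private lemma entry_col1 (X : Matrix (Fin 2) (Fin 2) ℂ) {v w : Fin 2 → ℂ}
    (h : v 0 * w 1 - v 1 * w 0 = 1) {β : ℂ} (hXw : X.mulVec w = β • w) :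
    (!![w 1, -(w 0); -(v 1), v 0] * (X * !![v 0, w 0; v 1, w 1])) 0 1 = 0 ∧
    (!![w 1, -(w 0); -(v 1), v 0] * (X * !![v 0, w 0; v 1, w 1])) 1 1 = β := by
  have h0 := congrFun hXw 0
  have h1 := congrFun hXw 1
  simp [Matrix.mulVec, dotProduct, Fin.sum_univ_two] at h0 h1
  constructor
  · simp [Matrix.mul_apply, Fin.sum_univ_two]
    linear_combination (w 1) * h0 - (w 0) * h1
  · simp [Matrix.mul_apply, Fin.sum_univ_two]
    linear_combination (-(v 1)) * h0 + (v 0) * h1 + β * h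

private lemma col1_eigen {X X₁ : Matrix (Fin 2) (Fin 2) ℂ} {v w : Fin 2 → ℂ}
    (hX : X * !![v 0, w 0; v 1, w 1] = !![v 0, w 0; v 1, w 1] * X₁)
    (hq : X₁ 0 1 = 0) : X.mulVec w = X₁ 1 1 • w := by
  have hj0 := congrArg (fun M : Matrix (Fin 2) (Fin 2) ℂ => M 0 1) hX
  have hj1 := congrArg (fun M : Matrix (Fin 2) (Fin 2) ℂ => M 1 1) hX
  simp [Matrix.mul_apply, Fin.sum_univ_two, hq] at hj0 hj1
  have e0 : X.mulVec w 0 = X₁ 1 1 * w 0 := by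
    simp [Matrix.mulVec, dotProduct, Fin.sum_univ_two]
    linear_combination hj0
  have e1 : X.mulVec w 1 = X₁ 1 1 * w 1 := by
    simp [Matrix.mulVec, dotProduct, Fin.sum_univ_two]
    linear_combination hj1
  funext j
  fin_cases j
  · simpa using e0
  · simpa using e1

private lemma lox_branch (a b : Matrix.SpecialLinearGroup (Fin 2) ℂ)
    {A₁ B₁ P Pinv : Matrix (Fin 2) (Fin 2) ℂ}
    (h1 : P * Pinv = 1) (h2 : Pinv * P = 1)
    (hA : (a : Matrix (Fin 2) (Fin 2) ℂ) * P = P * A₁)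
    (hB : (b : Matrix (Fin 2) (Fin 2) ℂ) * P = P * B₁)
    (t : ℝ)
    (htr : (A₁ * B₁ * (A₁.trace • 1 - A₁) * (B₁.trace • 1 - B₁)).trace = (t : ℂ))
    (ht : 2 < t) :
    ∃ μ ∈ spectrum ℂ (((a * b * a⁻¹ * b⁻¹ : Matrix.SpecialLinearGroup (Fin 2) ℂ) :
        Matrix (Fin 2) (Fin 2) ℂ)), ‖μ‖ ≠ 1 := by
  have htA := trace_conj hA h1 h2
  have htB := trace_conj hB h1 h2
  have hcc := comm_conj hA hB htA htB
  have htrM : ((a * b * a⁻¹ * b⁻¹ : Matrix.SpecialLinearGroup (Fin 2) ℂ) :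
      Matrix (Fin 2) (Fin 2) ℂ).trace = (t : ℂ) := by
    rw [coe_comm a b, trace_conj hcc h1 h2, htr]
  exact lox _ (a * b * a⁻¹ * b⁻¹).prop t htrM ht
set_option maxHeartbeats 1000000 in
/-- If `a, b ∈ SL₂(ℂ)` are such that `a`, `b` and `ab` all have eigenvalues of
modulus `1`, then either `a` and `b` are simultaneously conjugate into `SU(2)`, or they are
simultaneously conjugate into the upper triangular matrices, or the commutator
`[a,b] = a b a⁻¹ b⁻¹` is loxodromic (has an eigenvalue of modulus `≠ 1`). -/
theorem sl2_serre_trichotomy (a b : Matrix.SpecialLinearGroup (Fin 2) ℂ)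
    (ha : ∀ μ ∈ spectrum ℂ ((a : Matrix (Fin 2) (Fin 2) ℂ)), ‖μ‖ = 1)
    (hb : ∀ μ ∈ spectrum ℂ ((b : Matrix (Fin 2) (Fin 2) ℂ)), ‖μ‖ = 1)
    (hab : ∀ μ ∈ spectrum ℂ (((a * b : Matrix.SpecialLinearGroup (Fin 2) ℂ) :
        Matrix (Fin 2) (Fin 2) ℂ)), ‖μ‖ = 1) :
    (∃ g : GL (Fin 2) ℂ,
      ((g : Matrix (Fin 2) (Fin 2) ℂ) * a * ((g⁻¹ : GL (Fin 2) ℂ) : Matrix (Fin 2) (Fin 2) ℂ)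
          ∈ Matrix.unitaryGroup (Fin 2) ℂ ∧
        ((g : Matrix (Fin 2) (Fin 2) ℂ) * a *
          ((g⁻¹ : GL (Fin 2) ℂ) : Matrix (Fin 2) (Fin 2) ℂ)).det = 1) ∧
      ((g : Matrix (Fin 2) (Fin 2) ℂ) * b * ((g⁻¹ : GL (Fin 2) ℂ) : Matrix (Fin 2) (Fin 2) ℂ)
          ∈ Matrix.unitaryGroup (Fin 2) ℂ ∧
        ((g : Matrix (Fin 2) (Fin 2) ℂ) * b *
          ((g⁻¹ : GL (Fin 2) ℂ) : Matrix (Fin 2) (Fin 2) ℂ)).det = 1)) ∨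
    (∃ g : GL (Fin 2) ℂ,
      (∀ i j : Fin 2, (j : ℕ) < (i : ℕ) →
        ((g : Matrix (Fin 2) (Fin 2) ℂ) * a *
          ((g⁻¹ : GL (Fin 2) ℂ) : Matrix (Fin 2) (Fin 2) ℂ)) i j = 0) ∧
      (∀ i j : Fin 2, (j : ℕ) < (i : ℕ) →
        ((g : Matrix (Fin 2) (Fin 2) ℂ) * b *
          ((g⁻¹ : GL (Fin 2) ℂ) : Matrix (Fin 2) (Fin 2) ℂ)) i j = 0)) ∨
    (∃ μ ∈ spectrum ℂ (((a * b * a⁻¹ * b⁻¹ : Matrix.SpecialLinearGroup (Fin 2) ℂ) :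
        Matrix (Fin 2) (Fin 2) ℂ)), ‖μ‖ ≠ 1) := by
  classical
  set A : Matrix (Fin 2) (Fin 2) ℂ := ↑a with hAdef
  set B : Matrix (Fin 2) (Fin 2) ℂ := ↑b with hBdef
  have hdA : A.det = 1 := a.prop
  have hdB : B.det = 1 := b.prop
  have hdAB : (A * B).det = 1 := by rw [Matrix.det_mul, hdA, hdB, mul_one]
  have hcoeAB : ((a * b : Matrix.SpecialLinearGroup (Fin 2) ℂ) :
      Matrix (Fin 2) (Fin 2) ℂ) = A * B := rfl
  rw [hcoeAB] at hab
  obtain ⟨y, hy⟩ := trace_real B hdB hb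
  obtain ⟨z, hz⟩ := trace_real (A * B) hdAB hab
  by_cases hred : ∃ v : Fin 2 → ℂ, v ≠ 0 ∧ (∃ α : ℂ, A.mulVec v = α • v) ∧
      (∃ β : ℂ, B.mulVec v = β • v)
  · -- simultaneously triangularizable
    obtain ⟨v, hv0, ⟨α, hα⟩, ⟨β, hβ⟩⟩ := hred
    obtain ⟨w, hw⟩ := complete_basis hv0
    refine Or.inr (Or.inl ⟨(mkUnit v w hw)⁻¹, ?_, ?_⟩)
    · intro i j hij
      fin_cases i <;> fin_cases j
      · exact absurd hij (by decide)
      · exact absurd hij (by decide)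
      · rw [mul_assoc, inv_inv]
        exact (entry_col0 A hw hα).1
      · exact absurd hij (by decide)
    · intro i j hij
      fin_cases i <;> fin_cases j
      · exact absurd hij (by decide)
      · exact absurd hij (by decide)
      · rw [mul_assoc, inv_inv]
        exact (entry_col0 B hw hβ).1
      · exact absurd hij (by decide)
  · obtain ⟨lam, hq⟩ := exists_root_quad A.trace
    have hnormlam : ‖lam‖ = 1 := ha lam ((spec_iff A hdA lam).mpr hq)
    have hln : lam * (starRingEnd ℂ) lam = 1 := unit_mul_conj hnormlam
    have hlam0 : lam ≠ 0 := by
      intro h0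
      rw [h0, zero_mul] at hln
      exact zero_ne_one hln
    by_cases hl2 : lam ^ 2 = 1
    · -- Case I : lam = ±1, A parabolic, commutator loxodromic
      have h2lam : A.trace = 2 * lam := by
        apply mul_left_cancel₀ hlam0
        linear_combination -hq - hl2
      by_cases hAs : A = lam • (1 : Matrix (Fin 2) (Fin 2) ℂ)
      · exfalso
        obtain ⟨btr, hqB⟩ := exists_root_quad B.trace
        obtain ⟨wv, hwv0, hwB⟩ := exists_eigenvector B hdB btr hqB
        refine hred ⟨wv, hwv0, ⟨lam, ?_⟩, ⟨btr, hwB⟩⟩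
        rw [hAs]
        rw [Matrix.smul_mulVec, Matrix.one_mulVec]
      · obtain ⟨v, hv0, hAv⟩ := exists_eigenvector A hdA lam hq
        obtain ⟨w, hw⟩ := complete_basis hv0
        set P : Matrix (Fin 2) (Fin 2) ℂ := !![v 0, w 0; v 1, w 1] with hP
        set Pinv : Matrix (Fin 2) (Fin 2) ℂ := !![w 1, -(w 0); -(v 1), v 0] with hPinv
        have h1 : P * Pinv = 1 := (mkUnit v w hw).val_inv
        have h2 : Pinv * P = 1 := (mkUnit v w hw).inv_val
        set A₁ := Pinv * (A * P) with hA₁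
        set B₁ := Pinv * (B * P) with hB₁
        have hPA : A * P = P * A₁ := by rw [hA₁, ← mul_assoc, h1, one_mul]
        have hPB : B * P = P * B₁ := by rw [hB₁, ← mul_assoc, h1, one_mul]
        have hcol := entry_col0 A hw hAv
        have hA10 : A₁ 1 0 = 0 := hcol.1
        have hA00 : A₁ 0 0 = lam := hcol.2
        have htA := trace_conj hPA h1 h2
        have htB := trace_conj hPB h1 h2
        have hA11 : A₁ 1 1 = lam := by
          have ht1 : A₁ 0 0 + A₁ 1 1 = 2 * lam := by
            rw [← Matrix.trace_fin_two, ← htA, h2lam]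
          linear_combination ht1 - hA00
        set c := A₁ 0 1 with hcdef
        have hA₁eta : A₁ = !![lam, c; 0, lam] := by
          conv_lhs => rw [Matrix.eta_fin_two A₁]
          rw [hA10, hA00, hA11]
        have hc0 : c ≠ 0 := by
          intro hc
          apply hAs
          have hA1s : A₁ = lam • 1 := by
            rw [hA₁eta, hc]
            ext i j
            fin_cases i <;> fin_cases j <;> simp [Matrix.one_apply]
          calc A = A * (P * Pinv) := by rw [h1, mul_one]
          _ = (A * P) * Pinv := by rw [mul_assoc]
          _ = (P * A₁) * Pinv := by rw [hPA]
          _ = (P * (lam • 1)) * Pinv := by rw [hA1s]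
          _ = lam • (P * Pinv) := by
              rw [Matrix.mul_smul, mul_one, Matrix.smul_mul]
          _ = lam • 1 := by rw [h1]
        set p := B₁ 0 0 with hpdef
        set q := B₁ 0 1 with hqdef
        set r := B₁ 1 0 with hrdef
        set s := B₁ 1 1 with hsdef
        have hB₁eta : B₁ = !![p, q; r, s] := Matrix.eta_fin_two B₁
        have hr0 : r ≠ 0 := by
          intro hrz
          exact hred ⟨v, hv0, ⟨lam, hAv⟩, ⟨p, col0_eigen hPB hrz⟩⟩
        have hdP : P.det = 1 := by
          rw [hP, Matrix.det_fin_two_of]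
          linear_combination hw
        have hdPinv : Pinv.det = 1 := by
          rw [hPinv, Matrix.det_fin_two_of]
          linear_combination hw
        have hdet1 : p * s - q * r = 1 := by
          have hd1 : B₁.det = 1 := by
            rw [hB₁, Matrix.det_mul, Matrix.det_mul, hdPinv, hdB, hdP]
            ring
          rw [hB₁eta, Matrix.det_fin_two_of] at hd1
          linear_combination hd1
        have hyB : p + s = (y : ℂ) := by
          rw [← Matrix.trace_fin_two, ← htB, hy]
        have hzAB : lam * p + c * r + lam * s = (z : ℂ) := by
          have hPAB : (A * B) * P = P * (A₁ * B₁) := by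
            rw [mul_assoc, hPB, ← mul_assoc, hPA, mul_assoc]
          have htAB := trace_conj hPAB h1 h2
          rw [hz] at htAB
          rw [hA₁eta, hB₁eta] at htAB
          simp [Matrix.trace_fin_two, Matrix.mul_apply, Fin.sum_univ_two] at htAB
          linear_combination -htAB
        have hfac : (lam - 1) * (lam + 1) = 0 := by linear_combination hl2
        have hcrx : ∃ x : ℝ, c * r = (x : ℂ) := by
          rcases mul_eq_zero.mp hfac with hl | hl
          · have hlam1 : lam = 1 := by linear_combination hl
            refine ⟨z - y, ?_⟩
            push_cast
            rw [hlam1] at hzAB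
            linear_combination hzAB - hyB
          · have hlam1 : lam = -1 := by linear_combination hl
            refine ⟨z + y, ?_⟩
            push_cast
            rw [hlam1] at hzAB
            linear_combination hzAB + hyB
        obtain ⟨x, hcr⟩ := hcrx
        have hx0 : x ≠ 0 := by
          intro hxz
          rw [hxz] at hcr
          push_cast at hcr
          exact (mul_ne_zero hc0 hr0) hcr
        refine Or.inr (Or.inr ?_)
        have hxpos : 0 < x ^ 2 :=
          lt_of_le_of_ne (sq_nonneg x) (Ne.symm (pow_ne_zero 2 hx0))
        apply lox_branch a b h1 h2 hPA hPB (2 + x ^ 2) ?_ (by linarith)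
        rw [hA₁eta, hB₁eta]
        simp [Matrix.trace_fin_two, Matrix.mul_apply, Matrix.vecMul, dotProduct,
          Fin.sum_univ_two, Matrix.smul_apply, Matrix.sub_apply, Matrix.one_apply,
          smul_eq_mul]
        push_cast
        linear_combination 2 * lam ^ 2 * hdet1 + 2 * hl2 + (c * r + (x : ℂ)) * hcr
    · -- Case II : lam not ±1, A diagonalizable with eigenvalues lam, conj lam
      set nu : ℂ := (starRingEnd ℂ) lam with hnudef
      have hlamnu : lam * nu = 1 := hln
      have hqnu : nu ^ 2 - A.trace * nu + 1 = 0 := by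
        linear_combination nu ^ 2 * hq - (1 + lam * nu - A.trace * nu) * hlamnu
      have hne : lam ≠ nu := by
        intro h
        apply hl2
        have h2 := hlamnu
        rw [← h] at h2
        rw [pow_two]
        exact h2
      obtain ⟨v₀, hv00, hAv0⟩ := exists_eigenvector A hdA lam hq
      obtain ⟨w', hw'0, hAw⟩ := exists_eigenvector A hdA nu hqnu
      have hd0 : v₀ 0 * w' 1 - v₀ 1 * w' 0 ≠ 0 := indep hne hv00 hw'0 hAv0 hAw
      set v' : Fin 2 → ℂ := (v₀ 0 * w' 1 - v₀ 1 * w' 0)⁻¹ • v₀ with hv'def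
      have hv'0 : v' ≠ 0 := by
        intro hz
        apply hv00
        funext i
        have := congrFun hz i
        simp [hv'def, Pi.smul_apply, smul_eq_mul] at this
        rcases this with h' | h'
        · exact absurd h' hd0
        · exact h'
      have hAv : A.mulVec v' = lam • v' := by
        rw [hv'def, Matrix.mulVec_smul, hAv0, smul_comm]
      have hw : v' 0 * w' 1 - v' 1 * w' 0 = 1 := by
        simp [hv'def, Pi.smul_apply, smul_eq_mul]
        field_simp
      set P : Matrix (Fin 2) (Fin 2) ℂ := !![v' 0, w' 0; v' 1, w' 1] with hP
      set Pinv : Matrix (Fin 2) (Fin 2) ℂ := !![w' 1, -(w' 0); -(v' 1), v' 0] with hPinv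
      have h1 : P * Pinv = 1 := (mkUnit v' w' hw).val_inv
      have h2 : Pinv * P = 1 := (mkUnit v' w' hw).inv_val
      set A₁ := Pinv * (A * P) with hA₁
      set B₁ := Pinv * (B * P) with hB₁
      have hPA : A * P = P * A₁ := by rw [hA₁, ← mul_assoc, h1, one_mul]
      have hPB : B * P = P * B₁ := by rw [hB₁, ← mul_assoc, h1, one_mul]
      have hA10 : A₁ 1 0 = 0 := (entry_col0 A hw hAv).1
      have hA00 : A₁ 0 0 = lam := (entry_col0 A hw hAv).2
      have hA01 : A₁ 0 1 = 0 := (entry_col1 A hw hAw).1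
      have hA11 : A₁ 1 1 = nu := (entry_col1 A hw hAw).2
      have hA₁eta : A₁ = !![lam, 0; 0, nu] := by
        conv_lhs => rw [Matrix.eta_fin_two A₁]
        rw [hA10, hA00, hA01, hA11]
      set p := B₁ 0 0 with hpdef
      set q := B₁ 0 1 with hqdef
      set r := B₁ 1 0 with hrdef
      set s := B₁ 1 1 with hsdef
      have hB₁eta : B₁ = !![p, q; r, s] := Matrix.eta_fin_two B₁
      have hr0 : r ≠ 0 := by
        intro hrz
        exact hred ⟨v', hv'0, ⟨lam, hAv⟩, ⟨p, col0_eigen hPB hrz⟩⟩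
      have hq0 : q ≠ 0 := by
        intro hqz
        exact hred ⟨w', hw'0, ⟨nu, hAw⟩, ⟨s, col1_eigen hPB hqz⟩⟩
      have hdP : P.det = 1 := by
        rw [hP, Matrix.det_fin_two_of]
        linear_combination hw
      have hdPinv : Pinv.det = 1 := by
        rw [hPinv, Matrix.det_fin_two_of]
        linear_combination hw
      have hdet1 : p * s - q * r = 1 := by
        have hd1 : B₁.det = 1 := by
          rw [hB₁, Matrix.det_mul, Matrix.det_mul, hdPinv, hdB, hdP]
          ring
        rw [hB₁eta, Matrix.det_fin_two_of] at hd1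
        linear_combination hd1
      have htB := trace_conj hPB h1 h2
      have hyB : p + s = (y : ℂ) := by
        rw [← Matrix.trace_fin_two, ← htB, hy]
      have hzAB : lam * p + nu * s = (z : ℂ) := by
        have hPAB : (A * B) * P = P * (A₁ * B₁) := by
          rw [mul_assoc, hPB, ← mul_assoc, hPA, mul_assoc]
        have htAB := trace_conj hPAB h1 h2
        rw [hz] at htAB
        rw [hA₁eta, hB₁eta] at htAB
        simp [Matrix.trace_fin_two, Matrix.mul_apply, Fin.sum_univ_two] at htAB
        linear_combination -htAB
      -- s = conj p
      have e3 : (starRingEnd ℂ) p + (starRingEnd ℂ) s = (y : ℂ) := by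
        have := congrArg (starRingEnd ℂ) hyB
        simpa [map_add, Complex.conj_ofReal] using this
      have e4 : nu * (starRingEnd ℂ) p + lam * (starRingEnd ℂ) s = (z : ℂ) := by
        have := congrArg (starRingEnd ℂ) hzAB
        simpa [map_add, _root_.map_mul, Complex.conj_ofReal, hnudef, Complex.conj_conj] using this
      have hup : (lam - nu) * (p - (starRingEnd ℂ) s) = 0 := by
        linear_combination hzAB - e4 - nu * hyB + nu * e3
      have hpcs : p = (starRingEnd ℂ) s := by
        rcases mul_eq_zero.mp hup with h' | h'
        · exact absurd (sub_eq_zero.mp h') hne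
        · exact sub_eq_zero.mp h'
      have hs : s = (starRingEnd ℂ) p := by
        rw [hpcs, Complex.conj_conj]
      have hmc : p * (starRingEnd ℂ) p = ((Complex.normSq p : ℝ) : ℂ) := Complex.mul_conj p
      set dr : ℝ := Complex.normSq p - 1 with hdr
      have hdrC : ((dr : ℝ) : ℂ) = ((Complex.normSq p : ℝ) : ℂ) - 1 := by
        rw [hdr]; push_cast; ring
      have hqr : q * r = ((dr : ℝ) : ℂ) := by
        linear_combination -hdet1 + p * hs + hmc - hdrC
      have hdrne : dr ≠ 0 := by
        intro h'
        apply mul_ne_zero hq0 hr0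
        rw [hqr, h']
        norm_num
      rcases lt_or_gt_of_ne hdrne with hneg | hpos
      · -- dr < 0 : conjugate into SU(2)
        have hnsq0 : Complex.normSq q ≠ 0 := ne_of_gt (Complex.normSq_pos.mpr hq0)
        set u : ℝ := Real.sqrt (-dr) / ‖q‖ with hu
        have hupos : 0 < u :=
          div_pos (Real.sqrt_pos.mpr (by linarith)) (norm_pos_iff.mpr hq0)
        have huC : ((u : ℝ) : ℂ) ≠ 0 := Complex.ofReal_ne_zero.mpr (ne_of_gt hupos)
        have hnsq : ‖q‖ ^ 2 = Complex.normSq q := by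
          rw [Complex.sq_norm]
        have hu2 : u ^ 2 * Complex.normSq q = -dr := by
          rw [hu, div_pow, Real.sq_sqrt (by linarith : (0:ℝ) ≤ -dr), hnsq]
          field_simp
        have hu2C : ((u : ℝ) : ℂ) ^ 2 * ((Complex.normSq q : ℝ) : ℂ) = -((dr : ℝ) : ℂ) := by
          exact_mod_cast congrArg (fun t : ℝ => (t : ℂ)) hu2
        have hmcq : q * (starRingEnd ℂ) q = ((Complex.normSq q : ℝ) : ℂ) := Complex.mul_conj q
        have hrr : r = -(((u : ℝ) : ℂ) ^ 2) * (starRingEnd ℂ) q := by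
          apply mul_left_cancel₀ hq0
          rw [hqr]
          linear_combination hu2C + (((u : ℝ) : ℂ) ^ 2) * hmcq
        set q₂ : ℂ := ((u : ℝ) : ℂ) * q with hq₂
        have hcq₂ : (starRingEnd ℂ) q₂ = ((u : ℝ) : ℂ) * (starRingEnd ℂ) q := by
          rw [hq₂, _root_.map_mul, Complex.conj_ofReal]
        set B₂ : Matrix (Fin 2) (Fin 2) ℂ :=
          !![p, q₂; -((starRingEnd ℂ) q₂), (starRingEnd ℂ) p] with hB₂
        set E : Matrix (Fin 2) (Fin 2) ℂ := !![((u : ℝ) : ℂ)⁻¹, 0; 0, 1] with hE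
        set Einv : Matrix (Fin 2) (Fin 2) ℂ := !![((u : ℝ) : ℂ), 0; 0, 1] with hEinv
        have hE1 : E * Einv = 1 := by
          ext i j
          fin_cases i <;> fin_cases j <;>
            simp [hE, hEinv, Matrix.mul_apply, Fin.sum_univ_two, Matrix.one_apply] <;>
            field_simp
        have hE2 : Einv * E = 1 := by
          ext i j
          fin_cases i <;> fin_cases j <;>
            simp [hE, hEinv, Matrix.mul_apply, Fin.sum_univ_two, Matrix.one_apply] <;>
            field_simp
        have hAE : A₁ * E = E * A₁ := by
          rw [hA₁eta]
          ext i j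
          fin_cases i <;> fin_cases j <;>
            simp [hE, Matrix.mul_apply, Fin.sum_univ_two] <;> ring
        have hBE : B₁ * E = E * B₂ := by
          rw [hB₁eta]
          ext i j
          fin_cases i <;> fin_cases j
          · simp [hE, hB₂, Matrix.mul_apply, Fin.sum_univ_two]
            ring
          · simp [hE, hB₂, Matrix.mul_apply, Fin.sum_univ_two, hq₂]
            field_simp
          · simp [hE, hB₂, Matrix.mul_apply, Fin.sum_univ_two, hcq₂, hrr]
            field_simp
          · simp [hE, hB₂, Matrix.mul_apply, Fin.sum_univ_two]
            exact hs
        have hA2 : A * (P * E) = (P * E) * A₁ := by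
          calc A * (P * E) = (A * P) * E := by rw [mul_assoc]
          _ = (P * A₁) * E := by rw [hPA]
          _ = P * (A₁ * E) := by rw [mul_assoc]
          _ = P * (E * A₁) := by rw [hAE]
          _ = (P * E) * A₁ := by rw [mul_assoc]
        have hB2 : B * (P * E) = (P * E) * B₂ := by
          calc B * (P * E) = (B * P) * E := by rw [mul_assoc]
          _ = (P * B₁) * E := by rw [hPB]
          _ = P * (B₁ * E) := by rw [mul_assoc]
          _ = P * (E * B₂) := by rw [hBE]
          _ = (P * E) * B₂ := by rw [mul_assoc]
        set G₂ : (Matrix (Fin 2) (Fin 2) ℂ)ˣ :=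
          (mkUnit v' w' hw) * ⟨E, Einv, hE1, hE2⟩ with hG₂
        have hvalG₂ : (G₂ : Matrix (Fin 2) (Fin 2) ℂ) = P * E := rfl
        have hconjA : ((G₂⁻¹ : (Matrix (Fin 2) (Fin 2) ℂ)ˣ) : Matrix (Fin 2) (Fin 2) ℂ) * A *
            (G₂ : Matrix (Fin 2) (Fin 2) ℂ) = A₁ := by
          apply conj_via_unit
          rw [hvalG₂]
          exact hA2
        have hconjB : ((G₂⁻¹ : (Matrix (Fin 2) (Fin 2) ℂ)ˣ) : Matrix (Fin 2) (Fin 2) ℂ) * B *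
            (G₂ : Matrix (Fin 2) (Fin 2) ℂ) = B₂ := by
          apply conj_via_unit
          rw [hvalG₂]
          exact hB2
        have hnormsum : p * (starRingEnd ℂ) p + q₂ * (starRingEnd ℂ) q₂ = 1 := by
          rw [hq₂, hcq₂]
          linear_combination hmc + (((u : ℝ) : ℂ) ^ 2) * hmcq + hu2C - hdrC
        have hgA : (((G₂⁻¹ : GL (Fin 2) ℂ) : Matrix (Fin 2) (Fin 2) ℂ)) * A *
            (((G₂⁻¹)⁻¹ : GL (Fin 2) ℂ) : Matrix (Fin 2) (Fin 2) ℂ) = A₁ := by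
          rw [inv_inv]
          exact hconjA
        have hgB : (((G₂⁻¹ : GL (Fin 2) ℂ) : Matrix (Fin 2) (Fin 2) ℂ)) * B *
            (((G₂⁻¹)⁻¹ : GL (Fin 2) ℂ) : Matrix (Fin 2) (Fin 2) ℂ) = B₂ := by
          rw [inv_inv]
          exact hconjB
        refine Or.inl ⟨G₂⁻¹, ⟨?_, ?_⟩, ⟨?_, ?_⟩⟩
        · rw [hgA, Matrix.mem_unitaryGroup_iff, hA₁eta]
          ext i j
          fin_cases i <;> fin_cases j
          · simp [Matrix.star_eq_conjTranspose, Matrix.conjTranspose_apply, Matrix.mul_apply,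
              Fin.sum_univ_two, Matrix.one_apply, Complex.star_def]
            linear_combination hln
          · simp [Matrix.star_eq_conjTranspose, Matrix.conjTranspose_apply, Matrix.mul_apply,
              Fin.sum_univ_two, Matrix.one_apply, Complex.star_def]
          · simp [Matrix.star_eq_conjTranspose, Matrix.conjTranspose_apply, Matrix.mul_apply,
              Fin.sum_univ_two, Matrix.one_apply, Complex.star_def]
          · simp [Matrix.star_eq_conjTranspose, Matrix.conjTranspose_apply, Matrix.mul_apply,
              Fin.sum_univ_two, Matrix.one_apply, Complex.star_def, hnudef, Complex.conj_conj]
            linear_combination hln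
        · rw [hgA, hA₁eta, Matrix.det_fin_two_of]
          linear_combination hlamnu
        · rw [hgB, Matrix.mem_unitaryGroup_iff, hB₂]
          ext i j
          fin_cases i <;> fin_cases j
          · simp [Matrix.star_eq_conjTranspose, Matrix.conjTranspose_apply, Matrix.mul_apply,
              Fin.sum_univ_two, Matrix.one_apply, Complex.star_def, Complex.conj_conj]
            linear_combination hnormsum
          · simp [Matrix.star_eq_conjTranspose, Matrix.conjTranspose_apply, Matrix.mul_apply,
              Fin.sum_univ_two, Matrix.one_apply, Complex.star_def, Complex.conj_conj]
            ring
          · simp [Matrix.star_eq_conjTranspose, Matrix.conjTranspose_apply, Matrix.mul_apply,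
              Fin.sum_univ_two, Matrix.one_apply, Complex.star_def, Complex.conj_conj]
            ring
          · simp [Matrix.star_eq_conjTranspose, Matrix.conjTranspose_apply, Matrix.mul_apply,
              Fin.sum_univ_two, Matrix.one_apply, Complex.star_def, Complex.conj_conj]
            linear_combination hnormsum
        · rw [hgB, hB₂, Matrix.det_fin_two_of]
          linear_combination hnormsum
      · -- dr > 0 : commutator loxodromic
        have hnorm2 : ‖lam ^ 2‖ = 1 := by rw [norm_pow, hnormlam, one_pow]
        have hre_le : (lam ^ 2).re ≤ 1 := by
          calc (lam ^ 2).re ≤ |(lam ^ 2).re| := le_abs_self _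
          _ ≤ ‖lam ^ 2‖ := Complex.abs_re_le_norm _
          _ = 1 := by rw [hnorm2]
        have hre : (lam ^ 2).re < 1 := by
          rcases lt_or_eq_of_le hre_le with h' | h'
          · exact h'
          · exfalso
            apply hl2
            have hns : Complex.normSq (lam ^ 2) = 1 := by
              rw [Complex.normSq_eq_norm_sq, hnorm2]
              norm_num
            rw [Complex.normSq_apply] at hns
            have him : (lam ^ 2).im * (lam ^ 2).im = 0 := by nlinarith
            have him0 : (lam ^ 2).im = 0 := mul_self_eq_zero.mp him
            apply Complex.ext
            · rw [h']
              simp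
            · rw [him0]
              simp
        have hnu2 : nu ^ 2 = (starRingEnd ℂ) (lam ^ 2) := by rw [hnudef, ← map_pow]
        have hac : lam ^ 2 + (starRingEnd ℂ) (lam ^ 2) = 2 * (((lam ^ 2).re : ℝ) : ℂ) := by
          rw [Complex.add_conj]
          push_cast
          ring
        refine Or.inr (Or.inr ?_)
        have h2t : 2 < 2 + dr * (2 - 2 * (lam ^ 2).re) := by
          have hh : 0 < dr * (2 - 2 * (lam ^ 2).re) := mul_pos hpos (by linarith)
          linarith
        apply lox_branch a b h1 h2 hPA hPB (2 + dr * (2 - 2 * (lam ^ 2).re)) ?_ h2t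
        rw [hA₁eta, hB₁eta]
        simp [Matrix.trace_fin_two, Matrix.mul_apply, Matrix.vecMul, dotProduct,
          Fin.sum_univ_two, Matrix.smul_apply, Matrix.sub_apply, Matrix.one_apply, smul_eq_mul]
        push_cast
        linear_combination (2 * p * s) * hlamnu + (2 * p) * hs + 2 * hmc - 2 * hdrC -
          ((dr : ℝ) : ℂ) * hnu2 - ((dr : ℝ) : ℂ) * hac - (lam ^ 2 + nu ^ 2) * hqr
end
end
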